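/- arXiv:0906.1178 — 8 statements merged into one kernel-verified Lean document; each statement's English description precedes it below -/
import Mathlib

section
/- Let G be a subgroup of the group of isometries of the Euclidean plane ℝ² that is infinite, discrete, and affinely irreducible. Then every rotation contained in the special group of G has finite order, and this order is 2, 3, 4, or 6. -/
/- STATEMENT 1: Let G be a subgroup of the group of isometries of the Euclidean plane ℝ²
that is infinite, discrete, and affinely irreducible. Then every rotation contained in the
special group of G has finite order, and this order is 2, 3, 4, or 6. -/

noncomputable section

abbrev E2 : Type := EuclideanSpace ℝ (Fin 2)

namespace CrystHelper

open scoped RealInnerProductSpace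

def stdB : OrthonormalBasis (Fin 2) ℝ E2 := EuclideanSpace.basisFun (Fin 2) ℝ

def Φ : (E2 ≃ₗᵢ[ℝ] E2) →* Matrix (Fin 2) (Fin 2) ℝ where
  toFun A := LinearMap.toMatrix stdB.toBasis stdB.toBasis A.toLinearMap
  map_one' := by
    show LinearMap.toMatrix stdB.toBasis stdB.toBasis LinearMap.id = 1
    rw [LinearMap.toMatrix_id]
  map_mul' A B := by
    show LinearMap.toMatrix stdB.toBasis stdB.toBasis (A.toLinearMap ∘ₗ B.toLinearMap) = _
    rw [LinearMap.toMatrix_comp stdB.toBasis stdB.toBasis stdB.toBasis]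

lemma Φ_injective : Function.Injective Φ := by
  intro A B h
  have h2 : A.toLinearMap = B.toLinearMap :=
    (LinearMap.toMatrix stdB.toBasis stdB.toBasis).injective h
  ext x
  have := congrArg (fun f => f x) (congrArg DFunLike.coe h2)
  simpa using congrFun (congrArg (fun (y : E2) => (y : Fin 2 → ℝ)) this) _

lemma Φ_apply (A : E2 ≃ₗᵢ[ℝ] E2) (i j : Fin 2) :
    Φ A i j = ⟪stdB i, A (stdB j)⟫ := by
  show LinearMap.toMatrix stdB.toBasis stdB.toBasis A.toLinearMap i j = _
  rw [LinearMap.toMatrix_apply]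
  simp [OrthonormalBasis.coe_toBasis_repr_apply, OrthonormalBasis.repr_apply_apply,
    OrthonormalBasis.coe_toBasis]

lemma Φ_orth (A : E2 ≃ₗᵢ[ℝ] E2) (i j : Fin 2) :
    ∑ k, Φ A k i * Φ A k j = if i = j then 1 else 0 := by
  have h : ∀ k i, Φ A k i = ⟪A (stdB i), stdB k⟫ := by
    intro k i; rw [Φ_apply, real_inner_comm]
  calc ∑ k, Φ A k i * Φ A k j = ∑ k, ⟪A (stdB i), stdB k⟫ * ⟪stdB k, A (stdB j)⟫ := by
        refine Finset.sum_congr rfl fun k _ => ?_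
        rw [h k i, Φ_apply]
    _ = ⟪A (stdB i), A (stdB j)⟫ := stdB.sum_inner_mul_inner _ _
    _ = ⟪stdB i, stdB j⟫ := A.inner_map_map _ _
    _ = if i = j then 1 else 0 := by
        have := stdB.orthonormal
        rw [orthonormal_iff_ite] at this
        exact this i j

end CrystHelper

namespace CrystHelper

lemma Φ_det (A : E2 ≃ₗᵢ[ℝ] E2) : Matrix.det (Φ A) = LinearMap.det A.toLinearMap := by
  show (LinearMap.toMatrix stdB.toBasis stdB.toBasis A.toLinearMap).det = _
  rw [LinearMap.det_toMatrix]

lemma Φ_det_sq (A : E2 ≃ₗᵢ[ℝ] E2) : Matrix.det (Φ A) * Matrix.det (Φ A) = 1 := by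
  have h : Matrix.transpose (Φ A) * (Φ A) = 1 := by
    ext i j
    simp only [Matrix.mul_apply, Matrix.transpose_apply, Matrix.one_apply]
    rw [Φ_orth A i j]
  have := congrArg Matrix.det h
  rwa [Matrix.det_mul, Matrix.det_transpose, Matrix.det_one] at this

/-- Rotation form: if `det = 1` then `M = !![a, -b; b, a]` with `a² + b² = 1`. -/
lemma rotation_form (A : E2 ≃ₗᵢ[ℝ] E2) (hdet : LinearMap.det A.toLinearMap = 1) :
    Φ A 1 1 = Φ A 0 0 ∧ Φ A 0 1 = -(Φ A 1 0) ∧ (Φ A 0 0)^2 + (Φ A 1 0)^2 = 1 := by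
  set a := Φ A 0 0; set c := Φ A 1 0; set b := Φ A 0 1; set d := Φ A 1 1
  have r1 : a * a + c * c = 1 := by simpa [Fin.sum_univ_two] using Φ_orth A 0 0
  have r2 : b * b + d * d = 1 := by simpa [Fin.sum_univ_two] using Φ_orth A 1 1
  have r3 : a * b + c * d = 0 := by simpa [Fin.sum_univ_two] using Φ_orth A 0 1
  have rdet : a * d - b * c = 1 := by
    have := Φ_det A; rw [hdet, Matrix.det_fin_two] at this; linarith [this]
  constructor
  · nlinarith [sq_nonneg (d - a), sq_nonneg (b + c)]
  constructor
  · nlinarith [sq_nonneg (d - a), sq_nonneg (b + c)]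
  · nlinarith

end CrystHelper

namespace CrystHelper

lemma neg_one_ne_one_mat : (-1 : Matrix (Fin 2) (Fin 2) ℝ) ≠ 1 := by
  intro h
  have := congrFun (congrFun h 0) 0
  norm_num [Matrix.one_apply, Matrix.neg_apply] at this

set_option maxHeartbeats 1000000 in
lemma partB (A : E2 ≃ₗᵢ[ℝ] E2) (hdet : LinearMap.det A.toLinearMap = 1) (hA1 : A ≠ 1)
    (m : ℤ) (htr : Matrix.trace (Φ A) = (m : ℝ)) :
    IsOfFinOrder A ∧ (orderOf A = 2 ∨ orderOf A = 3 ∨ orderOf A = 4 ∨ orderOf A = 6) := by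
  obtain ⟨ha, hb, hn⟩ := rotation_form A hdet
  set M := Φ A with hMdef
  set a := M 0 0 with ha'
  set b := M 1 0 with hb'
  have hM : M = !![a, -b; b, a] := by
    rw [Matrix.eta_fin_two M, ha, hb]
  have hMne1 : M ≠ 1 := fun h => hA1 (Φ_injective (by rw [← hMdef, h, map_one]))
  have htr2 : a + a = (m : ℝ) := by
    rw [← htr, Matrix.trace_fin_two, ha]
  have hm1 : (-2 : ℤ) ≤ m := by
    have : (-2 : ℝ) ≤ (m : ℝ) := by nlinarith [sq_nonneg (a + 1), sq_nonneg b]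
    exact_mod_cast this
  have hm2 : m ≤ 2 := by
    have : (m : ℝ) ≤ 2 := by nlinarith [sq_nonneg (a - 1), sq_nonneg b]
    exact_mod_cast this
  have horder : orderOf A = orderOf M := (orderOf_injective Φ Φ_injective A).symm
  -- helper facts
  interval_cases m
  · -- m = -2 : a = -1, b = 0, M = -1
    have ha1 : a = -1 := by push_cast at htr2; linarith
    have hb0 : b = 0 := by nlinarith
    have hMneg : M = -1 := by
      rw [hM, ha1, hb0]
      ext i j
      fin_cases i <;> fin_cases j <;> simp [Matrix.one_apply]
    have h2 : orderOf M = 2 := by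
      refine orderOf_eq_prime ?_ hMne1
      rw [hMneg]; exact neg_one_sq
    constructor
    · rw [← orderOf_pos_iff, horder, h2]; norm_num
    · left; rw [horder, h2]
  · -- m = -1 : a = -1/2, M^3 = 1
    have ha1 : a = -(1/2) := by push_cast at htr2; linarith
    have hb2 : b^2 = 3/4 := by nlinarith
    have h3 : M ^ 3 = 1 := by
      rw [hM, ha1, show ∀ X : Matrix (Fin 2) (Fin 2) ℝ, X ^ 3 = X * X * X from fun X => by
        rw [pow_succ, pow_two], Matrix.mul_fin_two, Matrix.mul_fin_two, Matrix.one_fin_two]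
      ext i j
      fin_cases i <;> fin_cases j <;> simp <;>
        first
          | linear_combination (3/2 : ℝ) * hb2
          | linear_combination (-(3/2) : ℝ) * hb2
          | linear_combination b * hb2
          | linear_combination (-b) * hb2
    have h2 : orderOf M = 3 := orderOf_eq_prime h3 hMne1
    constructor
    · rw [← orderOf_pos_iff, horder, h2]; norm_num
    · right; left; rw [horder, h2]
  · -- m = 0 : a = 0, M^2 = -1
    have ha1 : a = 0 := by push_cast at htr2; linarith
    have hsq : M ^ 2 = -1 := by
      rw [hM, ha1, pow_two, Matrix.mul_fin_two]
      ext i j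
      fin_cases i <;> fin_cases j <;>
        simp [Matrix.one_apply, Matrix.neg_apply] <;> linear_combination hn - a * ha1
    have h4 : M ^ 4 = 1 := by
      rw [show (4:ℕ) = 2 * 2 from rfl, pow_mul, hsq, neg_one_sq]
    have hfin : IsOfFinOrder M := isOfFinOrder_iff_pow_eq_one.mpr ⟨4, by norm_num, h4⟩
    have hdvd : orderOf M ∣ 4 := orderOf_dvd_of_pow_eq_one h4
    have hpos : 0 < orderOf M := hfin.orderOf_pos
    have hle : orderOf M ≤ 4 := Nat.le_of_dvd (by norm_num) hdvd
    have h2 : orderOf M = 4 := by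
      interval_cases h : orderOf M
      · exact absurd (orderOf_eq_one_iff.mp h) hMne1
      · exfalso
        have := pow_orderOf_eq_one M
        rw [h, hsq] at this
        exact neg_one_ne_one_mat this
      · exfalso; norm_num at hdvd
      · rfl
    constructor
    · rw [← orderOf_pos_iff, horder, h2]; norm_num
    · right; right; left; rw [horder, h2]
  · -- m = 1 : a = 1/2, M^3 = -1
    have ha1 : a = 1/2 := by push_cast at htr2; linarith
    have hb2 : b^2 = 3/4 := by nlinarith
    have h3 : M ^ 3 = -1 := by
      rw [hM, ha1, show ∀ X : Matrix (Fin 2) (Fin 2) ℝ, X ^ 3 = X * X * X from fun X => by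
        rw [pow_succ, pow_two], Matrix.mul_fin_two, Matrix.mul_fin_two]
      ext i j
      fin_cases i <;> fin_cases j <;> simp [Matrix.neg_apply] <;>
        first
          | linear_combination (3/2 : ℝ) * hb2
          | linear_combination (-(3/2) : ℝ) * hb2
          | linear_combination b * hb2
          | linear_combination (-b) * hb2
    have h6 : M ^ 6 = 1 := by
      rw [show (6:ℕ) = 3 * 2 from rfl, pow_mul, h3, neg_one_sq]
    have hfin : IsOfFinOrder M := isOfFinOrder_iff_pow_eq_one.mpr ⟨6, by norm_num, h6⟩
    have hdvd : orderOf M ∣ 6 := orderOf_dvd_of_pow_eq_one h6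
    have hpos : 0 < orderOf M := hfin.orderOf_pos
    have hle : orderOf M ≤ 6 := Nat.le_of_dvd (by norm_num) hdvd
    have hsq : M ^ 2 ≠ 1 := by
      intro h
      rw [hM, ha1, pow_two, Matrix.mul_fin_two] at h
      have := congrFun (congrFun h 0) 0
      simp [Matrix.one_apply] at this
      nlinarith [hb2]
    have h2 : orderOf M = 6 := by
      interval_cases h : orderOf M
      · exact absurd (orderOf_eq_one_iff.mp h) hMne1
      · exfalso
        have := pow_orderOf_eq_one M
        rw [h] at this
        exact hsq this
      · exfalso
        have := pow_orderOf_eq_one M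
        rw [h, h3] at this
        exact neg_one_ne_one_mat this
      · exfalso; norm_num at hdvd
      · exfalso; norm_num at hdvd
      · rfl
    constructor
    · rw [← orderOf_pos_iff, horder, h2]; norm_num
    · right; right; right; rw [horder, h2]
  · -- m = 2 : a = 1, b = 0, M = 1, contradiction
    exfalso
    have ha1 : a = 1 := by push_cast at htr2; linarith
    have hb0 : b = 0 := by
      have h2 : b ^ 2 = 0 := by nlinarith
      exact pow_eq_zero_iff (two_ne_zero) |>.mp h2
    apply hMne1
    rw [hM, ha1, hb0, Matrix.one_fin_two]
    norm_num

end CrystHelper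

namespace CrystHelper

open IsometryEquiv

lemma lin_apply (g : E2 ≃ᵢ E2) (x : E2) : g.toRealLinearIsometryEquiv x = g x - g 0 :=
  g.toRealLinearIsometryEquiv_apply x

lemma apply_eq (g : E2 ≃ᵢ E2) (x : E2) : g x = g.toRealLinearIsometryEquiv x + g 0 := by
  rw [lin_apply]; abel

def linHom : (E2 ≃ᵢ E2) →* (E2 ≃ₗᵢ[ℝ] E2) :=
  MonoidHom.mk' IsometryEquiv.toRealLinearIsometryEquiv (by
    intro g h
    refine LinearIsometryEquiv.toLinearEquiv_injective (LinearEquiv.ext fun x => ?_)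
    have h1 : (g * h).toRealLinearIsometryEquiv x = g (h x) - g (h 0) := by
      rw [lin_apply]; rfl
    have h2 : (g.toRealLinearIsometryEquiv * h.toRealLinearIsometryEquiv) x
        = (g (h x) - g 0) - (g (h 0) - g 0) := by
      show g.toRealLinearIsometryEquiv (h.toRealLinearIsometryEquiv x) = _
      rw [lin_apply h x, map_sub, lin_apply, lin_apply]
    show (g * h).toRealLinearIsometryEquiv x
        = (g.toRealLinearIsometryEquiv * h.toRealLinearIsometryEquiv) x
    rw [h1, h2]; abel)

lemma linHom_apply (g : E2 ≃ᵢ E2) : linHom g = g.toRealLinearIsometryEquiv := rfl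

lemma addRight_lin (v : E2) : (IsometryEquiv.addRight v).toRealLinearIsometryEquiv = 1 := by
  refine LinearIsometryEquiv.toLinearEquiv_injective (LinearEquiv.ext fun x => ?_)
  show (IsometryEquiv.addRight v).toRealLinearIsometryEquiv x = x
  rw [lin_apply]
  simp

lemma eq_addRight_of_lin_eq_one (g : E2 ≃ᵢ E2) (h : g.toRealLinearIsometryEquiv = 1) :
    g = IsometryEquiv.addRight (g 0) := by
  apply IsometryEquiv.ext
  intro x
  rw [apply_eq g x, h]
  simp

lemma mul_apply' (g h : E2 ≃ᵢ E2) (x : E2) : (g * h) x = g (h x) := rfl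

lemma inv_apply_self (g : E2 ≃ᵢ E2) (x : E2) : g (g⁻¹ x) = x := by
  rw [← mul_apply', mul_inv_cancel]; rfl

/-- conjugation of a translation -/
lemma conj_addRight (g : E2 ≃ᵢ E2) (v : E2) :
    g * IsometryEquiv.addRight v * g⁻¹
      = IsometryEquiv.addRight (g.toRealLinearIsometryEquiv v) := by
  apply IsometryEquiv.ext
  intro x
  rw [addRight_apply, mul_apply', mul_apply', addRight_apply]
  rw [apply_eq g (g⁻¹ x + v), map_add, lin_apply g (g⁻¹ x), inv_apply_self]
  abel

variable (G : Subgroup (E2 ≃ᵢ E2))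

/-- the translation subgroup -/
def T : AddSubgroup E2 where
  carrier := {v | IsometryEquiv.addRight v ∈ G}
  zero_mem' := by
    have h : IsometryEquiv.addRight (0 : E2) = 1 := by
      apply IsometryEquiv.ext; intro x; simp
    show IsometryEquiv.addRight (0 : E2) ∈ G
    rw [h]; exact G.one_mem
  add_mem' := by
    intro v w hv hw
    have h : IsometryEquiv.addRight (v + w)
        = IsometryEquiv.addRight w * IsometryEquiv.addRight v := by
      apply IsometryEquiv.ext; intro x
      rw [mul_apply', addRight_apply, addRight_apply, addRight_apply]
      abel
    show IsometryEquiv.addRight (v + w) ∈ G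
    rw [h]; exact G.mul_mem hw hv
  neg_mem' := by
    intro v hv
    have h : IsometryEquiv.addRight (-v) = (IsometryEquiv.addRight v)⁻¹ := by
      apply eq_inv_of_mul_eq_one_left
      apply IsometryEquiv.ext; intro x
      rw [mul_apply', addRight_apply, addRight_apply]
      show x + v + -v = x
      abel
    show IsometryEquiv.addRight (-v) ∈ G
    rw [h]; exact G.inv_mem hv

lemma mem_T_iff (v : E2) : v ∈ T G ↔ IsometryEquiv.addRight v ∈ G := Iff.rfl

lemma lin_mem_T {g : E2 ≃ᵢ E2} (hg : g ∈ G) {v : E2} (hv : v ∈ T G) :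
    g.toRealLinearIsometryEquiv v ∈ T G := by
  rw [mem_T_iff, ← conj_addRight]
  exact G.mul_mem (G.mul_mem hg hv) (G.inv_mem hg)

end CrystHelper

namespace CrystHelper

lemma so2_comm (P Q : E2 ≃ₗᵢ[ℝ] E2) (hP : LinearMap.det P.toLinearMap = 1)
    (hQ : LinearMap.det Q.toLinearMap = 1) : P * Q = Q * P := by
  apply Φ_injective
  rw [map_mul, map_mul]
  obtain ⟨ha, hb, -⟩ := rotation_form P hP
  obtain ⟨hc, hd, -⟩ := rotation_form Q hQ
  rw [Matrix.eta_fin_two (Φ P), Matrix.eta_fin_two (Φ Q), ha, hb, hc, hd,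
    Matrix.mul_fin_two, Matrix.mul_fin_two]
  ext i j
  fin_cases i <;> fin_cases j <;> simp <;> ring

/-- a "rotation" isometry (linear part det 1, nontrivial) has a unique fixed point -/
lemma exists_fixed (g : E2 ≃ᵢ E2)
    (hdet : LinearMap.det g.toRealLinearIsometryEquiv.toLinearMap = 1)
    (hne : g.toRealLinearIsometryEquiv ≠ 1) :
    ∃ p : E2, g p = p ∧ ∀ q, g q = q → q = p := by
  set P := g.toRealLinearIsometryEquiv with hPdef
  obtain ⟨ha, hb, hn⟩ := rotation_form P hdet
  set a := Φ P 0 0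
  set b := Φ P 1 0
  have hne10 : ¬(a = 1 ∧ b = 0) := by
    rintro ⟨ha1, hb0⟩
    apply hne
    apply Φ_injective
    rw [map_one]
    have e00 : Φ P 0 0 = 1 := ha1
    have e10 : Φ P 1 0 = 0 := hb0
    have e11 : Φ P 1 1 = 1 := by rw [ha]; exact ha1
    have e01 : Φ P 0 1 = 0 := by rw [hb, hb0]; ring
    rw [Matrix.eta_fin_two (Φ P), e00, e01, e10, e11, Matrix.one_fin_two]
  set f : E2 →ₗ[ℝ] E2 := LinearMap.id - P.toLinearMap with hfdef
  have hmat : LinearMap.toMatrix stdB.toBasis stdB.toBasis f = 1 - Φ P := by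
    rw [hfdef, map_sub, LinearMap.toMatrix_id]
    rfl
  have hdet0 : (LinearMap.toMatrix stdB.toBasis stdB.toBasis f).det ≠ 0 := by
    rw [hmat, Matrix.eta_fin_two (Φ P), ha, hb, Matrix.one_fin_two]
    have : (!![1,0;0,1] - !![a, -b; b, a] : Matrix (Fin 2) (Fin 2) ℝ)
        = !![1-a, b; -b, 1-a] := by
      ext i j
      fin_cases i <;> fin_cases j <;> simp [Matrix.sub_apply] <;> ring
    rw [this, Matrix.det_fin_two_of]
    intro hcon
    apply hne10
    constructor <;> nlinarith [sq_nonneg (1-a), sq_nonneg b]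
  have hu : IsUnit (LinearMap.toMatrix stdB.toBasis stdB.toBasis f).det :=
    isUnit_iff_ne_zero.mpr hdet0
  set e := LinearEquiv.ofIsUnitDet hu with hedef
  have hee : ∀ x, e x = x - P x := by
    intro x
    show f x = x - P x
    rw [hfdef]
    simp
  refine ⟨e.symm (g 0), ?_, ?_⟩
  · have h1 : e (e.symm (g 0)) = g 0 := e.apply_symm_apply _
    rw [hee] at h1
    rw [apply_eq g (e.symm (g 0)), ← hPdef]
    have := sub_eq_iff_eq_add.mp h1
    linear_combination (norm := module) -h1
  · intro q hq
    have hq' : e q = g 0 := by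
      rw [hee]
      have := apply_eq g q
      rw [← hPdef] at this
      rw [hq] at this
      linear_combination (norm := module) this
    have : e q = e (e.symm (g 0)) := by rw [hq', e.apply_symm_apply]
    exact e.injective this

end CrystHelper

namespace CrystHelper

lemma addRight_zero_eq_one : IsometryEquiv.addRight (0 : E2) = 1 := by
  apply IsometryEquiv.ext; intro x; simp

lemma det_lin_sq (g : E2 ≃ᵢ E2) :
    LinearMap.det g.toRealLinearIsometryEquiv.toLinearMap
      * LinearMap.det g.toRealLinearIsometryEquiv.toLinearMap = 1 := by
  have := Φ_det_sq g.toRealLinearIsometryEquiv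
  rwa [Φ_det] at this

lemma det_lin_mul (g h : E2 ≃ᵢ E2) :
    LinearMap.det (g * h).toRealLinearIsometryEquiv.toLinearMap
      = LinearMap.det g.toRealLinearIsometryEquiv.toLinearMap
        * LinearMap.det h.toRealLinearIsometryEquiv.toLinearMap := by
  have h1 : (g * h).toRealLinearIsometryEquiv
      = g.toRealLinearIsometryEquiv * h.toRealLinearIsometryEquiv := map_mul linHom g h
  rw [h1, ← Φ_det, ← Φ_det, ← Φ_det, map_mul, Matrix.det_mul]

lemma T_ne_bot (G : Subgroup (E2 ≃ᵢ E2)) (hinf : Infinite G)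
    (hdisc : ∀ K : Set E2, IsCompact K →
      {g : E2 ≃ᵢ E2 | g ∈ G ∧ ((⇑g) '' K ∩ K).Nonempty}.Finite) :
    ∃ v : E2, v ∈ T G ∧ v ≠ 0 := by
  by_contra hcon
  push_neg at hcon
  -- trivial-kernel step
  have hker : ∀ g ∈ G, g.toRealLinearIsometryEquiv = 1 → g = 1 := by
    intro g hg hlin
    have h1 : g = IsometryEquiv.addRight (g 0) := eq_addRight_of_lin_eq_one g hlin
    have h2 : g 0 ∈ T G := by rw [mem_T_iff, ← h1]; exact hg
    have h3 : g 0 = 0 := hcon _ h2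
    rw [h1, h3, addRight_zero_eq_one]
  set d : (E2 ≃ᵢ E2) → ℝ := fun g => LinearMap.det g.toRealLinearIsometryEquiv.toLinearMap
    with hd
  have hdpm : ∀ g : E2 ≃ᵢ E2, d g = 1 ∨ d g = -1 := fun g =>
    mul_self_eq_one_iff.mp (det_lin_sq g)
  have hdmul : ∀ g h : E2 ≃ᵢ E2, d (g * h) = d g * d h := fun g h => det_lin_mul g h
  have hd1 : d 1 = 1 := by
    have h1 : (1 : E2 ≃ᵢ E2).toRealLinearIsometryEquiv = 1 := map_one linHom
    show LinearMap.det (1 : E2 ≃ᵢ E2).toRealLinearIsometryEquiv.toLinearMap = 1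
    rw [h1]
    exact LinearMap.det_id
  have hdinv : ∀ g : E2 ≃ᵢ E2, d g⁻¹ = d g := by
    intro g
    have h1 : d g⁻¹ * d g = 1 := by rw [← hdmul, inv_mul_cancel, hd1]
    have h2 : d g * d g = 1 := det_lin_sq g
    have h3 : d g ≠ 0 := fun h0 => by rw [h0, mul_zero] at h2; norm_num at h2
    exact mul_right_cancel₀ h3 (h1.trans h2.symm)
  set S : Set (E2 ≃ᵢ E2) := {g | g ∈ G ∧ d g = 1} with hS
  have hSinf : S.Infinite := by
    have hGinf : (G : Set (E2 ≃ᵢ E2)).Infinite := Set.infinite_coe_iff.mp hinf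
    by_contra hSfin
    rw [Set.not_infinite] at hSfin
    by_cases hex : ∃ r ∈ G, d r = -1
    · obtain ⟨r, hr, hdr⟩ := hex
      have hsub : (G : Set (E2 ≃ᵢ E2)) ⊆ S ∪ (fun g => r * g) '' S := by
        intro g hg
        rcases hdpm g with h | h
        · exact Or.inl ⟨hg, h⟩
        · refine Or.inr ⟨r⁻¹ * g, ⟨G.mul_mem (G.inv_mem hr) hg, ?_⟩, by group⟩
          rw [hdmul, hdinv, hdr, h]
          norm_num
      exact hGinf (Set.Finite.subset (hSfin.union (hSfin.image _)) hsub)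
    · push_neg at hex
      have hsub : (G : Set (E2 ≃ᵢ E2)) ⊆ S := by
        intro g hg
        rcases hdpm g with h | h
        · exact ⟨hg, h⟩
        · exact absurd h (hex g hg)
      exact hGinf (hSfin.subset hsub)
  -- pick a nontrivial element of S
  obtain ⟨g₀, hg₀S, hg₀1⟩ : ∃ g₀, g₀ ∈ S ∧ g₀ ≠ 1 := by
    obtain ⟨g₀, hg₀, hne⟩ := (hSinf.diff (Set.finite_singleton 1)).nonempty
    exact ⟨g₀, hg₀, by simpa using hne⟩
  have hlin₀ : g₀.toRealLinearIsometryEquiv ≠ 1 := fun h => hg₀1 (hker g₀ hg₀S.1 h)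
  obtain ⟨p, hp, hpuniq⟩ := exists_fixed g₀ hg₀S.2 hlin₀
  -- every element of S fixes p
  have hfix : ∀ h ∈ S, h p = p := by
    intro h hh
    by_cases h1 : h = 1
    · rw [h1]; rfl
    have hcomm : g₀ * h = h * g₀ := by
      have hc : (g₀ * h * g₀⁻¹ * h⁻¹).toRealLinearIsometryEquiv = 1 := by
        show linHom (g₀ * h * g₀⁻¹ * h⁻¹) = 1
        rw [map_mul, map_mul, map_mul, map_inv, map_inv]
        rw [so2_comm (linHom g₀) (linHom h) hg₀S.2 hh.2]
        group
      have hc1 : g₀ * h * g₀⁻¹ * h⁻¹ = 1 :=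
        hker _ (G.mul_mem (G.mul_mem (G.mul_mem hg₀S.1 hh.1) (G.inv_mem hg₀S.1))
          (G.inv_mem hh.1)) hc
      have e := congrArg (fun z => z * (h * g₀)) hc1
      simp only [one_mul] at e
      group at e
      exact e
    have hfp : g₀ (h p) = h p := by
      have e1 : (g₀ * h) p = (h * g₀) p := by rw [hcomm]
      rw [mul_apply', mul_apply', hp] at e1
      exact e1
    exact hpuniq _ hfp
  -- contradiction with discreteness at K = {p}
  have hfin := hdisc {p} isCompact_singleton
  apply hSinf
  apply hfin.subset
  intro h hh
  exact ⟨hh.1, ⟨p, ⟨p, rfl, hfix h hh⟩, rfl⟩⟩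

end CrystHelper

namespace CrystHelper

lemma Φ_eq (A : E2 ≃ₗᵢ[ℝ] E2) :
    Φ A = LinearMap.toMatrix stdB.toBasis stdB.toBasis A.toLinearMap := rfl

end CrystHelper

open CrystHelper

theorem special_group_rotation_periods_2d
    (G : Subgroup (E2 ≃ᵢ E2))
    (hinf : Infinite G)
    (hdisc : ∀ K : Set E2, IsCompact K →
      {g : E2 ≃ᵢ E2 | g ∈ G ∧ ((⇑g) '' K ∩ K).Nonempty}.Finite)
    (hirr : ¬ ∃ L : Submodule ℝ E2, L ≠ ⊥ ∧ L ≠ ⊤ ∧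
      ∀ g ∈ G, ∀ x ∈ L, g.toRealLinearIsometryEquiv x ∈ L)
    (A : E2 ≃ₗᵢ[ℝ] E2)
    (hA : ∃ g ∈ G, g.toRealLinearIsometryEquiv = A)
    (hAdet : LinearEquiv.det A.toLinearEquiv = 1)
    (hA1 : A ≠ 1) :
    IsOfFinOrder A ∧ (orderOf A = 2 ∨ orderOf A = 3 ∨ orderOf A = 4 ∨ orderOf A = 6) := by
  classical
  obtain ⟨g, hgG, hglin⟩ := hA
  have hAdet' : LinearMap.det A.toLinearMap = 1 := by
    have h := LinearEquiv.coe_det A.toLinearEquiv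
    rw [hAdet] at h
    exact h.symm
  obtain ⟨v₀, hv₀T, hv₀⟩ := T_ne_bot G hinf hdisc
  -- bounded pieces of T are finite
  have hTfin : ∀ r : ℝ, {v : E2 | v ∈ T G ∧ ‖v‖ ≤ r}.Finite := by
    intro r
    have hfin := hdisc (Metric.closedBall (0:E2) (max r 0)) (isCompact_closedBall _ _)
    have hsub : {v : E2 | v ∈ T G ∧ ‖v‖ ≤ r}
        ⊆ (fun v => IsometryEquiv.addRight v) ⁻¹'
          {g : E2 ≃ᵢ E2 | g ∈ G ∧
            ((⇑g) '' Metric.closedBall (0:E2) (max r 0) ∩ Metric.closedBall (0:E2) (max r 0)).Nonempty} := by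
      intro v hv
      refine ⟨hv.1, ⟨v, ⟨0, ?_, ?_⟩, ?_⟩⟩
      · simp [Metric.mem_closedBall]
      · simp
      · simp only [Metric.mem_closedBall, dist_zero_right]
        exact le_trans hv.2 (le_max_left _ _)
    refine Set.Finite.subset (Set.Finite.preimage ?_ hfin) hsub
    intro x _ y _ hxy
    have h := congrArg (fun (e : E2 ≃ᵢ E2) => e 0) hxy
    simpa using h
  set L : Submodule ℤ E2 := AddSubgroup.toIntSubmodule (T G) with hLdef
  have hLT : ∀ v : E2, v ∈ L ↔ v ∈ T G := fun v => Iff.rfl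
  -- discreteness of L
  haveI hdiscL : DiscreteTopology L := by
    have hF0 : ({v : E2 | v ∈ T G ∧ ‖v‖ ≤ 1} \ {0}).Finite := (hTfin 1).diff
    by_cases hne : ({v : E2 | v ∈ T G ∧ ‖v‖ ≤ 1} \ {0}).Nonempty
    · have hsne : hF0.toFinset.Nonempty := by rwa [Set.Finite.toFinset_nonempty]
      have hεpos : 0 < min 1 (hF0.toFinset.inf' hsne (fun v => ‖v‖)) := by
        refine lt_min one_pos ?_
        rw [Finset.lt_inf'_iff]
        intro v hv
        rw [Set.Finite.mem_toFinset] at hv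
        exact norm_pos_iff.mpr hv.2
      refine DiscreteTopology.of_forall_le_norm hεpos ?_
      intro x hx
      have hxT : (x : E2) ∈ T G := x.2
      have hxne : (x : E2) ≠ 0 := fun h0 => hx (by
        apply Subtype.ext
        exact h0)
      show min 1 (hF0.toFinset.inf' hsne (fun v => ‖v‖)) ≤ ‖(x : E2)‖
      by_cases h1 : ‖(x : E2)‖ ≤ 1
      · refine le_trans (min_le_right _ _) (Finset.inf'_le _ ?_)
        rw [Set.Finite.mem_toFinset]
        exact ⟨⟨hxT, h1⟩, hxne⟩
      · push_neg at h1
        exact le_trans (min_le_left _ _) h1.le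
    · refine DiscreteTopology.of_forall_le_norm one_pos ?_
      intro x hx
      have hxT : (x : E2) ∈ T G := x.2
      have hxne : (x : E2) ≠ 0 := fun h0 => hx (by
        apply Subtype.ext
        exact h0)
      show (1:ℝ) ≤ ‖(x : E2)‖
      by_contra hlt
      push_neg at hlt
      exact hne ⟨x, ⟨⟨hxT, hlt.le⟩, hxne⟩⟩
  -- the span of L is everything
  have hspan : Submodule.span ℝ (L : Set E2) = ⊤ := by
    by_contra htop
    push_neg at hirr
    have hbot : Submodule.span ℝ (L : Set E2) ≠ ⊥ := by
      intro hb
      have hm : v₀ ∈ Submodule.span ℝ (L : Set E2) :=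
        Submodule.subset_span ((hLT v₀).mpr hv₀T)
      rw [hb, Submodule.mem_bot] at hm
      exact hv₀ hm
    obtain ⟨g', hg'G, x, hx, hgx⟩ := hirr _ hbot htop
    apply hgx
    clear hgx
    induction hx using Submodule.span_induction with
    | mem y hy =>
        exact Submodule.subset_span ((hLT _).mpr (lin_mem_T G hg'G ((hLT y).mp hy)))
    | zero => simpa using Submodule.zero_mem _
    | add y z hy hz ihy ihz => rw [map_add]; exact Submodule.add_mem _ ihy ihz
    | smul a y hy ihy => rw [map_smul]; exact Submodule.smul_mem _ a ihy
  haveI : IsZLattice ℝ L := ⟨hspan⟩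
  haveI : Module.Finite ℤ L := ZLattice.module_finite ℝ L
  haveI : Module.Free ℤ L := ZLattice.module_free ℝ L
  set b := Module.Free.chooseBasis ℤ L with hbdef
  set bR := Module.Basis.ofZLatticeBasis ℝ L b with hbRdef
  have hAT : ∀ v : E2, v ∈ T G → A v ∈ T G := by
    intro v hv
    have h := lin_mem_T G hgG hv
    rwa [hglin] at h
  have hdiag : ∀ j, ∃ mj : ℤ, LinearMap.toMatrix bR bR A.toLinearMap j j = (mj : ℝ) := by
    intro j
    have hbj : (bR j : E2) ∈ L := by
      rw [hbRdef, Module.Basis.ofZLatticeBasis_apply]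
      exact (b j).2
    have hAbj : A (bR j) ∈ L := (hLT _).mpr (hAT _ ((hLT _).mp hbj))
    refine ⟨b.repr ⟨A (bR j), hAbj⟩ j, ?_⟩
    rw [LinearMap.toMatrix_apply]
    exact Module.Basis.ofZLatticeBasis_repr_apply ℝ L b ⟨A (bR j), hAbj⟩ j
  choose mj hmj using hdiag
  have htr : Matrix.trace (Φ A) = ((∑ j, mj j : ℤ) : ℝ) := by
    have h1 : Matrix.trace (Φ A) = LinearMap.trace ℝ E2 A.toLinearMap := by
      rw [Φ_eq, ← LinearMap.trace_eq_matrix_trace ℝ stdB.toBasis]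
    have h2 : LinearMap.trace ℝ E2 A.toLinearMap
        = Matrix.trace (LinearMap.toMatrix bR bR A.toLinearMap) :=
      LinearMap.trace_eq_matrix_trace ℝ bR _
    rw [h1, h2, Matrix.trace]
    push_cast
    exact Finset.sum_congr rfl fun j _ => hmj j
  exact partB A hAdet' hA1 _ htr
end
end

section
/- Let Λ be a full-rank lattice in ℝ³ and let A ∈ O(3) satisfy A(Λ) = Λ. Then A has finite order, and its order belongs to {1, 2, 3, 4, 6}. -/
/- STATEMENT 2: Let Λ be a full-rank lattice in ℝ³ and let A ∈ O(3) satisfy A(Λ) = Λ.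
Then A has finite order, and its order belongs to {1, 2, 3, 4, 6}. -/

noncomputable section

abbrev E3 : Type := EuclideanSpace ℝ (Fin 3)

open Polynomial

/-- If `φ d ≤ 3` then `d ∣ 12`. -/
lemma crys_totient_le_three_dvd_twelve {d : ℕ} (hd : d ≠ 0) (h : Nat.totient d ≤ 3) :
    d ∣ 12 := by
  have h12 : (12 : ℕ) ≠ 0 := by norm_num
  rw [← Nat.factorization_le_iff_dvd hd h12, Finsupp.le_def]
  intro p
  by_cases hp : p.Prime
  · set k := d.factorization p with hk
    have hpk : p ^ k ∣ d := Nat.ordProj_dvd d p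
    have h3 : Nat.totient (p ^ k) ≤ 3 := by
      refine le_trans (Nat.le_of_dvd ?_ (Nat.totient_dvd_of_dvd hpk)) h
      exact Nat.totient_pos.2 (Nat.pos_of_ne_zero hd)
    have hdvd12 : p ^ k ∣ 12 := by
      rcases lt_or_ge p 5 with h5 | h5
      · interval_cases p
        · exact absurd hp (by norm_num)
        · exact absurd hp (by norm_num)
        · -- p = 2
          have hk2 : k ≤ 2 := by
            by_contra hcon
            push_neg at hcon
            have := Nat.totient_prime_pow Nat.prime_two (show 0 < k by omega)
            rw [this] at h3
            have : 2 ^ 2 ≤ 2 ^ (k - 1) := Nat.pow_le_pow_right (by norm_num) (by omega)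
            omega
          calc (2:ℕ) ^ k ∣ 2 ^ 2 := pow_dvd_pow 2 hk2
            _ ∣ 12 := by norm_num
        · -- p = 3
          have hk1 : k ≤ 1 := by
            by_contra hcon
            push_neg at hcon
            have := Nat.totient_prime_pow Nat.prime_three (show 0 < k by omega)
            rw [this] at h3
            have : 3 ^ 1 ≤ 3 ^ (k - 1) := Nat.pow_le_pow_right (by norm_num) (by omega)
            omega
          calc (3:ℕ) ^ k ∣ 3 ^ 1 := pow_dvd_pow 3 hk1
            _ ∣ 12 := by norm_num
        · exact absurd hp (by norm_num)
      · -- p ≥ 5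
        have hk0 : k = 0 := by
          by_contra hcon
          have := Nat.totient_prime_pow hp (show 0 < k by omega)
          rw [this] at h3
          have h1 : 1 ≤ p ^ (k - 1) := Nat.one_le_pow _ _ hp.pos
          have h2 : p - 1 ≤ p ^ (k - 1) * (p - 1) := Nat.le_mul_of_pos_left _ (by omega)
          omega
        simp [hk0]
    exact (Nat.Prime.pow_dvd_iff_le_factorization hp h12).1 hdvd12
  · simp [Nat.factorization_eq_zero_of_not_prime d hp]

open Polynomial

/-- A matrix of finite order whose spectrum is `{1}` is the identity. -/
lemma crys_matrix_eq_one_of_spectrum_one {B : Matrix (Fin 3) (Fin 3) ℂ} {m : ℕ} (hm : 0 < m)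
    (hBm : B ^ m = 1) (hs : spectrum ℂ B ⊆ {1}) : B = 1 := by
  have hint : IsIntegral ℂ B := ⟨B.charpoly, B.charpoly_monic, B.aeval_self_charpoly⟩
  have hdvd : minpoly ℂ B ∣ X ^ m - 1 := by
    apply minpoly.dvd ℂ B
    simp [hBm]
  have hsq : Squarefree ((X : ℂ[X]) ^ m - 1) := by
    have hsep : ((X : ℂ[X]) ^ m - C 1).Separable :=
      Polynomial.separable_X_pow_sub_C 1 (by exact_mod_cast hm.ne') one_ne_zero
    simpa using hsep.squarefree
  have hmin_sq : Squarefree (minpoly ℂ B) := hsq.squarefree_of_dvd hdvd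
  have hmonic : (minpoly ℂ B).Monic := minpoly.monic hint
  -- every root of the minimal polynomial is 1
  have hroots : ∀ μ : ℂ, (minpoly ℂ B).IsRoot μ → μ = 1 := by
    intro μ hμ
    set e := Matrix.toLinAlgEquiv (Pi.basisFun ℂ (Fin 3)) with he
    have hmp : minpoly ℂ (e B) = minpoly ℂ B := minpoly.algEquiv_eq e B
    have heig : Module.End.HasEigenvalue (e B) μ :=
      Module.End.hasEigenvalue_of_isRoot (by rwa [hmp])
    have hμσ : μ ∈ spectrum ℂ B := by
      rw [← AlgEquiv.spectrum_eq e B]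
      exact heig.mem_spectrum
    exact hs hμσ
  -- minpoly = (X - 1) ^ c
  have hsplit := (IsAlgClosed.splits _).eq_prod_roots_of_monic hmonic
  have hrepl : (minpoly ℂ B).roots = Multiset.replicate (minpoly ℂ B).roots.card 1 := by
    apply Multiset.eq_replicate_card.2
    intro x hx
    exact hroots x (isRoot_of_mem_roots hx)
  rw [hrepl, Multiset.map_replicate, Multiset.prod_replicate] at hsplit
  set c := (minpoly ℂ B).roots.card with hc
  -- c = natDegree, ≥ 1
  have hdeg : (minpoly ℂ B).natDegree = c := by
    rw [hsplit, natDegree_pow, natDegree_X_sub_C, mul_one]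
  have hcpos : 0 < c := hdeg ▸ minpoly.natDegree_pos hint
  have hcle : c ≤ 1 := by
    by_contra hcon
    push_neg at hcon
    have hdvd2 : (X - C (1:ℂ)) * (X - C 1) ∣ minpoly ℂ B := by
      rw [hsplit, ← pow_two]
      exact pow_dvd_pow _ hcon
    exact Polynomial.not_isUnit_X_sub_C 1 (hmin_sq _ hdvd2)
  have hc1 : c = 1 := le_antisymm hcle hcpos
  have : minpoly ℂ B = X - C 1 := by rw [hsplit, hc1, pow_one]
  have haev := minpoly.aeval ℂ B
  rw [this] at haev
  simp only [map_sub, aeval_X, aeval_C] at haev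
  have : B - 1 = 0 := by simpa using haev
  rw [sub_eq_zero] at this
  simpa using this

/-- Existence of an eigenvalue that detects failure of `B ^ q = 1`. -/
lemma crys_exists_eigen {B : Matrix (Fin 3) (Fin 3) ℂ} {n q : ℕ} (hn : 0 < n) (hq : 0 < q)
    (hBn : B ^ n = 1) (hBq : B ^ q ≠ 1) :
    ∃ lam ∈ spectrum ℂ B, lam ^ n = 1 ∧ lam ^ q ≠ 1 := by
  have hall : ∀ lam ∈ spectrum ℂ B, lam ^ n = 1 := by
    intro lam hl
    have h1 : lam ^ n ∈ spectrum ℂ (B ^ n) := by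
      rw [spectrum.map_pow_of_pos B hn]
      exact ⟨lam, hl, rfl⟩
    rw [hBn, spectrum.one_eq] at h1
    simpa using h1
  by_contra hcon
  push_neg at hcon
  apply hBq
  apply crys_matrix_eq_one_of_spectrum_one (m := n) hn
  · rw [← pow_mul, mul_comm, pow_mul, hBn, one_pow]
  · rw [spectrum.map_pow_of_pos B hq]
    rintro x ⟨lam, hl, rfl⟩
    exact hcon lam hl (hall lam hl)

/-- The cyclotomic polynomial of the order of an eigenvalue divides the rational charpoly. -/
lemma crys_cyclotomic_dvd_charpoly (MZ : Matrix (Fin 3) (Fin 3) ℤ) {lam : ℂ}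
    (hl : lam ∈ spectrum ℂ (MZ.map (Int.cast : ℤ → ℂ)))
    (hfin : IsOfFinOrder lam) :
    cyclotomic (orderOf lam) ℚ ∣ (MZ.map (Int.cast : ℤ → ℚ)).charpoly := by
  have hpos : 0 < orderOf lam := hfin.orderOf_pos
  rw [cyclotomic_eq_minpoly_rat (IsPrimitiveRoot.orderOf lam) hpos]
  apply minpoly.dvd ℚ lam
  -- `lam` is a root of the complex charpoly
  set Mc := MZ.map (Int.cast : ℤ → ℂ) with hMc
  have hroot : Mc.charpoly.IsRoot lam := by
    set e := Matrix.toLinAlgEquiv (Pi.basisFun ℂ (Fin 3)) with he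
    have heig : Module.End.HasEigenvalue (e Mc) lam := by
      apply Module.End.hasEigenvalue_iff_mem_spectrum.2
      rw [AlgEquiv.spectrum_eq e Mc]
      exact hl
    have hminroot : (minpoly ℂ Mc).IsRoot lam := by
      rw [← minpoly.algEquiv_eq e Mc]
      exact Module.End.isRoot_of_hasEigenvalue heig
    exact hminroot.dvd (minpoly.dvd ℂ Mc Mc.aeval_self_charpoly)
  -- transfer to ℚ
  have hmap : Mc.charpoly = ((MZ.map (Int.cast : ℤ → ℚ)).charpoly).map (algebraMap ℚ ℂ) := by
    have hcomp : Mc = (MZ.map (Int.cast : ℤ → ℚ)).map (algebraMap ℚ ℂ) := by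
      ext i j
      simp [hMc, Matrix.map_apply]
    rw [hcomp, Matrix.charpoly_map]
  rw [aeval_def, ← eval_map, ← hmap]
  exact hroot

/-- Key arithmetic result: the order of an integer matrix of finite order is 1,2,3,4 or 6. -/
lemma crys_key_orders (MZ : Matrix (Fin 3) (Fin 3) ℤ) (n : ℕ) (hn : 0 < n)
    (hord : orderOf (MZ.map (Int.cast : ℤ → ℂ)) = n) :
    n ∈ ({1, 2, 3, 4, 6} : Set ℕ) := by
  set Mc := MZ.map (Int.cast : ℤ → ℂ) with hMc
  set Mq := MZ.map (Int.cast : ℤ → ℚ) with hMq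
  have hMcn : Mc ^ n = 1 := by rw [← hord]; exact pow_orderOf_eq_one Mc
  have hcharne : Mq.charpoly ≠ 0 := Mq.charpoly_monic.ne_zero
  have hdeg : Mq.charpoly.natDegree = 3 := by
    rw [Matrix.charpoly_natDegree_eq_dim]
    simp
  -- facts about each eigenvalue
  have hspec : ∀ lam ∈ spectrum ℂ Mc, IsOfFinOrder lam ∧ Nat.totient (orderOf lam) ≤ 3
      ∧ orderOf lam ∣ 12 := by
    intro lam hl
    have hl1 : lam ^ n = 1 := by
      have h1 : lam ^ n ∈ spectrum ℂ (Mc ^ n) := by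
        rw [spectrum.map_pow_of_pos Mc hn]
        exact ⟨lam, hl, rfl⟩
      rw [hMcn, spectrum.one_eq] at h1
      simpa using h1
    have hfin : IsOfFinOrder lam := isOfFinOrder_iff_pow_eq_one.2 ⟨n, hn, hl1⟩
    have hdvd := crys_cyclotomic_dvd_charpoly MZ hl hfin
    have htot : Nat.totient (orderOf lam) ≤ 3 := by
      have := Polynomial.natDegree_le_of_dvd hdvd hcharne
      rwa [natDegree_cyclotomic, hdeg] at this
    exact ⟨hfin, htot, crys_totient_le_three_dvd_twelve hfin.orderOf_pos.ne' htot⟩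
  -- `Mc ^ 12 = 1`, hence `n ∣ 12`
  have h12 : Mc ^ 12 = 1 := by
    apply crys_matrix_eq_one_of_spectrum_one (m := n) hn
    · rw [← pow_mul, mul_comm, pow_mul, hMcn, one_pow]
    · rw [spectrum.map_pow_of_pos Mc (by norm_num)]
      rintro x ⟨lam, hl, rfl⟩
      obtain ⟨hfin, -, hdvd12⟩ := hspec lam hl
      have : lam ^ (12:ℕ) = 1 := orderOf_dvd_iff_pow_eq_one.1 hdvd12
      simpa using this
  have hn12 : n ∣ 12 := by
    rw [← hord]
    exact orderOf_dvd_of_pow_eq_one h12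
  -- exclude n = 12
  have hne12 : n ≠ 12 := by
    intro hn'
    have hq6 : Mc ^ (6:ℕ) ≠ 1 := by
      intro hcon
      have := orderOf_dvd_of_pow_eq_one hcon
      rw [hord, hn'] at this
      norm_num at this
    have hq4 : Mc ^ (4:ℕ) ≠ 1 := by
      intro hcon
      have := orderOf_dvd_of_pow_eq_one hcon
      rw [hord, hn'] at this
      norm_num at this
    obtain ⟨lam, hlσ, hl12, hl6⟩ := crys_exists_eigen (by norm_num : (0:ℕ) < 12)
      (by norm_num : (0:ℕ) < 6) h12 hq6
    obtain ⟨mu, hmσ, hm12, hm4⟩ := crys_exists_eigen (by norm_num : (0:ℕ) < 12)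
      (by norm_num : (0:ℕ) < 4) h12 hq4
    obtain ⟨hlfin, hltot, -⟩ := hspec lam hlσ
    obtain ⟨hmfin, hmtot, -⟩ := hspec mu hmσ
    set d1 := orderOf lam with hd1
    set d2 := orderOf mu with hd2
    have hd1dvd : d1 ∣ 12 := orderOf_dvd_of_pow_eq_one hl12
    have hd2dvd : d2 ∣ 12 := orderOf_dvd_of_pow_eq_one hm12
    have hd1n6 : ¬ d1 ∣ 6 := fun hc => hl6 (orderOf_dvd_iff_pow_eq_one.1 hc)
    have hd2n4 : ¬ d2 ∣ 4 := fun hc => hm4 (orderOf_dvd_iff_pow_eq_one.1 hc)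
    -- d1 = 4, d2 ∈ {3, 6}
    have hd1le : d1 ≤ 12 := Nat.le_of_dvd (by norm_num) hd1dvd
    have hd2le : d2 ≤ 12 := Nat.le_of_dvd (by norm_num) hd2dvd
    have hd1pos : 0 < d1 := hlfin.orderOf_pos
    have hd2pos : 0 < d2 := hmfin.orderOf_pos
    have hd1eq : d1 = 4 := by clear_value d1; interval_cases d1 <;> revert hd1dvd hd1n6 hltot <;> decide
    have hd2eq : d2 = 3 ∨ d2 = 6 := by clear_value d2; interval_cases d2 <;> revert hd2dvd hd2n4 hmtot <;> decide
    have hcop : IsCoprime (cyclotomic d1 ℚ) (cyclotomic d2 ℚ) :=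
      cyclotomic.isCoprime_rat (by rcases hd2eq with h | h <;> omega)
    have hmul : cyclotomic d1 ℚ * cyclotomic d2 ℚ ∣ Mq.charpoly :=
      hcop.mul_dvd (crys_cyclotomic_dvd_charpoly MZ hlσ hlfin)
        (crys_cyclotomic_dvd_charpoly MZ hmσ hmfin)
    have hdegs := Polynomial.natDegree_le_of_dvd hmul hcharne
    rw [Polynomial.natDegree_mul (cyclotomic_ne_zero d1 ℚ) (cyclotomic_ne_zero d2 ℚ),
      natDegree_cyclotomic, natDegree_cyclotomic, hdeg, hd1eq] at hdegs
    have h4 : Nat.totient 4 = 2 := by decide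
    have h3 : Nat.totient 3 = 2 := by decide
    have h6 : Nat.totient 6 = 2 := by decide
    rcases hd2eq with h | h <;> rw [h] at hdegs <;> omega
  have hle : n ≤ 12 := Nat.le_of_dvd (by norm_num) hn12
  simp only [Set.mem_insert_iff, Set.mem_singleton_iff]
  interval_cases n <;> revert hn12 hne12 <;> decide

/-- The coercion of linear isometry equivalences to endomorphisms, as a monoid hom. -/
def crysHom : (E3 ≃ₗᵢ[ℝ] E3) →* Module.End ℝ E3 where
  toFun g := (g.toLinearEquiv : E3 →ₗ[ℝ] E3)
  map_one' := by ext x; rfl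
  map_mul' g h := by ext x; rfl

lemma crysHom_injective : Function.Injective crysHom :=
  fun g h hgh => LinearIsometryEquiv.ext fun x => LinearMap.congr_fun hgh x

lemma crysHom_apply (g : E3 ≃ₗᵢ[ℝ] E3) (x : E3) : crysHom g x = g x := rfl

theorem crystallographic_restriction_3d
    (b : Module.Basis (Fin 3) ℝ E3)
    (Λ : Set E3)
    (hΛ : Λ = {x : E3 | ∃ c : Fin 3 → ℤ, x = ∑ i, (c i : ℝ) • b i})
    (A : E3 ≃ₗᵢ[ℝ] E3)
    (hA : (⇑A) '' Λ = Λ) :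
    IsOfFinOrder A ∧ orderOf A ∈ ({1, 2, 3, 4, 6} : Set ℕ) := by
  classical
  set f : Module.End ℝ E3 := crysHom A with hf
  set e := LinearMap.toMatrixAlgEquiv b with he
  -- lattice membership facts
  have hbmem : ∀ j, b j ∈ Λ := by
    intro j
    rw [hΛ]
    refine ⟨Pi.single j 1, ?_⟩
    rw [Finset.sum_eq_single j]
    · simp
    · intro i _ hij
      simp [Pi.single_apply, hij]
    · simp
  have hAmem : ∀ x ∈ Λ, A x ∈ Λ := fun x hx => hA ▸ ⟨x, hx, rfl⟩
  have hpowmem : ∀ (k : ℕ) (j : Fin 3), (A ^ k) (b j) ∈ Λ := by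
    intro k j
    induction k with
    | zero => simpa using hbmem j
    | succ m ih =>
        have hco : (A ^ (m + 1)) (b j) = A ((A ^ m) (b j)) := by
          rw [pow_succ']
          rfl
        rw [hco]
        exact hAmem _ ih
  -- entries of the matrices of powers
  have hentry : ∀ (k : ℕ) (i j : Fin 3), (e (f ^ k)) i j = b.repr ((A ^ k) (b j)) i := by
    intro k i j
    rw [he, LinearMap.toMatrixAlgEquiv_apply]
    congr 1
    have h1 : f ^ k = crysHom (A ^ k) := by rw [map_pow]
    rw [h1]
    rfl
  -- integrality of coordinates of lattice points
  have hrepr : ∀ x ∈ Λ, ∀ i, ∃ z : ℤ, b.repr x i = (z : ℝ) := by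
    intro x hx i
    rw [hΛ] at hx
    obtain ⟨c, rfl⟩ := hx
    refine ⟨c i, ?_⟩
    have := b.repr_sum_self (fun i => (c i : ℝ))
    exact congrFun this i
  -- bound on coordinates
  set CL := (b.equivFunL : E3 →L[ℝ] (Fin 3 → ℝ)) with hCL
  have hbound : ∀ (x : E3) (i : Fin 3), |b.repr x i| ≤ ‖CL‖ * ‖x‖ := by
    intro x i
    have h1 : b.repr x i = CL x i := by
      rw [hCL]
      simp [Module.Basis.equivFun_apply]
    rw [h1, ← Real.norm_eq_abs]
    exact le_trans (norm_le_pi_norm (CL x) i) (CL.le_opNorm x)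
  -- the finite set containing all entries
  set C : Fin 3 → ℝ := fun j => ‖CL‖ * ‖b j‖ with hC
  set T : Fin 3 → Set ℝ := fun j => (fun z : ℤ => (z : ℝ)) '' (Set.Icc (-⌈C j⌉) ⌈C j⌉) with hT
  have hTfin : ∀ j, (T j).Finite := fun j => (Set.finite_Icc _ _).image _
  have hmem : ∀ (k : ℕ) (i j : Fin 3), (e (f ^ k)) i j ∈ T j := by
    intro k i j
    obtain ⟨z, hz⟩ := hrepr _ (hpowmem k j) i
    have hb : |b.repr ((A ^ k) (b j)) i| ≤ C j := by
      have := hbound ((A ^ k) (b j)) i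
      rwa [(A ^ k).norm_map (b j)] at this
    rw [hz] at hb
    refine ⟨z, ?_, by rw [hentry k i j, hz]⟩
    rw [Set.mem_Icc]
    have habs := abs_le.1 hb
    constructor
    · have h2 : ((-⌈C j⌉ : ℤ) : ℝ) ≤ (z : ℝ) := by
        push_cast
        calc (-⌈C j⌉ : ℝ) ≤ -C j := by simp [Int.le_ceil]
          _ ≤ (z : ℝ) := habs.1
      exact_mod_cast h2
    · have h2 : ((z : ℤ) : ℝ) ≤ ((⌈C j⌉ : ℤ) : ℝ) := le_trans habs.2 (Int.le_ceil _)
      exact_mod_cast h2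
  -- finiteness of the set of matrices
  have hSfin : Set.Finite {M : Matrix (Fin 3) (Fin 3) ℝ | ∀ i j, M i j ∈ T j} := by
    have hpi : Set.Finite (Set.pi Set.univ (fun _ : Fin 3 => Set.pi Set.univ T)) :=
      Set.Finite.pi (fun _ => Set.Finite.pi hTfin)
    apply hpi.subset
    intro M hM
    rw [Set.mem_pi]
    intro i _
    rw [Set.mem_pi]
    intro j _
    exact hM i j
  have hnotinj : ¬ Function.Injective (fun k : ℕ => e (f ^ k)) := by
    intro hinj
    have hrange : Set.range (fun k : ℕ => e (f ^ k)) ⊆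
        {M : Matrix (Fin 3) (Fin 3) ℝ | ∀ i j, M i j ∈ T j} := by
      rintro _ ⟨k, rfl⟩
      exact fun i j => hmem k i j
    exact (hSfin.subset hrange).not_infinite (Set.infinite_range_of_injective hinj)
  obtain ⟨k1, k2, heq, hne⟩ := Function.not_injective_iff.1 hnotinj
  have hApow : A ^ k1 = A ^ k2 := by
    apply crysHom_injective
    have hfe : f ^ k1 = f ^ k2 := e.injective heq
    rw [map_pow, map_pow, ← hf, hfe]
  have hkey : ∀ m1 m2 : ℕ, m1 < m2 → A ^ m1 = A ^ m2 → IsOfFinOrder A := by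
    intro m1 m2 hlt hpow
    refine isOfFinOrder_iff_pow_eq_one.2 ⟨m2 - m1, by omega, ?_⟩
    have h1 : A ^ m1 * A ^ (m2 - m1) = A ^ m1 * 1 := by
      rw [mul_one, ← pow_add, Nat.add_sub_cancel' (le_of_lt hlt)]
      exact hpow.symm
    exact mul_left_cancel h1
  have hfin : IsOfFinOrder A := by
    rcases lt_or_gt_of_ne hne with hlt | hlt
    · exact hkey k1 k2 hlt hApow
    · exact hkey k2 k1 hlt hApow.symm
  refine ⟨hfin, ?_⟩
  -- construct the integer matrix
  have hZ : ∀ i j, ∃ z : ℤ, (e f) i j = (z : ℝ) := by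
    intro i j
    have h1 : (e f) i j = (e (f ^ 1)) i j := by rw [pow_one]
    rw [h1, hentry 1 i j]
    exact hrepr _ (hpowmem 1 j) i
  choose MZfun hMZ using hZ
  set MZ : Matrix (Fin 3) (Fin 3) ℤ := Matrix.of MZfun with hMZdef
  have hmapR : (Int.castRingHom ℝ).mapMatrix MZ = e f := by
    ext i j
    exact (hMZ i j).symm
  -- order transfers
  have hinjR : Function.Injective
      ((Int.castRingHom ℝ).mapMatrix : Matrix (Fin 3) (Fin 3) ℤ →+* Matrix (Fin 3) (Fin 3) ℝ) := by
    intro X Y h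
    ext i j
    exact Int.cast_injective (congrFun (congrFun (congrArg (fun M : Matrix (Fin 3) (Fin 3) ℝ => (M : Matrix (Fin 3) (Fin 3) ℝ)) h) i) j)
  have hinjC : Function.Injective
      ((Int.castRingHom ℂ).mapMatrix : Matrix (Fin 3) (Fin 3) ℤ →+* Matrix (Fin 3) (Fin 3) ℂ) := by
    intro X Y h
    ext i j
    exact Int.cast_injective (congrFun (congrFun (congrArg (fun M : Matrix (Fin 3) (Fin 3) ℂ => (M : Matrix (Fin 3) (Fin 3) ℂ)) h) i) j)
  have hordA : orderOf f = orderOf A := orderOf_injective crysHom crysHom_injective A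
  have horde : orderOf (e f) = orderOf f :=
    orderOf_injective (e.toAlgHom.toRingHom.toMonoidHom) e.injective f
  have hordR : orderOf ((Int.castRingHom ℝ).mapMatrix MZ) = orderOf MZ := by
    rw [orderOf_eq_orderOf_iff]
    intro m
    rw [← map_pow, ← (map_one ((Int.castRingHom ℝ).mapMatrix : Matrix (Fin 3) (Fin 3) ℤ →+* Matrix (Fin 3) (Fin 3) ℝ))]
    exact hinjR.eq_iff
  have hordC : orderOf ((Int.castRingHom ℂ).mapMatrix MZ) = orderOf MZ := by
    rw [orderOf_eq_orderOf_iff]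
    intro m
    rw [← map_pow, ← (map_one ((Int.castRingHom ℂ).mapMatrix : Matrix (Fin 3) (Fin 3) ℤ →+* Matrix (Fin 3) (Fin 3) ℂ))]
    exact hinjC.eq_iff
  have hfinal : orderOf (MZ.map (Int.cast : ℤ → ℂ)) = orderOf A := by
    have h1 : MZ.map (Int.cast : ℤ → ℂ) = (Int.castRingHom ℂ).mapMatrix MZ := rfl
    rw [h1, hordC, ← hordR, hmapR, horde, hordA]
  exact crys_key_orders MZ (orderOf A) hfin.orderOf_pos hfinal
end
end

section
/- There is no finite subgroup of O(3) with two distinct 6-fold axes of rotation. Precisely: if G is a finite subgroup of O(3) and g, h ∈ G are rotations of order 6, then g and h have the same rotation axis, i.e., {x ∈ ℝ³ : gx = x} = {x ∈ ℝ³ : hx = x}. -/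
/- STATEMENT 3: There is no finite subgroup of O(3) with two distinct 6-fold axes of rotation:
if G is a finite subgroup of O(3) and g, h ∈ G are rotations of order 6, then g and h have the
same rotation axis, i.e. the same fixed-point sets. -/

noncomputable section

set_option maxHeartbeats 2000000

open scoped RealInnerProductSpace Matrix
open Module

lemma exists_unit_fixed (f : E3 ≃ₗᵢ[ℝ] E3) (hdet : LinearEquiv.det f.toLinearEquiv = 1) :
    ∃ u : E3, ‖u‖ = 1 ∧ f u = u := by
  classical
  set A : E3 →ₗ[ℝ] E3 := (f.toLinearEquiv : E3 →ₗ[ℝ] E3) with hA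
  have hdet1 : LinearMap.det A = 1 := by
    rw [← LinearEquiv.coe_det, hdet]; simp
  set b := EuclideanSpace.basisFun (Fin 3) ℝ with hb
  set M := LinearMap.toMatrix b.toBasis b.toBasis A with hM
  have hMdet : M.det = 1 := by
    rw [hM, LinearMap.det_toMatrix]; exact hdet1
  have horth : Mᵀ * M = 1 := by
    ext i j
    have : (Mᵀ * M) i j = ∑ k, M k i * M k j := by
      simp [Matrix.mul_apply, Matrix.transpose_apply]
    rw [this]
    have hrepr : ∀ (x : E3) (k : Fin 3), ⟪b k, x⟫ = b.repr x k := by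
      intro x k; rw [b.repr_apply_apply]
    have hMk : ∀ (i k : Fin 3), M k i = ⟪b k, A (b.toBasis i)⟫ := by
      intro i k
      rw [hM, LinearMap.toMatrix_apply, b.coe_toBasis_repr_apply, ← hrepr]
    calc ∑ k, M k i * M k j = ∑ k, ⟪A (b.toBasis i), b k⟫ * ⟪b k, A (b.toBasis j)⟫ := by
          refine Finset.sum_congr rfl fun k _ => ?_
          rw [hMk, hMk, real_inner_comm (b k)]
        _ = ⟪A (b.toBasis i), A (b.toBasis j)⟫ := b.sum_inner_mul_inner _ _
        _ = ⟪f (b.toBasis i), f (b.toBasis j)⟫ := rfl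
        _ = ⟪(b i : E3), b j⟫ := by rw [f.inner_map_map]; rfl
        _ = (1 : Matrix (Fin 3) (Fin 3) ℝ) i j := by
          rw [orthonormal_iff_ite.mp b.orthonormal i j, Matrix.one_apply]
  have hdetM1 : (M - 1).det = 0 := by
    have h1 : (M - 1)ᵀ = Mᵀ * (1 - M) := by
      rw [Matrix.mul_sub, Matrix.mul_one, horth, Matrix.transpose_sub, Matrix.transpose_one]
    have h2 : (M - 1).det = (1 - M).det := by
      rw [← Matrix.det_transpose (M - 1), h1, Matrix.det_mul, Matrix.det_transpose, hMdet,
        one_mul]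
    have h3 : (1 - M).det = - (M - 1).det := by
      have h4 : (1 - M).det = (-(M - 1)).det := by rw [neg_sub]
      rw [h4, Matrix.det_neg]
      simp only [Fintype.card_fin]
      ring
    have := h2.trans h3
    linarith
  have hdetA : LinearMap.det (A - LinearMap.id) = 0 := by
    have : LinearMap.toMatrix b.toBasis b.toBasis (A - LinearMap.id) = M - 1 := by
      rw [map_sub, LinearMap.toMatrix_id]
    rw [← LinearMap.det_toMatrix b.toBasis, this, hdetM1]
  have hker := LinearMap.bot_lt_ker_of_det_eq_zero hdetA
  obtain ⟨v, hv, hv0⟩ := (Submodule.ne_bot_iff _).mp hker.ne'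
  have hfv : f v = v := by
    have := LinearMap.mem_ker.mp hv
    have h2 : A v - v = 0 := by simpa using this
    have : A v = v := by linear_combination (norm := module) h2
    exact this
  refine ⟨‖v‖⁻¹ • v, ?_, ?_⟩
  · rw [norm_smul, norm_inv, norm_norm, inv_mul_cancel₀ (norm_ne_zero_iff.mpr hv0)]
  · rw [map_smul, hfv]

lemma half_inner (f : E3 ≃ₗᵢ[ℝ] E3) (hord : orderOf f = 6)
    {u : E3} (hu : ‖u‖ = 1) (hfu : f u = u) :
    ∀ w : E3, ⟪u, w⟫ = 0 → ⟪f w, w⟫ = ‖w‖ ^ 2 / 2 := by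
  classical
  have hu0 : u ≠ 0 := by intro h; rw [h, norm_zero] at hu; norm_num at hu
  have huu : ⟪u, u⟫ = 1 := by
    rw [real_inner_self_eq_norm_sq, hu]; norm_num
  set P := (ℝ ∙ u)ᗮ with hP
  have hmemP : ∀ x : E3, x ∈ P ↔ ⟪u, x⟫ = 0 := fun x =>
    Submodule.mem_orthogonal_singleton_iff_inner_right
  have hmapP : ∀ x ∈ P, f x ∈ P := by
    intro x hx
    rw [hmemP] at hx ⊢
    calc ⟪u, f x⟫ = ⟪f u, f x⟫ := by rw [hfu]
      _ = ⟪u, x⟫ := f.inner_map_map _ _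
      _ = 0 := hx
  have hsymmP : ∀ x ∈ P, f.symm x ∈ P := by
    intro x hx
    rw [hmemP] at hx ⊢
    calc ⟪u, f.symm x⟫ = ⟪f u, f (f.symm x)⟫ := (f.inner_map_map _ _).symm
      _ = ⟪u, x⟫ := by rw [hfu, f.apply_symm_apply]
      _ = 0 := hx
  -- the restricted isometry
  let rli : P →ₗᵢ[ℝ] P :=
    { toLinearMap := (f.toLinearEquiv : E3 →ₗ[ℝ] E3).restrict hmapP
      norm_map' := fun x => f.norm_map x }
  have hrli : ∀ x : P, (rli x : E3) = f x := fun x => rfl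
  have hsurj : Function.Surjective rli := by
    intro y
    refine ⟨⟨f.symm y, hsymmP y y.2⟩, ?_⟩
    apply Subtype.ext
    rw [hrli]
    exact f.apply_symm_apply y
  let r : P ≃ₗᵢ[ℝ] P := LinearIsometryEquiv.ofSurjective rli hsurj
  have hr : ∀ x : P, (r x : E3) = f x := fun x => rfl
  -- dimension
  have hfP : finrank ℝ P = 2 := by
    have h1 : finrank ℝ (ℝ ∙ u) = 1 := finrank_span_singleton hu0
    have h2 : finrank ℝ (ℝ ∙ u : Submodule ℝ E3) + finrank ℝ P = 3 := by
      rw [Submodule.finrank_add_finrank_orthogonal]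
      exact finrank_euclideanSpace_fin
    rw [h1] at h2
    omega
  haveI : Fact (finrank ℝ P = 2) := ⟨hfP⟩
  haveI : Nontrivial P := nontrivial_of_finrank_eq_succ hfP
  obtain ⟨x0, hx0⟩ : ∃ x : P, x ≠ 0 := exists_ne 0
  -- powers
  have hfu_pow : ∀ n : ℕ, (f ^ n) u = u := by
    intro n
    induction n with
    | zero => simp
    | succ n ih => rw [pow_succ, LinearIsometryEquiv.coe_mul, Function.comp_apply, hfu, ih]
  have hpow : ∀ (n : ℕ) (x : P), ((r ^ n) x : E3) = (f ^ n) x := by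
    intro n
    induction n with
    | zero => intro x; simp
    | succ n ih =>
      intro x
      rw [pow_succ, pow_succ, LinearIsometryEquiv.coe_mul, LinearIsometryEquiv.coe_mul,
        Function.comp_apply, Function.comp_apply, ih, hr]
  -- order of r
  have hord_r : orderOf r = 6 := by
    rw [← hord]
    apply orderOf_eq_orderOf_iff.mpr
    intro n
    constructor
    · intro hr1
      apply LinearIsometryEquiv.ext
      intro x
      have hwP : x - ⟪u, x⟫ • u ∈ P := by
        rw [hmemP, inner_sub_right, real_inner_smul_right, huu]
        ring
      have hx : x = ⟪u, x⟫ • u + (x - ⟪u, x⟫ • u) := by abel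
      calc (f ^ n) x = ⟪u, x⟫ • (f ^ n) u + (f ^ n) (x - ⟪u, x⟫ • u) := by
            conv_lhs => rw [hx]
            rw [map_add, map_smul]
          _ = ⟪u, x⟫ • u + ((r ^ n) (⟨_, hwP⟩ : P) : E3) := by rw [hfu_pow, hpow]
          _ = ⟪u, x⟫ • u + (x - ⟪u, x⟫ • u) := by rw [hr1]; rfl
          _ = x := by abel
    · intro hf1
      apply LinearIsometryEquiv.ext
      intro x
      apply Subtype.ext
      rw [hpow, hf1]
      rfl
  -- orientation
  let b2 := (stdOrthonormalBasis ℝ P).reindex (finCongr hfP)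
  let o := b2.toBasis.orientation
  -- rotation facts
  have rot_one : ∀ ψ : Real.Angle, o.rotation ψ = 1 ↔ ψ = 0 := by
    intro ψ
    constructor
    · intro h1
      have := congrArg (fun e : P ≃ₗᵢ[ℝ] P => e x0) h1
      rcases (o.rotation_eq_self_iff x0 ψ).mp (by rw [this]; rfl) with h | h
      · exact absurd h hx0
      · exact h
    · intro h; rw [h, o.rotation_zero]; rfl
  have rot_pow : ∀ (ψ : Real.Angle) (n : ℕ), o.rotation ψ ^ n = o.rotation (n • ψ) := by
    intro ψ n
    induction n with
    | zero => rw [pow_zero, zero_smul, ((rot_one 0).mpr rfl).symm]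
    | succ n ih =>
      rw [pow_succ, ih]
      apply LinearIsometryEquiv.ext
      intro x
      rw [LinearIsometryEquiv.coe_mul, Function.comp_apply, o.rotation_rotation, succ_nsmul]
  -- f^6 = 1 etc.
  have hr6 : r ^ 6 = 1 := by rw [← hord_r]; exact pow_orderOf_eq_one r
  have hrmin : ∀ n : ℕ, 0 < n → n < 6 → r ^ n ≠ 1 := by
    intro n hn h6 h1
    have := orderOf_le_of_pow_eq_one hn h1
    omega
  -- determinant of r is nonzero
  have hdet_ne : LinearMap.det (r.toLinearEquiv : P →ₗ[ℝ] P) ≠ 0 :=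
    r.toLinearEquiv.isUnit_det'.ne_zero
  rcases hdet_ne.lt_or_gt with hneg | hpos
  · -- reflection case: impossible
    exfalso
    have hmap : Orientation.map (Fin 2) r.toLinearEquiv o = -o :=
      (o.map_eq_neg_iff_det_neg r.toLinearEquiv (by simp [hfP])).mpr hneg
    have anti : ∀ x : P, r (o.rightAngleRotation x) = -(o.rightAngleRotation (r x)) := by
      intro x
      have h1 := o.rightAngleRotation_map r (r x)
      rw [hmap, o.rightAngleRotation_neg_orientation, r.symm_apply_apply] at h1
      exact h1.symm
    have hdet2 : 0 < LinearMap.det ((r * r).toLinearEquiv : P →ₗ[ℝ] P) := by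
      have hco : ((r * r).toLinearEquiv : P →ₗ[ℝ] P) =
          (r.toLinearEquiv : P →ₗ[ℝ] P) ∘ₗ (r.toLinearEquiv : P →ₗ[ℝ] P) := rfl
      rw [hco, LinearMap.det_comp]
      exact mul_pos_of_neg_of_neg hneg hneg
    obtain ⟨ψ, hψ⟩ := o.exists_linearIsometryEquiv_eq_of_det_pos hdet2
    -- r conjugates rotation ψ to rotation (-ψ)
    have hconj : ∀ x : P, r (o.rotation ψ x) = o.rotation (-ψ) (r x) := by
      intro x
      rw [o.rotation_apply, o.rotation_apply, map_add, map_smul, map_smul, anti,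
        Real.Angle.cos_neg, Real.Angle.sin_neg, smul_neg, ← neg_smul]
    have hcomm : ∀ x : P, r (o.rotation ψ x) = o.rotation ψ (r x) := by
      intro x
      have h1 : (r * (r * r)) x = ((r * r) * r) x := by rw [mul_assoc]
      simpa only [LinearIsometryEquiv.coe_mul, Function.comp_apply, hψ] using h1
    have h2ψ : (2 : ℕ) • ψ = 0 := by
      have hall : ∀ y : P, o.rotation (-ψ) y = o.rotation ψ y := by
        intro y
        obtain ⟨x, rfl⟩ := r.surjective y
        rw [← hconj, hcomm]
      have : o.rotation ((2 : ℕ) • ψ) x0 = x0 := by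
        rw [two_nsmul, ← o.rotation_rotation ψ ψ x0]
        conv_lhs => rw [← hall (o.rotation ψ x0)]
        rw [o.rotation_rotation, neg_add_cancel]
        have := (rot_one 0).mpr rfl
        exact congrArg (fun e : P ≃ₗᵢ[ℝ] P => e x0) this
      rcases (o.rotation_eq_self_iff x0 _).mp this with h | h
      · exact absurd h hx0
      · exact h
    have hψ0 : ψ = 0 := by
      have h3 : (r * r) ^ 3 = 1 := by
        rw [← pow_two, ← pow_mul]
        norm_num
        exact hr6
      rw [hψ, rot_pow] at h3
      have h3ψ : (3 : ℕ) • ψ = ψ := by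
        rw [show (3 : ℕ) = 2 + 1 from rfl, succ_nsmul, h2ψ, zero_add]
      rw [h3ψ] at h3
      exact (rot_one ψ).mp h3
    have hr2 : r ^ 2 = 1 := by
      rw [pow_two, hψ, hψ0]
      exact (rot_one 0).mpr rfl
    exact hrmin 2 (by norm_num) (by norm_num) hr2
  · -- rotation case
    obtain ⟨θ, hθ⟩ := o.exists_linearIsometryEquiv_eq_of_det_pos hpos
    -- θ has order 6, hence cos θ = 1/2
    have h6θ : (6 : ℕ) • θ = 0 := by
      have := hr6
      rw [hθ, rot_pow] at this
      exact (rot_one _).mp this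
    have hminθ : ∀ n : ℕ, 0 < n → n < 6 → (n : ℕ) • θ ≠ 0 := by
      intro n hn h6 h0
      exact hrmin n hn h6 (by rw [hθ, rot_pow, h0, (rot_one 0).mpr rfl])
    have hcos : Real.Angle.cos θ = 1 / 2 := by
      set t := θ.toReal with ht
      have htθ : (t : Real.Angle) = θ := θ.coe_toReal
      have h6t : ((6 * t : ℝ) : Real.Angle) = ((0 : ℝ) : Real.Angle) := by
        rw [Real.Angle.coe_zero, ← h6θ, ← htθ, ← Real.Angle.natCast_mul_eq_nsmul]
        norm_num
      obtain ⟨k, hk⟩ := Real.Angle.angle_eq_iff_two_pi_dvd_sub.mp h6t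
      rw [sub_zero] at hk
      have hπ := Real.pi_pos
      have htlo : -Real.pi < t := θ.neg_pi_lt_toReal
      have hthi : t ≤ Real.pi := θ.toReal_le_pi
      have hkr : (k : ℝ) = 3 * t / Real.pi := by field_simp; linarith
      have hklo : (-3 : ℝ) < (k : ℝ) := by rw [hkr, lt_div_iff₀ hπ]; nlinarith
      have hkhi : (k : ℝ) ≤ 3 := by rw [hkr, div_le_iff₀ hπ]; nlinarith
      have hklo' : (-3 : ℤ) < k := by exact_mod_cast hklo
      have hkhi' : k ≤ 3 := by exact_mod_cast hkhi
      have hts : t = Real.pi * k / 3 := by field_simp; linarith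
      have hcoe : ∀ (m : ℕ) (s : ℤ), (m : ℝ) * t = 2 * Real.pi * s →
          (m : ℕ) • θ = 0 := by
        intro m s hms
        rw [← htθ, ← Real.Angle.natCast_mul_eq_nsmul, ← Real.Angle.coe_zero]
        exact Real.Angle.angle_eq_iff_two_pi_dvd_sub.mpr ⟨s, by rw [sub_zero]; exact_mod_cast hms⟩
      interval_cases k
      · -- k = -2 : t = -2π/3, 3•θ = 0
        exfalso
        apply hminθ 3 (by norm_num) (by norm_num)
        apply hcoe 3 (-1)
        rw [hts]; push_cast; field_simp; try ring
      · -- k = -1 : t = -π/3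
        rw [← htθ, Real.Angle.cos_coe, hts]
        push_cast
        rw [show Real.pi * (-1) / 3 = -(Real.pi / 3) by ring, Real.cos_neg,
          Real.cos_pi_div_three]
      · -- k = 0 : θ = 0
        exfalso
        apply hminθ 1 (by norm_num) (by norm_num)
        apply hcoe 1 0
        rw [hts]; push_cast; ring
      · -- k = 1 : t = π/3
        rw [← htθ, Real.Angle.cos_coe, hts]
        push_cast
        rw [show Real.pi * 1 / 3 = Real.pi / 3 by ring, Real.cos_pi_div_three]
      · -- k = 2 : 3•θ = 0
        exfalso
        apply hminθ 3 (by norm_num) (by norm_num)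
        apply hcoe 3 1
        rw [hts]; push_cast; field_simp; try ring
      · -- k = 3 : t = π, 2•θ = 0
        exfalso
        apply hminθ 2 (by norm_num) (by norm_num)
        apply hcoe 2 1
        rw [hts]; push_cast; field_simp; try ring
    -- conclude
    intro w hw
    have hwP : w ∈ P := (hmemP w).mpr hw
    set x : P := ⟨w, hwP⟩ with hxdef
    have h1 : ⟪f w, w⟫ = ⟪(r x : E3), (x : E3)⟫ := by rw [hr]
    have h2 : ⟪(r x : E3), (x : E3)⟫ = ⟪r x, x⟫ := rfl
    have h3 : ⟪r x, x⟫ = Real.Angle.cos θ * ‖x‖ ^ 2 := by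
      rw [hθ, o.rotation_apply, inner_add_left, real_inner_smul_left,
        real_inner_smul_left, o.inner_rightAngleRotation_self, mul_zero, add_zero,
        real_inner_self_eq_norm_sq]
    have h4 : ‖x‖ = ‖w‖ := rfl
    rw [h1, h2, h3, hcos, h4]
    ring

lemma fixed_eq_span (f : E3 ≃ₗᵢ[ℝ] E3) (hord : orderOf f = 6)
    {u : E3} (hu : ‖u‖ = 1) (hfu : f u = u) :
    {x : E3 | f x = x} = ((ℝ ∙ u : Submodule ℝ E3) : Set E3) := by
  have huu : ⟪u, u⟫ = 1 := by rw [real_inner_self_eq_norm_sq, hu]; norm_num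
  ext x
  constructor
  · intro hx
    have hx' : f x = x := hx
    set c := ⟪u, x⟫ with hc
    set w := x - c • u with hw
    have hperp : ⟪u, w⟫ = 0 := by
      rw [hw, inner_sub_right, real_inner_smul_right, huu]
      ring
    have hfw : f w = w := by rw [hw, map_sub, map_smul, hfu, hx']
    have h1 : ⟪f w, w⟫ = ‖w‖ ^ 2 / 2 := half_inner f hord hu hfu w hperp
    have h2 : ⟪f w, w⟫ = ‖w‖ ^ 2 := by rw [hfw, real_inner_self_eq_norm_sq]
    have h3 : ‖w‖ ^ 2 = 0 := by rw [h2] at h1; linarith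
    have h4 : w = 0 := by
      rw [pow_eq_zero_iff (by norm_num : 2 ≠ 0), norm_eq_zero] at h3
      exact h3
    have h5 : x = c • u := by
      rw [hw] at h4
      linear_combination (norm := module) h4
    rw [h5]
    exact Submodule.mem_span_singleton.mpr ⟨c, rfl⟩
  · intro hx
    obtain ⟨c, rfl⟩ := Submodule.mem_span_singleton.mp hx
    show f (c • u) = c • u
    rw [map_smul, hfu]

lemma unit_fixed_finite (f : E3 ≃ₗᵢ[ℝ] E3) (hdet : LinearEquiv.det f.toLinearEquiv = 1)
    (hord : orderOf f = 6) : {v : E3 | ‖v‖ = 1 ∧ f v = v}.Finite := by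
  obtain ⟨u, hu, hfu⟩ := exists_unit_fixed f hdet
  apply Set.Finite.subset ((Set.finite_singleton (-u)).insert u)
  rintro v ⟨hv1, hvfix⟩
  have hsp : v ∈ (ℝ ∙ u : Submodule ℝ E3) := by
    have := fixed_eq_span f hord hu hfu
    have hv : v ∈ {x : E3 | f x = x} := hvfix
    rwa [this] at hv
  obtain ⟨c, rfl⟩ := Submodule.mem_span_singleton.mp hsp
  have : |c| = 1 := by
    rw [norm_smul, hu, mul_one] at hv1
    exact hv1
  rcases abs_eq (by norm_num : (0:ℝ) ≤ 1) |>.mp this with h | h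
  · rw [h, one_smul]; exact Set.mem_insert _ _
  · rw [h, neg_one_smul]
    exact Set.mem_insert_of_mem _ rfl

def liDet : (E3 ≃ₗᵢ[ℝ] E3) →* ℝˣ where
  toFun f := LinearEquiv.det f.toLinearEquiv
  map_one' := by
    show LinearEquiv.det (1 : E3 ≃ₗᵢ[ℝ] E3).toLinearEquiv = 1
    have h1 : (1 : E3 ≃ₗᵢ[ℝ] E3).toLinearEquiv = LinearEquiv.refl ℝ E3 := rfl
    rw [h1]
    exact map_one LinearEquiv.det
  map_mul' f g := by
    show LinearEquiv.det (f * g : E3 ≃ₗᵢ[ℝ] E3).toLinearEquiv =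
      LinearEquiv.det f.toLinearEquiv * LinearEquiv.det g.toLinearEquiv
    have h1 : (f * g : E3 ≃ₗᵢ[ℝ] E3).toLinearEquiv = f.toLinearEquiv * g.toLinearEquiv := rfl
    rw [h1]
    exact map_mul LinearEquiv.det _ _

theorem no_two_sixfold_axes
    (G : Subgroup (E3 ≃ₗᵢ[ℝ] E3)) (hG : Finite G)
    (g h : E3 ≃ₗᵢ[ℝ] E3) (hgG : g ∈ G) (hhG : h ∈ G)
    (hgdet : LinearEquiv.det g.toLinearEquiv = 1) (hgord : orderOf g = 6)
    (hhdet : LinearEquiv.det h.toLinearEquiv = 1) (hhord : orderOf h = 6) :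
    {x : E3 | g x = x} = {x : E3 | h x = x} := by
  classical
  by_contra hne
  obtain ⟨ug, hug, hgug⟩ := exists_unit_fixed g hgdet
  obtain ⟨uh, huh, hhuh⟩ := exists_unit_fixed h hhdet
  set S : Set E3 := {v | ‖v‖ = 1 ∧ ∃ k : E3 ≃ₗᵢ[ℝ] E3, k ∈ G ∧
    LinearEquiv.det k.toLinearEquiv = 1 ∧ orderOf k = 6 ∧ k v = v} with hS
  -- S is finite
  have hSfin : S.Finite := by
    have hGfin : (G : Set (E3 ≃ₗᵢ[ℝ] E3)).Finite := Set.toFinite _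
    have hsub : S ⊆ ⋃ k ∈ {k : E3 ≃ₗᵢ[ℝ] E3 | k ∈ G ∧
        LinearEquiv.det k.toLinearEquiv = 1 ∧ orderOf k = 6},
        {v : E3 | ‖v‖ = 1 ∧ k v = v} := by
      rintro v ⟨hv1, k, hkG, hkdet, hkord, hkv⟩
      exact Set.mem_biUnion ⟨hkG, hkdet, hkord⟩ ⟨hv1, hkv⟩
    refine Set.Finite.subset (Set.Finite.biUnion ?_ ?_) hsub
    · exact hGfin.subset fun k hk => hk.1
    · rintro k ⟨_, hkdet, hkord⟩
      exact unit_fixed_finite k hkdet hkord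
  -- the set of inner products between distinct axes
  set D : Set ℝ := {c | |c| < 1 ∧ ∃ v ∈ S, ∃ w ∈ S, ⟪v, w⟫ = c} with hD
  have hDfin : D.Finite := by
    apply Set.Finite.subset ((hSfin.prod hSfin).image fun p : E3 × E3 => ⟪p.1, p.2⟫)
    rintro c ⟨_, v, hv, w, hw, rfl⟩
    exact ⟨(v, w), ⟨hv, hw⟩, rfl⟩
  have hugS : ug ∈ S := ⟨hug, g, hgG, hgdet, hgord, hgug⟩
  have huhS : uh ∈ S := ⟨huh, h, hhG, hhdet, hhord, hhuh⟩
  have hDne : D.Nonempty := by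
    refine ⟨⟪ug, uh⟫, ?_, ug, hugS, uh, huhS, rfl⟩
    have hle : |⟪ug, uh⟫| ≤ 1 := by
      have := abs_real_inner_le_norm ug uh
      rwa [hug, huh, mul_one] at this
    rcases lt_or_eq_of_le hle with hlt | heq
    · exact hlt
    · exfalso
      have : |⟪ug, uh⟫ / (‖ug‖ * ‖uh‖)| = 1 := by
        rw [hug, huh, mul_one, div_one]
        exact heq
      obtain ⟨_, r, hr0, hr⟩ := (abs_real_inner_div_norm_mul_norm_eq_one_iff ug uh).mp this
      apply hne
      rw [fixed_eq_span g hgord hug hgug, fixed_eq_span h hhord huh hhuh, hr,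
        Submodule.span_singleton_smul_eq (IsUnit.mk0 r hr0) ug]
  -- maximal element of D
  obtain ⟨c, hcD, hcmax⟩ := Set.Finite.exists_maximalFor id D hDfin hDne
  obtain ⟨hc1, v, hvS, w, hwS, hvw⟩ := hcD
  obtain ⟨hv1, k, hkG, hkdet, hkord, hkv⟩ := hvS
  have hwS' := hwS
  obtain ⟨hw1, m, hmG, hmdet, hmord, hmw⟩ := hwS'
  have hvv : ⟪v, v⟫ = 1 := by rw [real_inner_self_eq_norm_sq, hv1]; norm_num
  have hww : ⟪w, w⟫ = 1 := by rw [real_inner_self_eq_norm_sq, hw1]; norm_num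
  have hwv : ⟪w, v⟫ = c := by rw [real_inner_comm, hvw]
  -- decompose w
  set w' := w - c • v with hw'
  have hperp : ⟪v, w'⟫ = 0 := by
    rw [hw', inner_sub_right, real_inner_smul_right, hvw, hvv]
    ring
  have hperp' : ⟪w', v⟫ = 0 := by rw [real_inner_comm]; exact hperp
  have hkw' : ⟪k w', w'⟫ = ‖w'‖ ^ 2 / 2 := half_inner k hkord hv1 hkv w' hperp
  have hnw' : ‖w'‖ ^ 2 = 1 - c ^ 2 := by
    rw [← real_inner_self_eq_norm_sq, hw', inner_sub_left, inner_sub_right, inner_sub_right,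
      real_inner_smul_left, real_inner_smul_left, real_inner_smul_right, real_inner_smul_right,
      hvw, hwv, hvv, hww]
    ring
  -- the key computation
  have hkww : ⟪k w, w⟫ = (1 + c ^ 2) / 2 := by
    have hwdec : w = w' + c • v := by rw [hw']; abel
    have hkperp : ⟪k w', v⟫ = 0 := by
      calc ⟪k w', v⟫ = ⟪k w', k v⟫ := by rw [hkv]
        _ = ⟪w', v⟫ := k.inner_map_map _ _
        _ = 0 := hperp'
    calc ⟪k w, w⟫ = ⟪k w' + c • v, w' + c • v⟫ := by
          conv_lhs => rw [hwdec]
          rw [map_add, map_smul, hkv]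
        _ = ⟪k w', w'⟫ + c * ⟪k w', v⟫ + (c * ⟪v, w'⟫ + c * (c * ⟪v, v⟫)) := by
          rw [inner_add_left, inner_add_right, inner_add_right, real_inner_smul_right,
            real_inner_smul_right, real_inner_smul_left, real_inner_smul_left]
        _ = (1 - c ^ 2) / 2 + c ^ 2 := by
          rw [hkw', hnw', hkperp, hperp, hvv]
          ring
        _ = (1 + c ^ 2) / 2 := by ring
  -- k w is an axis vector
  have hkwS : k w ∈ S := by
    refine ⟨by rw [k.norm_map, hw1], k * m * k⁻¹, ?_, ?_, ?_, ?_⟩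
    · exact mul_mem (mul_mem hkG hmG) (inv_mem hkG)
    · have := map_mul liDet (k * m) k⁻¹
      have h2 := map_mul liDet k m
      have h3 := map_inv liDet k
      show liDet (k * m * k⁻¹) = 1
      rw [this, h2, h3]
      show liDet k * liDet m * (liDet k)⁻¹ = 1
      have hk1 : liDet k = 1 := hkdet
      have hm1 : liDet m = 1 := hmdet
      rw [hk1, hm1]
      simp
    · have hsc : SemiconjBy k m (k * m * k⁻¹) := by
        unfold SemiconjBy
        group
      rw [← hsc.orderOf_eq, hmord]
    · show (k * m * k⁻¹) (k w) = k w
      rw [LinearIsometryEquiv.coe_mul, LinearIsometryEquiv.coe_mul, Function.comp_apply,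
        Function.comp_apply, LinearIsometryEquiv.coe_inv, k.symm_apply_apply, hmw]
  -- contradiction with maximality
  have hc2 : c ^ 2 < 1 := by
    rw [abs_lt] at hc1
    nlinarith
  have hcne : c ≠ 1 := by
    intro hceq
    rw [hceq] at hc1
    norm_num at hc1
  set c' := (1 + c ^ 2) / 2 with hc'
  have hc'D : c' ∈ D := by
    refine ⟨?_, w, hwS, k w, hkwS, ?_⟩
    · rw [abs_lt]
      constructor <;> nlinarith
    · rw [real_inner_comm]
      exact hkww
  have hlt : c < c' := by
    have h0 : 0 < (1 - c) ^ 2 := pow_two_pos_of_ne_zero (sub_ne_zero.mpr (Ne.symm hcne))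
    rw [hc']
    nlinarith
  have := hcmax hc'D (le_of_lt hlt)
  simp only [id] at this
  exact absurd this (not_le.mpr hlt)
end
end

section
/- Let C be the cube with vertex set V = {±1}³ ⊂ ℝ³ and let G(C) = {A ∈ O(3) : A(V) = V}. Let T = {(1,1,1), (1,−1,−1), (−1,1,−1), (−1,−1,1)} be a regular tetrahedron inscribed at alternating vertices of C. Let R ∈ G(C) be a plane reflection whose mirror contains a vertex of C (equivalently, R is the reflection in a plane spanned by a pair of opposite face diagonals of C). If S ∈ G(C) is a rotation of order 3 whose rotation axis is not contained in the mirror of R, then the subgroup of O(3) generated by R and S equals the full tetrahedral group {A ∈ O(3) : A(T) = T}, of order 24. -/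
/- STATEMENT 5: If R is a plane reflection in the symmetry group G(C) of the cube C with
vertex set V = {±1}³ whose mirror contains a vertex of C, and S ∈ G(C) is a rotation of
order 3 whose rotation axis is not contained in the mirror of R, then R and S generate the
full tetrahedral group {A ∈ O(3) : A(T) = T}, of order 24, where
T = {(1,1,1), (1,−1,−1), (−1,1,−1), (−1,−1,1)}. -/

noncomputable section

def pt (x y z : ℝ) : E3 := WithLp.toLp 2 ![x, y, z]

/-- The vertex set {±1}³ of the cube. -/
def cubeV : Set E3 := {v | ∀ i, v i = 1 ∨ v i = -1}

/-- The regular tetrahedron inscribed at alternating vertices of the cube. -/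
def tetT : Set E3 := {pt 1 1 1, pt 1 (-1) (-1), pt (-1) 1 (-1), pt (-1) (-1) 1}

open scoped RealInnerProductSpace

namespace Tet

@[simp] lemma pt0 (x y z : ℝ) : pt x y z 0 = x := rfl
@[simp] lemma pt1 (x y z : ℝ) : pt x y z 1 = y := rfl
@[simp] lemma pt2 (x y z : ℝ) : pt x y z 2 = z := rfl

lemma pt_eq_iff {a b c d e f : ℝ} : pt a b c = pt d e f ↔ a = d ∧ b = e ∧ c = f := by
  constructor
  · intro h
    exact ⟨congrArg (fun v : E3 => v 0) h, congrArg (fun v : E3 => v 1) h, congrArg (fun v : E3 => v 2) h⟩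
  · rintro ⟨rfl, rfl, rfl⟩; rfl

lemma veq (v : E3) : v = pt (v 0) (v 1) (v 2) := by
  ext i; fin_cases i <;> rfl

def t : Fin 4 → E3
  | ⟨0, _⟩ => pt 1 1 1
  | ⟨1, _⟩ => pt 1 (-1) (-1)
  | ⟨2, _⟩ => pt (-1) 1 (-1)
  | ⟨3, _⟩ => pt (-1) (-1) 1

def nT : Fin 4 → E3
  | ⟨0, _⟩ => pt (-1) (-1) (-1)
  | ⟨1, _⟩ => pt (-1) 1 1
  | ⟨2, _⟩ => pt 1 (-1) 1
  | ⟨3, _⟩ => pt 1 1 (-1)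

@[simp] lemma t0 : t 0 = pt 1 1 1 := rfl
@[simp] lemma t1 : t 1 = pt 1 (-1) (-1) := rfl
@[simp] lemma t2 : t 2 = pt (-1) 1 (-1) := rfl
@[simp] lemma t3 : t 3 = pt (-1) (-1) 1 := rfl

lemma pt_add (a b c d e f : ℝ) : pt a b c + pt d e f = pt (a+d) (b+e) (c+f) := by
  ext i; fin_cases i <;> simp [PiLp.add_apply]

lemma pt_neg (a b c : ℝ) : -pt a b c = pt (-a) (-b) (-c) := by
  ext i; fin_cases i <;> simp [PiLp.neg_apply]

lemma nT_eq_neg (i : Fin 4) : nT i = -(t i) := by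
  fin_cases i <;> simp [nT, t, pt_neg]

@[simp] lemma n0 : nT 0 = pt (-1) (-1) (-1) := rfl
@[simp] lemma n1 : nT 1 = pt (-1) 1 1 := rfl
@[simp] lemma n2 : nT 2 = pt 1 (-1) 1 := rfl
@[simp] lemma n3 : nT 3 = pt 1 1 (-1) := rfl

lemma t_inj : Function.Injective t := by
  intro i j h
  fin_cases i <;> fin_cases j <;> first
    | rfl
    | (exfalso; norm_num [t, pt_eq_iff] at h)

lemma n_inj : Function.Injective nT := by
  intro i j h
  fin_cases i <;> fin_cases j <;> first
    | rfl
    | (exfalso; norm_num [nT, pt_eq_iff] at h)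

lemma exists_fin4 (P : Fin 4 → Prop) : (∃ j, P j) ↔ P 0 ∨ P 1 ∨ P 2 ∨ P 3 := by
  constructor
  · rintro ⟨j, h⟩; fin_cases j <;> tauto
  · rintro (h|h|h|h) <;> exact ⟨_, h⟩

lemma mem_four (g : Fin 4 → E3) (x : E3) :
    x ∈ ({g 0, g 1, g 2, g 3} : Set E3) ↔ ∃ j, x = g j := by
  rw [exists_fin4]
  simp [Set.mem_insert_iff]

lemma tetT_eq : tetT = {t 0, t 1, t 2, t 3} := by
  simp [tetT]

def negT : Set E3 := {nT 0, nT 1, nT 2, nT 3}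

lemma mem_tetT_iff (x : E3) : x ∈ tetT ↔ ∃ j, x = t j := by
  rw [tetT_eq]; exact mem_four t x

lemma mem_negT_iff (x : E3) : x ∈ negT ↔ ∃ j, x = nT j := mem_four nT x

lemma t_mem (i : Fin 4) : t i ∈ tetT := (mem_tetT_iff _).mpr ⟨i, rfl⟩

end Tet
namespace Tet

def prod3 (v : E3) : ℝ := v 0 * v 1 * v 2

lemma t_mem_cube (i : Fin 4) : t i ∈ cubeV := by
  intro j
  fin_cases i <;> fin_cases j <;> norm_num [t, pt]

lemma prod_pm {v : E3} (hv : v ∈ cubeV) : prod3 v = 1 ∨ prod3 v = -1 := by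
  rcases hv 0 with h0|h0 <;> rcases hv 1 with h1|h1 <;> rcases hv 2 with h2|h2 <;>
    simp only [prod3, h0, h1, h2] <;> norm_num

lemma mem_t_of_cube {v : E3} (hv : v ∈ cubeV) (h : prod3 v = 1) : ∃ j, v = t j := by
  have e := veq v
  rcases hv 0 with h0|h0 <;> rcases hv 1 with h1|h1 <;> rcases hv 2 with h2|h2 <;>
    rw [h0, h1, h2] at e <;>
    first
      | exact ⟨0, e⟩ | exact ⟨1, e⟩ | exact ⟨2, e⟩ | exact ⟨3, e⟩
      | (exfalso; simp only [prod3, h0, h1, h2] at h; norm_num at h)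

lemma mem_n_of_cube {v : E3} (hv : v ∈ cubeV) (h : prod3 v = -1) : ∃ j, v = nT j := by
  have e := veq v
  rcases hv 0 with h0|h0 <;> rcases hv 1 with h1|h1 <;> rcases hv 2 with h2|h2 <;>
    rw [h0, h1, h2] at e <;>
    first
      | exact ⟨0, e⟩ | exact ⟨1, e⟩ | exact ⟨2, e⟩ | exact ⟨3, e⟩
      | (exfalso; simp only [prod3, h0, h1, h2] at h; norm_num at h)

lemma prod3_t (i : Fin 4) : prod3 (t i) = 1 := by
  fin_cases i <;> norm_num [prod3, t, pt, Matrix.cons_val_two, Matrix.tail_cons, Matrix.head_cons]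

lemma prod3_n (i : Fin 4) : prod3 (nT i) = -1 := by
  fin_cases i <;> norm_num [prod3, nT, pt, Matrix.cons_val_two, Matrix.tail_cons, Matrix.head_cons]

lemma t_ne_n (i j : Fin 4) : t i ≠ nT j := by
  intro h
  have h1 := prod3_t i
  rw [h, prod3_n j] at h1
  norm_num at h1

lemma inner_expand (v w : E3) :
    ⟪v, w⟫ = v 0 * w 0 + v 1 * w 1 + v 2 * w 2 := by
  simp [PiLp.inner_apply, RCLike.inner_apply, Fin.sum_univ_three]
  ring

lemma prod_eq_of_inner {v w : E3} (hv : v ∈ cubeV) (hw : w ∈ cubeV)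
    (h : ⟪v - w, v - w⟫ = 8) : prod3 v = prod3 w := by
  rw [inner_expand] at h
  simp only [PiLp.sub_apply] at h
  rcases hv 0 with h0|h0 <;> rcases hv 1 with h1|h1 <;> rcases hv 2 with h2|h2 <;>
  rcases hw 0 with g0|g0 <;> rcases hw 1 with g1|g1 <;> rcases hw 2 with g2|g2 <;>
    rw [h0, h1, h2, g0, g1, g2] at h <;>
    simp only [prod3, h0, h1, h2, g0, g1, g2] <;>
    (norm_num at h <;> norm_num)

lemma inner_tt (i j : Fin 4) : ⟪t i, t j⟫ = if i = j then 3 else -1 := by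
  fin_cases i <;> fin_cases j <;> rw [inner_expand] <;> norm_num [t, pt, Fin.ext_iff, Matrix.cons_val_two, Matrix.tail_cons, Matrix.head_cons]

lemma inner_sub_tt {i j : Fin 4} (h : i ≠ j) : ⟪t i - t j, t i - t j⟫ = 8 := by
  rw [inner_expand]
  simp only [PiLp.sub_apply]
  fin_cases i <;> fin_cases j <;> first
    | (exact absurd rfl h)
    | norm_num [t, pt, Matrix.cons_val_two, Matrix.tail_cons, Matrix.head_cons]

lemma sum_t : t 0 + t 1 + t 2 + t 3 = 0 := by
  ext i
  fin_cases i <;> simp [t, pt, PiLp.add_apply] <;> norm_num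

end Tet
namespace Tet

open Equiv

-- decidable facts about permutations of Fin 4
theorem pf1 : ∀ r s : Perm (Fin 4), r * r = 1 → r ≠ 1 → (∃ i, r i = i) →
    s ^ 3 = 1 → s ≠ 1 → (∃ i, s i = i ∧ r i ≠ i) →
    (∃ x, (r*s) x ≠ x ∧ ∀ y, (r*s) y ≠ y → ∃ k : Fin 4, ((r*s)^(k:ℕ)) x = y) := by decide

theorem pf2 : ∀ r s : Perm (Fin 4), r * r = 1 → r ≠ 1 → (∃ i, r i = i) →
    s ^ 3 = 1 → s ≠ 1 → (∃ i, s i = i ∧ r i ≠ i) →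
    (r*s).support = Finset.univ := by decide

theorem pf3 : ∀ r : Perm (Fin 4), r * r = 1 → r ≠ 1 → (∃ i, r i = i) →
    ∀ j, r j ≠ j → r = Equiv.swap j (r j) := by decide

theorem pf4 : ∀ s : Perm (Fin 4), s ^ 3 = 1 → s ≠ 1 → ∃ i, s i = i := by decide

theorem pf5 : ∀ s : Perm (Fin 4), s ^ 3 = 1 → s ≠ 1 → ∀ i₀, s i₀ = i₀ →
    ∀ m m', m ≠ i₀ → m' ≠ i₀ → (m' = m ∨ m' = s m ∨ m' = s (s m)) := by decide

theorem perm_cycle (r s : Perm (Fin 4)) (h1 : r * r = 1) (h2 : r ≠ 1) (h3 : ∃ i, r i = i)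
    (h4 : s ^ 3 = 1) (h5 : s ≠ 1) (h6 : ∃ i, s i = i ∧ r i ≠ i) :
    (r * s).IsCycle ∧ (r * s).support = Finset.univ := by
  obtain ⟨x, hx, hy⟩ := pf1 r s h1 h2 h3 h4 h5 h6
  refine ⟨⟨x, hx, fun y hyy => ?_⟩, pf2 r s h1 h2 h3 h4 h5 h6⟩
  obtain ⟨k, hk⟩ := hy y hyy
  exact ⟨(k : ℕ), by simpa using hk⟩

-- the symmetry group side
lemma mulG_apply (A B : E3 ≃ₗᵢ[ℝ] E3) (x : E3) : (A * B) x = A (B x) := rfl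

lemma image_four_eq (A : E3 ≃ₗᵢ[ℝ] E3) (g h : Fin 4 → E3)
    (hginj : Function.Injective g) (hhinj : Function.Injective h)
    (hmap : ∀ i, ∃ j, A (g i) = h j) :
    (⇑A) '' {g 0, g 1, g 2, g 3} = {h 0, h 1, h 2, h 3} := by
  choose f hf using hmap
  have hfinj : Function.Injective f := by
    intro i i' e
    apply hginj
    apply A.injective
    rw [hf, hf, e]
  have hfsurj : Function.Surjective f := Finite.surjective_of_injective hfinj
  ext x
  rw [mem_four]
  constructor
  · rintro ⟨y, hy, rfl⟩
    rw [mem_four] at hy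
    obtain ⟨i, rfl⟩ := hy
    exact ⟨f i, hf i⟩
  · rintro ⟨j, rfl⟩
    obtain ⟨i, rfl⟩ := hfsurj j
    exact ⟨g i, (mem_four g _).mpr ⟨i, rfl⟩, hf i⟩

lemma image_cube {A : E3 ≃ₗᵢ[ℝ] E3} (hA : (⇑A) '' cubeV = cubeV) {v : E3}
    (hv : v ∈ cubeV) : A v ∈ cubeV := by
  rw [← hA]; exact ⟨v, hv, rfl⟩

lemma image_tetT_cases {A : E3 ≃ₗᵢ[ℝ] E3} (hA : (⇑A) '' cubeV = cubeV) :
    (⇑A) '' tetT = tetT ∨ (⇑A) '' tetT = negT := by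
  have hmemV : ∀ i, A (t i) ∈ cubeV := fun i => image_cube hA (t_mem_cube i)
  have hprod : ∀ i, prod3 (A (t i)) = prod3 (A (t 0)) := by
    intro i
    rcases eq_or_ne i 0 with rfl | hi
    · rfl
    · refine prod_eq_of_inner (hmemV i) (hmemV 0) ?_
      rw [← map_sub, A.inner_map_map]
      exact inner_sub_tt hi
  rcases prod_pm (hmemV 0) with hp | hp
  · left
    rw [tetT_eq]
    rw [show ({t 0, t 1, t 2, t 3} : Set E3) = tetT from tetT_eq.symm]
    rw [tetT_eq]
    exact image_four_eq A t t t_inj t_inj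
      (fun i => mem_t_of_cube (hmemV i) ((hprod i).trans hp))
  · right
    rw [tetT_eq, negT]
    exact image_four_eq A t nT t_inj n_inj
      (fun i => mem_n_of_cube (hmemV i) ((hprod i).trans hp))

def stabT : Subgroup (E3 ≃ₗᵢ[ℝ] E3) where
  carrier := {A | (⇑A) '' tetT = tetT}
  one_mem' := by
    show ⇑(1 : E3 ≃ₗᵢ[ℝ] E3) '' tetT = tetT
    rw [LinearIsometryEquiv.coe_one, Set.image_id]
  mul_mem' := by
    intro a b ha hb
    show ⇑(a * b) '' tetT = tetT
    rw [LinearIsometryEquiv.coe_mul, Set.image_comp]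
    rw [show ⇑b '' tetT = tetT from hb, show ⇑a '' tetT = tetT from ha]
  inv_mem' := by
    intro a ha
    show ⇑a⁻¹ '' tetT = tetT
    have h1 : ⇑a '' tetT = tetT := ha
    conv_lhs => rw [← h1]
    rw [← Set.image_comp]
    have : (⇑a⁻¹ ∘ ⇑a) = id := by
      funext x
      exact a.symm_apply_apply x
    rw [this, Set.image_id]

lemma mem_stabT {A : E3 ≃ₗᵢ[ℝ] E3} : A ∈ stabT ↔ (⇑A) '' tetT = tetT := Iff.rfl

end Tet
namespace Tet

open Equiv

lemma S_mem_stabT {S : E3 ≃ₗᵢ[ℝ] E3} (hSC : (⇑S) '' cubeV = cubeV)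
    (hSord : orderOf S = 3) : S ∈ stabT := by
  rcases image_tetT_cases hSC with h | h
  · exact h
  exfalso
  have hneg : (⇑S) '' negT = tetT := by
    rw [negT, tetT_eq]
    apply image_four_eq S nT t n_inj t_inj
    intro i
    have h1 : S (t i) ∈ negT := by rw [← h]; exact ⟨t i, t_mem i, rfl⟩
    obtain ⟨j, hj⟩ := (mem_negT_iff _).mp h1
    refine ⟨j, ?_⟩
    rw [nT_eq_neg, map_neg, hj, nT_eq_neg, neg_neg]
  have h3 : S ^ 3 = 1 := by have h' := pow_orderOf_eq_one S; rwa [hSord] at h'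
  have e1 : (⇑(S^3)) '' tetT = ⇑S '' (⇑S '' (⇑S '' tetT)) := by
    rw [pow_succ, pow_succ, pow_one, LinearIsometryEquiv.coe_mul,
      LinearIsometryEquiv.coe_mul, Set.image_comp, Set.image_comp]
  rw [h, hneg, h, h3, LinearIsometryEquiv.coe_one, Set.image_id] at e1
  have := t_mem 0
  rw [e1, mem_negT_iff] at this
  obtain ⟨j, hj⟩ := this
  exact t_ne_n 0 j hj

lemma R_fix_t {R : E3 ≃ₗᵢ[ℝ] E3} (hRvert : ∃ v ∈ cubeV, R v = v) :
    ∃ j, R (t j) = t j := by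
  obtain ⟨v, hv, hRv⟩ := hRvert
  rcases prod_pm hv with hp | hp
  · obtain ⟨j, rfl⟩ := mem_t_of_cube hv hp
    exact ⟨j, hRv⟩
  · obtain ⟨j, hj⟩ := mem_n_of_cube hv hp
    refine ⟨j, ?_⟩
    subst hj
    rw [nT_eq_neg, map_neg] at hRv
    exact neg_injective hRv

lemma R_mem_stabT {R : E3 ≃ₗᵢ[ℝ] E3} (hRC : (⇑R) '' cubeV = cubeV)
    (hRvert : ∃ v ∈ cubeV, R v = v) : R ∈ stabT := by
  rcases image_tetT_cases hRC with h | h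
  · exact h
  exfalso
  obtain ⟨j, hj⟩ := R_fix_t hRvert
  have hmem : R (t j) ∈ negT := by rw [← h]; exact ⟨t j, t_mem j, rfl⟩
  rw [hj, mem_negT_iff] at hmem
  obtain ⟨k, hk⟩ := hmem
  exact t_ne_n j k hk

lemma t01 : t 0 + t 1 = pt 2 0 0 := by rw [t0, t1, pt_add]; norm_num
lemma t02 : t 0 + t 2 = pt 0 2 0 := by rw [t0, t2, pt_add]; norm_num
lemma t03 : t 0 + t 3 = pt 0 0 2 := by rw [t0, t3, pt_add]; norm_num

lemma decomp (v : E3) :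
    v = (v 0 / 2) • pt 2 0 0 + ((v 1 / 2) • pt 0 2 0 + (v 2 / 2) • pt 0 0 2) := by
  ext i
  fin_cases i <;>
    simp [PiLp.add_apply, PiLp.smul_apply, pt, smul_eq_mul] <;> ring

lemma agree_on_t {a b : E3 ≃ₗᵢ[ℝ] E3} (h : ∀ i, a (t i) = b (t i)) : a = b := by
  have h01 : a (pt 2 0 0) = b (pt 2 0 0) := by
    rw [← t01, map_add, map_add, h 0, h 1]
  have h02 : a (pt 0 2 0) = b (pt 0 2 0) := by
    rw [← t02, map_add, map_add, h 0, h 2]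
  have h03 : a (pt 0 0 2) = b (pt 0 0 2) := by
    rw [← t03, map_add, map_add, h 0, h 3]
  apply LinearIsometryEquiv.ext
  intro v
  rw [decomp v, map_add, map_add, map_smul, map_smul, map_smul,
    map_add, map_add, map_smul, map_smul, map_smul, h01, h02, h03]

lemma exists_idx (A : E3 ≃ₗᵢ[ℝ] E3) (hA : A ∈ stabT) (i : Fin 4) :
    ∃ j, A (t i) = t j := by
  have : A (t i) ∈ tetT := by rw [← mem_stabT.mp hA]; exact ⟨t i, t_mem i, rfl⟩
  exact (mem_tetT_iff _).mp this

def idx (A : ↥stabT) : Fin 4 → Fin 4 := fun i => (exists_idx A.1 A.2 i).choose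

lemma idx_spec (A : ↥stabT) (i : Fin 4) :
    (A : E3 ≃ₗᵢ[ℝ] E3) (t i) = t (idx A i) := (exists_idx A.1 A.2 i).choose_spec

lemma idx_inj (A : ↥stabT) : Function.Injective (idx A) := by
  intro i j e
  apply t_inj
  apply (A : E3 ≃ₗᵢ[ℝ] E3).injective
  rw [idx_spec, idx_spec, e]

def permOf (A : ↥stabT) : Perm (Fin 4) :=
  Equiv.ofBijective (idx A) ⟨idx_inj A, Finite.surjective_of_injective (idx_inj A)⟩

def φ : ↥stabT →* Perm (Fin 4) := MonoidHom.mk' permOf (by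
  intro a b
  refine Equiv.ext fun i => ?_
  show idx (a * b) i = idx a (idx b i)
  apply t_inj
  calc t (idx (a * b) i) = ((a * b : ↥stabT) : E3 ≃ₗᵢ[ℝ] E3) (t i) := (idx_spec _ _).symm
    _ = (a : E3 ≃ₗᵢ[ℝ] E3) ((b : E3 ≃ₗᵢ[ℝ] E3) (t i)) := rfl
    _ = (a : E3 ≃ₗᵢ[ℝ] E3) (t (idx b i)) := by rw [idx_spec]
    _ = t (idx a (idx b i)) := idx_spec _ _)

lemma φ_spec (A : ↥stabT) (i : Fin 4) :
    (A : E3 ≃ₗᵢ[ℝ] E3) (t i) = t (φ A i) := idx_spec A i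

lemma φ_inj : Function.Injective φ := by
  intro a b h
  apply Subtype.ext
  apply agree_on_t
  intro i
  rw [idx_spec a i, idx_spec b i]
  show t (φ a i) = t (φ b i)
  rw [h]

end Tet
namespace Tet

open Equiv

lemma fix_sub (S : E3 ≃ₗᵢ[ℝ] E3) (s : Perm (Fin 4))
    (hS : ∀ m, S (t m) = t (s m)) (hs3 : s ^ 3 = 1) (hs1 : s ≠ 1)
    (i₀ : Fin 4) (hi₀ : s i₀ = i₀) (x : E3) (hx : S x = x) :
    ∃ c : ℝ, x = c • t i₀ := by
  set g : Fin 4 → ℝ := fun m => ⟪x, t m⟫ with hg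
  have hgs : ∀ m, g (s m) = g m := by
    intro m
    show ⟪x, t (s m)⟫ = ⟪x, t m⟫
    calc ⟪x, t (s m)⟫ = ⟪S x, S (t m)⟫ := by rw [hS m, hx]
      _ = ⟪x, t m⟫ := S.inner_map_map x (t m)
  have hgeq : ∀ m m', m ≠ i₀ → m' ≠ i₀ → g m = g m' := by
    intro m m' hm hm'
    rcases pf5 s hs3 hs1 i₀ hi₀ m m' hm hm' with h | h | h
    · rw [h]
    · rw [h, hgs]
    · rw [h, hgs, hgs]
  have hsum : ∑ m, g m = 0 := by
    have e : ∑ m, g m = ⟪x, t 0 + t 1 + t 2 + t 3⟫ := by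
      rw [Fin.sum_univ_four]
      simp only [hg]
      rw [← inner_add_right, ← inner_add_right, ← inner_add_right]
    rw [e, sum_t, inner_zero_right]
  have hval : ∀ m, m ≠ i₀ → g m = -(g i₀) / 3 := by
    intro m hm
    have hall : ∀ y ∈ Finset.univ.erase i₀, g y = g m :=
      fun y hy => hgeq y m (Finset.ne_of_mem_erase hy) hm
    have hsplit : ∑ y ∈ Finset.univ.erase i₀, g y + g i₀ = ∑ y, g y :=
      Finset.sum_erase_add _ _ (Finset.mem_univ i₀)
    rw [Finset.sum_congr rfl hall, Finset.sum_const,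
      Finset.card_erase_of_mem (Finset.mem_univ _), hsum] at hsplit
    simp only [Finset.card_univ, Fintype.card_fin, nsmul_eq_mul] at hsplit
    push_cast at hsplit
    linarith
  refine ⟨g i₀ / 3, ?_⟩
  have hzero : ∀ m, ⟪x - (g i₀ / 3) • t i₀, t m⟫ = 0 := by
    intro m
    rw [inner_sub_left, real_inner_smul_left, inner_tt]
    rcases eq_or_ne m i₀ with rfl | hm
    · rw [if_pos rfl]
      show g m - _ = 0
      ring
    · rw [if_neg (Ne.symm hm)]
      show g m - g i₀ / 3 * (-1) = 0
      rw [hval m hm]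
      ring
  have hz : x - (g i₀ / 3) • t i₀ = 0 := by
    set z := x - (g i₀ / 3) • t i₀ with hzdef
    have e0 := hzero 0
    have e1 := hzero 1
    have e2 := hzero 2
    rw [inner_expand] at e0 e1 e2
    simp only [t0, t1, t2, pt0, pt1, pt2] at e0 e1 e2
    ext i
    have hz0 : (0 : E3) i = 0 := rfl
    rw [hz0]
    fin_cases i
    · show z 0 = 0; linarith
    · show z 1 = 0; linarith
    · show z 2 = 0; linarith
  have := sub_eq_zero.mp hz
  exact this

end Tet
open Tet Equiv

theorem reflection_and_threefold_rotation_generate_tetrahedral_group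
    (R S : E3 ≃ₗᵢ[ℝ] E3)
    -- R is a symmetry of the cube
    (hRC : (⇑R) '' cubeV = cubeV)
    -- R is a plane reflection: an involution whose fixed-point set (mirror) is 2-dimensional
    (hR2 : R * R = 1)
    (hRmirror : ∃ L : Submodule ℝ E3, Module.finrank ℝ L = 2 ∧ {x : E3 | R x = x} = (L : Set E3))
    -- the mirror of R contains a vertex of C
    (hRvert : ∃ v ∈ cubeV, R v = v)
    -- S is a symmetry of the cube and a rotation of order 3
    (hSC : (⇑S) '' cubeV = cubeV)
    (hSdet : LinearEquiv.det S.toLinearEquiv = 1)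
    (hSord : orderOf S = 3)
    -- the rotation axis of S is not contained in the mirror of R
    (haxis : ¬ ({x : E3 | S x = x} ⊆ {x : E3 | R x = x})) :
    (Subgroup.closure {R, S} : Set (E3 ≃ₗᵢ[ℝ] E3)) = {A : E3 ≃ₗᵢ[ℝ] E3 | (⇑A) '' tetT = tetT} ∧
      Nat.card {A : E3 ≃ₗᵢ[ℝ] E3 // (⇑A) '' tetT = tetT} = 24 := by

  have hRmem : R ∈ stabT := R_mem_stabT hRC hRvert
  have hSmem : S ∈ stabT := S_mem_stabT hSC hSord
  set R' : ↥stabT := ⟨R, hRmem⟩ with hR'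
  set S' : ↥stabT := ⟨S, hSmem⟩ with hS'
  set r : Perm (Fin 4) := φ R' with hrdef
  set s : Perm (Fin 4) := φ S' with hsdef
  have hR1 : R ≠ 1 := by
    rintro rfl
    obtain ⟨L, hL2, hLset⟩ := hRmirror
    have hLuniv : (L : Set E3) = Set.univ := by
      rw [← hLset]
      ext x
      simp [LinearIsometryEquiv.coe_one]
    have hLtop : L = ⊤ := by
      apply Submodule.eq_top_iff'.mpr
      intro x
      have : x ∈ (L : Set E3) := by rw [hLuniv]; trivial
      exact this
    rw [hLtop, finrank_top] at hL2
    rw [finrank_euclideanSpace_fin] at hL2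
    norm_num at hL2
  have hr2 : r * r = 1 := by
    have h1 : R' * R' = 1 := Subtype.ext hR2
    rw [hrdef, ← map_mul, h1, map_one]
  have hr1 : r ≠ 1 := by
    intro h
    apply hR1
    have h2 : R' = 1 := φ_inj (by rw [map_one]; exact h)
    exact congrArg Subtype.val h2
  have hordS' : orderOf S' = 3 := by
    have h1 := orderOf_injective stabT.subtype stabT.subtype_injective S'
    have h2 : stabT.subtype S' = S := rfl
    rw [h2] at h1
    rw [← h1, hSord]
  have hords : orderOf s = 3 := by
    rw [hsdef, orderOf_injective φ φ_inj S', hordS']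
  have hs3 : s ^ 3 = 1 := by
    have h := pow_orderOf_eq_one s
    rwa [hords] at h
  have hs1 : s ≠ 1 := by
    intro h
    rw [h, orderOf_one] at hords
    norm_num at hords
  have hSpec : ∀ m, S (t m) = t (s m) := fun m => φ_spec S' m
  have hRspec : ∀ m, R (t m) = t (r m) := fun m => φ_spec R' m
  have hrfix : ∃ i, r i = i := by
    obtain ⟨j, hj⟩ := R_fix_t hRvert
    exact ⟨j, t_inj (by rw [← hRspec j, hj])⟩
  have hmove : ∃ i, s i = i ∧ r i ≠ i := by
    obtain ⟨i₀, hi₀⟩ := pf4 s hs3 hs1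
    refine ⟨i₀, hi₀, ?_⟩
    intro hri
    obtain ⟨x, hxS, hxR⟩ := Set.not_subset.mp haxis
    obtain ⟨c, rfl⟩ := fix_sub S s hSpec hs3 hs1 i₀ hi₀ x hxS
    apply hxR
    show R (c • t i₀) = c • t i₀
    rw [map_smul, hRspec i₀, hri]
  obtain ⟨hcyc, hsup⟩ := perm_cycle r s hr2 hr1 hrfix hs3 hs1 hmove
  obtain ⟨i₀, hi₀s, hi₀r⟩ := hmove
  have hswap : Equiv.swap i₀ ((r * s) i₀) = r := by
    have h1 : (r * s) i₀ = r i₀ := by rw [Perm.mul_apply, hi₀s]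
    rw [h1]
    exact (pf3 r hr2 hr1 hrfix i₀ hi₀r).symm
  have htop : Subgroup.closure ({r * s, r} : Set (Perm (Fin 4))) = ⊤ := by
    have h := Perm.closure_cycle_adjacent_swap hcyc hsup i₀
    rwa [hswap] at h
  have htop2 : Subgroup.closure ({r, s} : Set (Perm (Fin 4))) = ⊤ := by
    rw [eq_top_iff, ← htop]
    rw [Subgroup.closure_le]
    rintro x (rfl | rfl)
    · exact Subgroup.mul_mem _ (Subgroup.subset_closure (by simp))
        (Subgroup.subset_closure (by simp))
    · exact Subgroup.subset_closure (by simp)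
  have hmaptop : (Subgroup.closure ({R', S'} : Set ↥stabT)).map φ = ⊤ := by
    rw [MonoidHom.map_closure, Set.image_pair]
    exact htop2
  haveI : Finite ↥stabT := Finite.of_injective φ φ_inj
  have cardPerm : Nat.card (Perm (Fin 4)) = 24 := by
    rw [Nat.card_eq_fintype_card, Fintype.card_perm, Fintype.card_fin]
    norm_num [Nat.factorial]
  have cardc : Nat.card (Subgroup.closure ({R', S'} : Set ↥stabT)) = 24 := by
    rw [Nat.card_congr ((Subgroup.closure ({R', S'} : Set ↥stabT)).equivMapOfInjective φ φ_inj).toEquiv]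
    rw [hmaptop, Subgroup.card_top, cardPerm]
  have cardstab_le : Nat.card ↥stabT ≤ 24 := by
    rw [← cardPerm]
    exact Nat.card_le_card_of_injective φ φ_inj
  have cardc_le : Nat.card (Subgroup.closure ({R', S'} : Set ↥stabT)) ≤ Nat.card ↥stabT :=
    Nat.card_le_card_of_injective _ Subtype.val_injective
  have cardstab : Nat.card ↥stabT = 24 := le_antisymm cardstab_le (by omega)
  have ctop : Subgroup.closure ({R', S'} : Set ↥stabT) = ⊤ :=
    Subgroup.eq_top_of_card_eq _ (by rw [cardc, cardstab])
  have hclosure : Subgroup.closure ({R, S} : Set (E3 ≃ₗᵢ[ℝ] E3)) = stabT := by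
    apply le_antisymm
    · rw [Subgroup.closure_le]
      rintro x (rfl | rfl)
      · exact hRmem
      · exact hSmem
    · intro A hA
      have hmem : (⟨A, hA⟩ : ↥stabT) ∈ Subgroup.closure ({R', S'} : Set ↥stabT) := by
        rw [ctop]; trivial
      have h2 : stabT.subtype ⟨A, hA⟩ ∈
          (Subgroup.closure ({R', S'} : Set ↥stabT)).map stabT.subtype := ⟨_, hmem, rfl⟩
      rw [MonoidHom.map_closure, Set.image_pair] at h2
      exact h2
  constructor
  · rw [hclosure]; rfl
  · rw [← cardstab]
    exact Nat.card_congr (Equiv.subtypeEquivRight fun A => Iff.rfl)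
end
end

section
/- Let W be the group of all isometries g of ℝ³ with g(ℤ³) = ℤ³ (the symmetry group [4,3,4] of the cubical tessellation {4,3,4}). Define the isometries T₀(x,y,z) = (1−x, y, z), T₁(x,y,z) = (y, x, z), T₂(x,y,z) = (x, z, y), T₃(x,y,z) = (x, y, −z). Then T₀, T₁, T₂, T₃ generate W, and the subgroup H of W generated by T₀T₃, T₁, T₂, and T₃T₂T₃ has index 2 in W; moreover T₃ ∉ H. -/
/- STATEMENT 6: Let W be the group of all isometries g of ℝ³ with g(ℤ³) = ℤ³. With
T₀(x,y,z) = (1−x, y, z), T₁(x,y,z) = (y, x, z), T₂(x,y,z) = (x, z, y), T₃(x,y,z) = (x, y, −z),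
the isometries T₀, T₁, T₂, T₃ generate W, and the subgroup H generated by
T₀T₃, T₁, T₂, T₃T₂T₃ has index 2 in W; moreover T₃ ∉ H. -/

noncomputable section

/-- The set ℤ³ of integer points of ℝ³. -/
def Z3 : Set E3 := {x | ∀ i, ∃ m : ℤ, x i = (m : ℝ)}

open Equiv

lemma sgn_sq (u : ℤˣ) : ((u : ℤ) : ℝ) * ((u : ℤ) : ℝ) = 1 := by
  rcases Int.units_eq_one_or u with h | h <;> simp [h]

/-- signed-permutation affine map -/
def Msig (b : Fin 3 → ℤ) (ε : Fin 3 → ℤˣ) (σ : Equiv.Perm (Fin 3)) : E3 ≃ᵢ E3 where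
  toFun x := WithLp.toLp 2 fun i => (b i : ℝ) + ((ε i : ℤ) : ℝ) * x (σ i)
  invFun y := WithLp.toLp 2 fun j => ((ε (σ⁻¹ j) : ℤ) : ℝ) * (y (σ⁻¹ j) - (b (σ⁻¹ j) : ℝ))
  left_inv x := by
    ext j
    beta_reduce
    simp only [PiLp.toLp_apply]
    have hx : σ (σ⁻¹ j) = j := σ.apply_symm_apply j
    rw [hx]
    have h := sgn_sq (ε (σ⁻¹ j))
    linear_combination (x j) * h
  right_inv y := by
    ext i
    beta_reduce
    simp only [PiLp.toLp_apply]
    have key : σ⁻¹ (σ i) = i := σ.symm_apply_apply i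
    rw [key]
    have h := sgn_sq (ε i)
    linear_combination (y i - (b i : ℝ)) * h
  isometry_toFun := by
    intro x y
    simp only [edist_dist]
    congr 1
    rw [EuclideanSpace.dist_eq, EuclideanSpace.dist_eq]
    congr 1
    rw [← Equiv.sum_comp σ (fun j => dist (x j) (y j) ^ 2)]
    refine Finset.sum_congr rfl fun i _ => ?_
    simp only [Real.dist_eq]
    have : (b i : ℝ) + ((ε i : ℤ) : ℝ) * x (σ i) - ((b i : ℝ) + ((ε i : ℤ) : ℝ) * y (σ i))
        = ((ε i : ℤ) : ℝ) * (x (σ i) - y (σ i)) := by ring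
    rw [this, abs_mul]
    rcases Int.units_eq_one_or (ε i) with h | h <;> simp [h]

theorem msig_apply (b : Fin 3 → ℤ) (ε : Fin 3 → ℤˣ) (σ : Equiv.Perm (Fin 3)) (x : E3) (i : Fin 3) :
    Msig b ε σ x i = (b i : ℝ) + ((ε i : ℤ) : ℝ) * x (σ i) := rfl

theorem msig_mul (b b' : Fin 3 → ℤ) (ε ε' : Fin 3 → ℤˣ) (σ σ' : Equiv.Perm (Fin 3)) :
    Msig b ε σ * Msig b' ε' σ' =
      Msig (fun i => b i + ε i * b' (σ i)) (fun i => ε i * ε' (σ i)) (σ.trans σ') := by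
  refine IsometryEquiv.ext fun x => ?_
  ext i
  show Msig b ε σ (Msig b' ε' σ' x) i = _
  simp only [msig_apply, Equiv.trans_apply]
  push_cast
  ring

theorem msig_one : Msig 0 1 1 = 1 := by
  refine IsometryEquiv.ext fun x => ?_
  ext i
  simp [msig_apply]

theorem msig_inv (b : Fin 3 → ℤ) (ε : Fin 3 → ℤˣ) (σ : Equiv.Perm (Fin 3)) :
    (Msig b ε σ)⁻¹ = Msig (fun j => -(ε (σ⁻¹ j) * b (σ⁻¹ j))) (fun j => ε (σ⁻¹ j)) σ⁻¹ := by
  symm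
  rw [eq_inv_iff_mul_eq_one, msig_mul]
  have h1 : (fun i => -(ε (σ⁻¹ i) * b (σ⁻¹ i)) + ε (σ⁻¹ i) * b (σ⁻¹ i)) = (0 : Fin 3 → ℤ) := by
    funext i; simp
  have h2 : (fun i => ε (σ⁻¹ i) * ε (σ⁻¹ i)) = (1 : Fin 3 → ℤˣ) := by
    funext i; exact Int.units_mul_self _
  have h3 : (σ⁻¹ : Equiv.Perm (Fin 3)).trans σ = 1 := by
    ext i; simp
  calc Msig (fun i => -(ε (σ⁻¹ i) * b (σ⁻¹ i)) + ε (σ⁻¹ i) * b ((σ⁻¹ : Equiv.Perm (Fin 3)) i))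
        (fun i => ε (σ⁻¹ i) * ε ((σ⁻¹ : Equiv.Perm (Fin 3)) i)) ((σ⁻¹ : Equiv.Perm (Fin 3)).trans σ)
      = Msig 0 1 1 := by rw [h3]; congr 1
    _ = 1 := msig_one

theorem msig_inj {b b' : Fin 3 → ℤ} {ε ε' : Fin 3 → ℤˣ} {σ σ' : Equiv.Perm (Fin 3)}
    (h : Msig b ε σ = Msig b' ε' σ') : b = b' ∧ ε = ε' ∧ σ = σ' := by
  have hx : ∀ (x : E3) (i : Fin 3),
      (b i : ℝ) + ((ε i : ℤ) : ℝ) * x (σ i) = (b' i : ℝ) + ((ε' i : ℤ) : ℝ) * x (σ' i) := by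
    intro x i
    have := congrArg (fun g : E3 ≃ᵢ E3 => g x i) h
    simpa [msig_apply] using this
  have hb : b = b' := by
    funext i
    have := hx 0 i
    have h0 : ∀ j, (0 : E3) j = 0 := fun _ => rfl
    rw [h0, h0] at this
    simp at this
    exact_mod_cast this
  refine ⟨hb, ?_, ?_⟩
  · funext i
    have := hx (WithLp.toLp 2 (fun k => if k = σ i then (1:ℝ) else 0)) i
    rw [hb] at this
    by_cases hc : σ' i = σ i
    · simp only [hc, eq_self_iff_true, if_true] at this
      have : ((ε i : ℤ) : ℝ) = ((ε' i : ℤ) : ℝ) := by linarith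
      have : (ε i : ℤ) = (ε' i : ℤ) := by exact_mod_cast this
      exact Units.ext this
    · simp only [eq_self_iff_true, if_true, if_neg hc] at this
      have : ((ε i : ℤ) : ℝ) = 0 := by linarith
      have h2 : (ε i : ℤ) = 0 := by exact_mod_cast this
      rcases Int.units_eq_one_or (ε i) with h | h <;> rw [h] at h2 <;> norm_num at h2
  · ext i
    have := hx (WithLp.toLp 2 (fun k => if k = σ i then (1:ℝ) else 0)) i
    rw [hb] at this
    by_cases hc : σ' i = σ i
    · rw [hc]
    · simp only [eq_self_iff_true, if_true, if_neg hc] at this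
      have : ((ε i : ℤ) : ℝ) = 0 := by linarith
      have h2 : (ε i : ℤ) = 0 := by exact_mod_cast this
      rcases Int.units_eq_one_or (ε i) with h | h <;> rw [h] at h2 <;> norm_num at h2

theorem msig_maps_Z3 (b : Fin 3 → ℤ) (ε : Fin 3 → ℤˣ) (σ : Equiv.Perm (Fin 3))
    {x : E3} (hx : x ∈ Z3) : Msig b ε σ x ∈ Z3 := by
  intro i
  obtain ⟨m, hm⟩ := hx (σ i)
  exact ⟨b i + ε i * m, by rw [msig_apply, hm]; push_cast; ring⟩

theorem msig_image_Z3 (b : Fin 3 → ℤ) (ε : Fin 3 → ℤˣ) (σ : Equiv.Perm (Fin 3)) :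
    ⇑(Msig b ε σ) '' Z3 = Z3 := by
  apply Set.eq_of_subset_of_subset
  · rintro y ⟨x, hx, rfl⟩
    exact msig_maps_Z3 b ε σ hx
  · intro y hy
    refine ⟨(Msig b ε σ)⁻¹ y, ?_, IsometryEquiv.apply_inv_self _ _⟩
    rw [msig_inv]
    exact msig_maps_Z3 _ _ _ hy

abbrev G' := E3 ≃ᵢ E3

def G0 : G' := Msig ![1,0,0] ![-1,1,-1] 1
def G1 : G' := Msig 0 1 (Equiv.swap 0 1)
def G2 : G' := Msig 0 1 (Equiv.swap 1 2)
def G3 : G' := Msig 0 ![1,-1,-1] (Equiv.swap 1 2)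

def Hgrp : Subgroup G' := Subgroup.closure {G0, G1, G2, G3}

theorem perm_in_closure (σ : Equiv.Perm (Fin 3)) :
    σ ∈ Subgroup.closure ({Equiv.swap 0 1, Equiv.swap 1 2} : Set (Equiv.Perm (Fin 3))) := by
  have h : σ ∈ Subgroup.closure {τ : Equiv.Perm (Fin 3) | τ.IsSwap} := by
    rw [Equiv.Perm.closure_isSwap]; trivial
  refine (Subgroup.closure_le _).2 ?_ h
  rintro τ ⟨a, b, hab, rfl⟩
  have h01 : Equiv.swap (0:Fin 3) 1 ∈ Subgroup.closure ({Equiv.swap 0 1, Equiv.swap 1 2} : Set (Equiv.Perm (Fin 3))) :=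
    Subgroup.subset_closure (Set.mem_insert _ _)
  have h12 : Equiv.swap (1:Fin 3) 2 ∈ Subgroup.closure ({Equiv.swap 0 1, Equiv.swap 1 2} : Set (Equiv.Perm (Fin 3))) :=
    Subgroup.subset_closure (Set.mem_insert_of_mem _ rfl)
  have h02 : Equiv.swap (0:Fin 3) 2 = Equiv.swap 0 1 * Equiv.swap 1 2 * Equiv.swap 0 1 := by decide
  have h10 : Equiv.swap (1:Fin 3) 0 ∈ Subgroup.closure ({Equiv.swap 0 1, Equiv.swap 1 2} : Set (Equiv.Perm (Fin 3))) := by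
    rw [Equiv.swap_comm (1:Fin 3) 0]; exact h01
  have h21 : Equiv.swap (2:Fin 3) 1 ∈ Subgroup.closure ({Equiv.swap 0 1, Equiv.swap 1 2} : Set (Equiv.Perm (Fin 3))) := by
    rw [Equiv.swap_comm (2:Fin 3) 1]; exact h12
  have h02' : Equiv.swap (0:Fin 3) 2 ∈ Subgroup.closure ({Equiv.swap 0 1, Equiv.swap 1 2} : Set (Equiv.Perm (Fin 3))) := by
    rw [h02]; exact mul_mem (mul_mem h01 h12) h01
  have h20 : Equiv.swap (2:Fin 3) 0 ∈ Subgroup.closure ({Equiv.swap 0 1, Equiv.swap 1 2} : Set (Equiv.Perm (Fin 3))) := by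
    rw [Equiv.swap_comm (2:Fin 3) 0]; exact h02'
  fin_cases a <;> fin_cases b <;>
    first
      | exact absurd rfl hab
      | exact h01
      | exact h12
      | exact h10
      | exact h21
      | exact h02'
      | exact h20

theorem msig_perm_mem (σ : Equiv.Perm (Fin 3)) : Msig 0 1 σ ∈ Hgrp := by
  have h := perm_in_closure σ
  induction h using Subgroup.closure_induction with
  | mem τ hτ =>
    rcases hτ with h | h
    · rw [h]; exact Subgroup.subset_closure (by simp [G1, Hgrp])
    · rw [h]; exact Subgroup.subset_closure (by simp [G2, Hgrp])
  | one => rw [msig_one]; exact one_mem _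
  | mul τ τ' _ _ hm hm' =>
    have : Msig 0 1 (τ * τ') = Msig 0 1 τ' * Msig 0 1 τ := by
      rw [msig_mul]
      congr 1 <;> first | rfl | (funext i; simp)
    rw [this]; exact mul_mem hm' hm
  | inv τ _ hm =>
    have : Msig 0 1 τ⁻¹ = (Msig 0 1 τ)⁻¹ := by
      rw [msig_inv]
      congr 1 <;> first | rfl | (funext i; simp)
    rw [this]; exact inv_mem hm

theorem msig_conj_sign (d : Fin 3 → ℤˣ) (τ : Equiv.Perm (Fin 3)) (hd : Msig 0 d 1 ∈ Hgrp) :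
    Msig 0 (fun i => d (τ i)) 1 ∈ Hgrp := by
  have key : Msig 0 (fun i => d (τ i)) 1 = Msig 0 1 τ * Msig 0 d 1 * (Msig 0 1 τ)⁻¹ := by
    rw [msig_inv, msig_mul, msig_mul]
    congr 1 <;> first | rfl | (funext i; simp) | (ext i; simp)
  rw [key]
  exact mul_mem (mul_mem (msig_perm_mem τ) hd) (inv_mem (msig_perm_mem τ))

theorem msig_d12_mem : Msig 0 ![1,-1,-1] 1 ∈ Hgrp := by
  have key : Msig 0 ![1,-1,-1] 1 = G3 * G2 := by
    rw [G3, G2, msig_mul]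
    congr 1 <;> first | rfl | (funext i; simp) | (ext i; simp)
  rw [key]
  exact mul_mem (Subgroup.subset_closure (by simp [Hgrp])) (Subgroup.subset_closure (by simp [Hgrp]))

theorem msig_sign_mem (ε : Fin 3 → ℤˣ) (h : ε 0 * ε 1 * ε 2 = 1) : Msig 0 ε 1 ∈ Hgrp := by
  rcases Int.units_eq_one_or (ε 0) with h0 | h0 <;>
  rcases Int.units_eq_one_or (ε 1) with h1 | h1 <;>
  rcases Int.units_eq_one_or (ε 2) with h2 | h2 <;>
  rw [h0, h1, h2] at h <;> first
  | (exfalso; revert h; decide)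
  | (have he : ε = 1 := by funext i; fin_cases i <;> assumption
     rw [he, msig_one]; exact one_mem _)
  | (have he : ε = ![1,-1,-1] := by funext i; fin_cases i <;> simp [h0, h1, h2]
     rw [he]; exact msig_d12_mem)
  | (have he : ε = fun i => ![(1:ℤˣ),-1,-1] (Equiv.swap 0 1 i) := by
       funext i; fin_cases i <;> simp [h0, h1, h2, Equiv.swap_apply_def] <;> decide
     rw [he]; exact msig_conj_sign _ _ msig_d12_mem)
  | (have he : ε = fun i => ![(1:ℤˣ),-1,-1] (Equiv.swap 0 2 i) := by
       funext i; fin_cases i <;> simp [h0, h1, h2, Equiv.swap_apply_def] <;> decide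
     rw [he]; exact msig_conj_sign _ _ msig_d12_mem)

theorem msig_conj_trans (c : Fin 3 → ℤ) (τ : Equiv.Perm (Fin 3)) (hc : Msig c 1 1 ∈ Hgrp) :
    Msig (fun i => c (τ i)) 1 1 ∈ Hgrp := by
  have key : Msig (fun i => c (τ i)) 1 1 = Msig 0 1 τ * Msig c 1 1 * (Msig 0 1 τ)⁻¹ := by
    rw [msig_inv, msig_mul, msig_mul]
    congr 1 <;> first | rfl | (funext i; simp) | (ext i; simp)
  rw [key]
  exact mul_mem (mul_mem (msig_perm_mem τ) hc) (inv_mem (msig_perm_mem τ))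

theorem msig_e0_mem : Msig ![1,0,0] 1 1 ∈ Hgrp := by
  have key : Msig ![1,0,0] 1 1 = G0 * Msig 0 ![-1,1,-1] 1 := by
    rw [G0, msig_mul]
    congr 1 <;> first | rfl | (funext i; fin_cases i <;> first | simp | decide)
  rw [key]
  refine mul_mem (Subgroup.subset_closure (by simp [Hgrp])) (msig_sign_mem _ (by decide))

def trA : AddSubgroup (Fin 3 → ℤ) where
  carrier := {c | Msig c 1 1 ∈ Hgrp}
  zero_mem' := by
    have : Msig (0 : Fin 3 → ℤ) 1 1 = 1 := msig_one
    simp only [Set.mem_setOf_eq, this]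
    exact one_mem _
  add_mem' := by
    intro a b ha hb
    simp only [Set.mem_setOf_eq] at *
    have key : Msig (a + b) 1 1 = Msig a 1 1 * Msig b 1 1 := by
      rw [msig_mul]
      congr 1 <;> first | rfl | (funext i; simp) | (ext i; simp)
    rw [key]; exact mul_mem ha hb
  neg_mem' := by
    intro a ha
    simp only [Set.mem_setOf_eq] at *
    have key : Msig (-a) 1 1 = (Msig a 1 1)⁻¹ := by
      rw [msig_inv]
      congr 1 <;> first | rfl | (funext i; simp) | (ext i; simp)
    rw [key]; exact inv_mem ha

theorem msig_trans_mem (c : Fin 3 → ℤ) : Msig c 1 1 ∈ Hgrp := by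
  have h0 : (![1,0,0] : Fin 3 → ℤ) ∈ trA := msig_e0_mem
  have h1 : (![0,1,0] : Fin 3 → ℤ) ∈ trA := by
    have : (![0,1,0] : Fin 3 → ℤ) = fun i => ![1,0,0] (Equiv.swap 0 1 i) := by
      funext i; fin_cases i <;> decide
    show Msig _ 1 1 ∈ Hgrp
    rw [this]
    exact msig_conj_trans _ _ h0
  have h2 : (![0,0,1] : Fin 3 → ℤ) ∈ trA := by
    have : (![0,0,1] : Fin 3 → ℤ) = fun i => ![1,0,0] (Equiv.swap 0 2 i) := by
      funext i; fin_cases i <;> decide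
    show Msig _ 1 1 ∈ Hgrp
    rw [this]
    exact msig_conj_trans _ _ h0
  have hc : c = c 0 • ![1,0,0] + c 1 • ![0,1,0] + c 2 • ![0,0,1] := by
    funext i; fin_cases i <;> simp
  have : c ∈ trA := by
    rw [hc]
    exact add_mem (add_mem (zsmul_mem h0 _) (zsmul_mem h1 _)) (zsmul_mem h2 _)
  exact this

theorem msig_even_mem (b : Fin 3 → ℤ) (ε : Fin 3 → ℤˣ) (σ : Equiv.Perm (Fin 3))
    (h : ε 0 * ε 1 * ε 2 = 1) : Msig b ε σ ∈ Hgrp := by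
  have key : Msig b ε σ = Msig b 1 1 * Msig 0 ε 1 * Msig 0 1 σ := by
    rw [msig_mul, msig_mul]
    congr 1 <;> first | rfl | (funext i; simp) | (ext i; simp)
  rw [key]
  exact mul_mem (mul_mem (msig_trans_mem b) (msig_sign_mem ε h)) (msig_perm_mem σ)

theorem prod3_comp (f : Fin 3 → ℤˣ) (σ : Equiv.Perm (Fin 3)) :
    f (σ 0) * f (σ 1) * f (σ 2) = f 0 * f 1 * f 2 := by
  have h := Equiv.prod_comp σ f
  rw [Fin.prod_univ_three, Fin.prod_univ_three] at h
  exact h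

def Kgrp : Subgroup G' where
  carrier := {g | ∃ b ε σ, g = Msig b ε σ ∧ ε 0 * ε 1 * ε 2 = 1}
  one_mem' := ⟨0, 1, 1, msig_one.symm, by decide⟩
  mul_mem' := by
    rintro g g' ⟨b, ε, σ, rfl, h⟩ ⟨b', ε', σ', rfl, h'⟩
    refine ⟨_, _, _, msig_mul b b' ε ε' σ σ', ?_⟩
    show (ε 0 * ε' (σ 0)) * (ε 1 * ε' (σ 1)) * (ε 2 * ε' (σ 2)) = 1
    have := prod3_comp ε' σ
    calc (ε 0 * ε' (σ 0)) * (ε 1 * ε' (σ 1)) * (ε 2 * ε' (σ 2))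
        = (ε 0 * ε 1 * ε 2) * (ε' (σ 0) * ε' (σ 1) * ε' (σ 2)) := Units.ext (by push_cast; ring)
      _ = 1 := by rw [this, h, h', one_mul]
  inv_mem' := by
    rintro g ⟨b, ε, σ, rfl, h⟩
    refine ⟨_, _, _, msig_inv b ε σ, ?_⟩
    show ε (σ⁻¹ 0) * ε (σ⁻¹ 1) * ε (σ⁻¹ 2) = 1
    rw [prod3_comp ε σ⁻¹, h]

theorem Hgrp_le_Kgrp : Hgrp ≤ Kgrp := by
  rw [Hgrp]
  refine (Subgroup.closure_le _).2 ?_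
  rintro g (rfl | rfl | rfl | rfl)
  · exact ⟨_, _, _, rfl, by decide⟩
  · exact ⟨_, _, _, rfl, by decide⟩
  · exact ⟨_, _, _, rfl, by decide⟩
  · exact ⟨_, _, _, rfl, by decide⟩

theorem M3_not_mem_Kgrp : Msig 0 ![1,1,-1] 1 ∉ Kgrp := by
  rintro ⟨b, ε, σ, heq, h⟩
  obtain ⟨-, hε, -⟩ := msig_inj heq
  rw [← hε] at h
  revert h; decide

theorem M3_not_mem_Hgrp : Msig 0 ![1,1,-1] 1 ∉ Hgrp :=
  fun h => M3_not_mem_Kgrp (Hgrp_le_Kgrp h)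

theorem int3 (a b c : ℤ) (h : a^2 + b^2 + c^2 = 1) :
    ((a = 1 ∨ a = -1) ∧ b = 0 ∧ c = 0) ∨ (a = 0 ∧ (b = 1 ∨ b = -1) ∧ c = 0) ∨
      (a = 0 ∧ b = 0 ∧ (c = 1 ∨ c = -1)) := by
  have ha : a^2 ≤ 1 := by nlinarith [sq_nonneg b, sq_nonneg c]
  have hb : b^2 ≤ 1 := by nlinarith [sq_nonneg a, sq_nonneg c]
  have hc : c^2 ≤ 1 := by nlinarith [sq_nonneg a, sq_nonneg b]
  have ha' : -1 ≤ a ∧ a ≤ 1 := ⟨by nlinarith [sq_nonneg (a+1)], by nlinarith [sq_nonneg (a-1)]⟩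
  have hb' : -1 ≤ b ∧ b ≤ 1 := ⟨by nlinarith [sq_nonneg (b+1)], by nlinarith [sq_nonneg (b-1)]⟩
  have hc' : -1 ≤ c ∧ c ≤ 1 := ⟨by nlinarith [sq_nonneg (c+1)], by nlinarith [sq_nonneg (c-1)]⟩
  obtain ⟨ha1, ha2⟩ := ha'; obtain ⟨hb1, hb2⟩ := hb'; obtain ⟨hc1, hc2⟩ := hc'
  interval_cases a <;> interval_cases b <;> interval_cases c <;> revert h <;> decide

theorem unit_vec {v : E3} (hv : v ∈ Z3) (hn : ‖v‖ = 1) :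
    ∃ (i : Fin 3) (s : ℤˣ), ∀ k, v k = if k = i then ((s : ℤ) : ℝ) else 0 := by
  choose m hm using hv
  have hsum : ((m 0)^2 + (m 1)^2 + (m 2)^2 : ℝ) = 1 := by
    have h1 : ‖v‖^2 = 1 := by rw [hn]; norm_num
    rw [EuclideanSpace.norm_eq] at h1
    rw [Real.sq_sqrt (Finset.sum_nonneg fun i _ => sq_nonneg _)] at h1
    rw [Fin.sum_univ_three] at h1
    simp only [Real.norm_eq_abs, sq_abs] at h1
    rw [hm 0, hm 1, hm 2] at h1
    exact h1
  have hZ : (m 0)^2 + (m 1)^2 + (m 2)^2 = 1 := by exact_mod_cast hsum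
  rcases int3 _ _ _ hZ with ⟨h1, h2, h3⟩ | ⟨h1, h2, h3⟩ | ⟨h1, h2, h3⟩
  · refine ⟨0, if a : m 0 = 1 then 1 else -1, fun k => ?_⟩
    fin_cases k <;> simp [hm 0, hm 1, hm 2, h2, h3] <;>
      rcases h1 with h | h <;> simp [h] <;> split <;> simp_all
  · refine ⟨1, if a : m 1 = 1 then 1 else -1, fun k => ?_⟩
    fin_cases k <;> simp [hm 0, hm 1, hm 2, h1, h3] <;>
      rcases h2 with h | h <;> simp [h] <;> split <;> simp_all
  · refine ⟨2, if a : m 2 = 1 then 1 else -1, fun k => ?_⟩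
    fin_cases k <;> simp [hm 0, hm 1, hm 2, h1, h2] <;>
      rcases h3 with h | h <;> simp [h] <;> split <;> simp_all

open scoped RealInnerProductSpace in
theorem classify (g : G') (hg : ⇑g '' Z3 = Z3) : ∃ b ε σ, g = Msig b ε σ := by
  have hmaps : ∀ x ∈ Z3, g x ∈ Z3 := fun x hx => hg ▸ Set.mem_image_of_mem _ hx
  have h0Z : (0 : E3) ∈ Z3 := fun i => ⟨0, by simp⟩
  choose b hb using hmaps 0 h0Z
  set f : E3 → E3 := fun x => g x - g 0 with hfdef
  have hf0 : f 0 = 0 := by simp [hfdef]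
  have hfd : ∀ x y : E3, ‖f x - f y‖ = ‖x - y‖ := by
    intro x y
    have h1 : f x - f y = g x - g y := by simp only [hfdef]; abel
    rw [h1, ← dist_eq_norm, ← dist_eq_norm, g.dist_eq]
  have hfn : ∀ x : E3, ‖f x‖ = ‖x‖ := by
    intro x
    have := hfd x 0
    rw [hf0] at this
    simpa using this
  have hinner : ∀ x y : E3, ⟪f x, f y⟫ = ⟪x, y⟫ := by
    intro x y
    have e1 := norm_sub_sq_real (f x) (f y)
    have e2 := norm_sub_sq_real x y
    rw [hfd x y, hfn x, hfn y] at e1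
    nlinarith [e1, e2]
  -- the images of the standard basis vectors
  have hsingleZ : ∀ j : Fin 3, (EuclideanSpace.single j (1:ℝ)) ∈ Z3 := by
    intro j i
    refine ⟨if i = j then 1 else 0, ?_⟩
    rw [EuclideanSpace.single_apply]
    split
    · simp
    · simp
  have huZ : ∀ j : Fin 3, f (EuclideanSpace.single j (1:ℝ)) ∈ Z3 := by
    intro j i
    obtain ⟨m1, hm1⟩ := hmaps _ (hsingleZ j) i
    refine ⟨m1 - b i, ?_⟩
    show g (EuclideanSpace.single j (1:ℝ)) i - g 0 i = _
    rw [hm1, hb i]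
    push_cast
    ring
  have hun : ∀ j : Fin 3, ‖f (EuclideanSpace.single j (1:ℝ))‖ = 1 := by
    intro j
    rw [hfn]
    simp
  choose t s hts using fun j => unit_vec (huZ j) (hun j)
  -- inner products of images
  have hinner_basis : ∀ j k : Fin 3, ⟪f (EuclideanSpace.single j (1:ℝ)), f (EuclideanSpace.single k (1:ℝ))⟫
      = if j = k then 1 else 0 := by
    intro j k
    rw [hinner]
    rw [EuclideanSpace.inner_single_left]
    rw [EuclideanSpace.single_apply]
    simp [eq_comm]
  have htinj : Function.Injective t := by
    intro j k hjk
    by_contra hne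
    have h1 := hinner_basis j k
    rw [if_neg hne] at h1
    have h2 : ⟪f (EuclideanSpace.single j (1:ℝ)), f (EuclideanSpace.single k (1:ℝ))⟫
        = ((s j : ℤ) : ℝ) * ((s k : ℤ) : ℝ) := by
      rw [PiLp.inner_apply]
      simp only [RCLike.inner_apply, conj_trivial]
      have hterm : ∀ m, f (EuclideanSpace.single k (1:ℝ)) m * f (EuclideanSpace.single j (1:ℝ)) m
          = if m = t k then ((s j : ℤ) : ℝ) * ((s k : ℤ) : ℝ) else 0 := by
        intro m; rw [hts j m, hts k m, hjk]; split <;> ring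
      rw [Finset.sum_congr rfl fun m _ => hterm m]
      rw [Finset.sum_ite_eq' Finset.univ (t k)]
      simp
    rw [h2] at h1
    rcases Int.units_eq_one_or (s j) with h | h <;> rcases Int.units_eq_one_or (s k) with h' | h' <;>
      rw [h, h'] at h1 <;> norm_num at h1
  have hbij : Function.Bijective t := Finite.injective_iff_bijective.1 htinj
  set τ := Equiv.ofBijective t hbij with hτ
  set σ := τ.symm with hσ
  refine ⟨b, fun i => s (σ i), σ, ?_⟩
  refine IsometryEquiv.ext fun x => ?_
  ext i
  rw [msig_apply]
  have htσ : t (σ i) = i := τ.apply_symm_apply i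
  -- key : compute f x i
  have key : f x i * ((s (σ i) : ℤ) : ℝ) = x (σ i) := by
    have e1 : ⟪f x, f (EuclideanSpace.single (σ i) (1:ℝ))⟫ = x (σ i) := by
      rw [hinner]
      rw [EuclideanSpace.inner_single_right]
      simp
    have e2 : ⟪f x, f (EuclideanSpace.single (σ i) (1:ℝ))⟫ = f x i * ((s (σ i) : ℤ) : ℝ) := by
      rw [PiLp.inner_apply]
      simp only [RCLike.inner_apply, conj_trivial]
      have hterm : ∀ m, f (EuclideanSpace.single (σ i) (1:ℝ)) m * f x m
          = if m = i then f x i * ((s (σ i) : ℤ) : ℝ) else 0 := by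
        intro m
        rw [hts (σ i) m, htσ]
        split
        · rename_i hmi; rw [hmi]; ring
        · ring
      rw [Finset.sum_congr rfl fun m _ => hterm m]
      rw [Finset.sum_ite_eq' Finset.univ i]
      simp
    rw [← e1, e2]
  have hgx : g x i = f x i + (b i : ℝ) := by
    show g x i = g x i - g 0 i + (b i : ℝ)
    rw [hb i]
    ring
  rw [hgx]
  have hs2 := sgn_sq (s (σ i))
  linear_combination ((s (σ i) : ℤ) : ℝ) * key - (f x i) * hs2

def Wsub : Subgroup G' where
  carrier := {g : G' | ⇑g '' Z3 = Z3}
  one_mem' := by simp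
  mul_mem' := by
    intro a b ha hb
    show ⇑(a * b) '' Z3 = Z3
    rw [IsometryEquiv.coe_mul, Set.image_comp]
    rw [Set.mem_setOf_eq] at ha hb
    rw [hb, ha]
  inv_mem' := by
    intro a ha
    rw [Set.mem_setOf_eq] at ha ⊢
    conv_lhs => rw [← ha]
    rw [← Set.image_comp]
    simp

theorem gT3_mem (b : Fin 3 → ℤ) (ε : Fin 3 → ℤˣ) (σ : Equiv.Perm (Fin 3))
    (h : ε 0 * ε 1 * ε 2 = -1) : Msig b ε σ * Msig 0 ![1,1,-1] 1 ∈ Hgrp := by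
  rw [msig_mul]
  apply msig_even_mem
  show (ε 0 * ![1,1,-1] (σ 0)) * (ε 1 * ![1,1,-1] (σ 1)) * (ε 2 * ![1,1,-1] (σ 2)) = 1
  have hp := prod3_comp ![1,1,-1] σ
  calc (ε 0 * ![1,1,-1] (σ 0)) * (ε 1 * ![1,1,-1] (σ 1)) * (ε 2 * ![1,1,-1] (σ 2))
      = (ε 0 * ε 1 * ε 2) * (![1,1,-1] (σ 0) * ![1,1,-1] (σ 1) * ![1,1,-1] (σ 2)) :=
        Units.ext (by push_cast; ring)
    _ = 1 := by rw [hp, h]; decide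


theorem index_two_subgroup_of_cubical_tessellation_group
    (T0 T1 T2 T3 : E3 ≃ᵢ E3)
    (hT0 : ∀ x : E3, T0 x = pt (1 - x 0) (x 1) (x 2))
    (hT1 : ∀ x : E3, T1 x = pt (x 1) (x 0) (x 2))
    (hT2 : ∀ x : E3, T2 x = pt (x 0) (x 2) (x 1))
    (hT3 : ∀ x : E3, T3 x = pt (x 0) (x 1) (-(x 2))) :
    (Subgroup.closure {T0, T1, T2, T3} : Set (E3 ≃ᵢ E3)) = {g : E3 ≃ᵢ E3 | (⇑g) '' Z3 = Z3} ∧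
    (Subgroup.closure {T0 * T3, T1, T2, T3 * T2 * T3}).relIndex
        (Subgroup.closure {T0, T1, T2, T3}) = 2 ∧
    T3 ∉ Subgroup.closure {T0 * T3, T1, T2, T3 * T2 * T3} := by
  -- identify the generators with signed permutation maps
  have e0 : T0 = Msig ![1,0,0] ![-1,1,1] 1 := by
    refine IsometryEquiv.ext fun x => ?_
    rw [hT0]; ext i; rw [msig_apply]
    fin_cases i <;> simp [pt] <;> ring
  have e1 : T1 = G1 := by
    refine IsometryEquiv.ext fun x => ?_
    rw [hT1]; ext i; rw [G1, msig_apply]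
    fin_cases i <;> simp [pt, Equiv.swap_apply_def]
  have e2 : T2 = G2 := by
    refine IsometryEquiv.ext fun x => ?_
    rw [hT2]; ext i; rw [G2, msig_apply]
    fin_cases i <;> simp [pt, Equiv.swap_apply_def]
  have e3 : T3 = Msig 0 ![1,1,-1] 1 := by
    refine IsometryEquiv.ext fun x => ?_
    rw [hT3]; ext i; rw [msig_apply]
    fin_cases i <;> simp [pt] <;> ring
  have e03 : T0 * T3 = G0 := by
    rw [e0, e3, msig_mul, G0]
    congr 1 <;> first | rfl | (funext i; fin_cases i <;> first | simp | decide)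
  have e323 : T3 * T2 * T3 = G3 := by
    rw [e3, e2, G2, msig_mul, msig_mul, G3]
    congr 1 <;> first | rfl | (funext i; fin_cases i <;> first | decide | simp) | (ext i; fin_cases i <;> first | decide | simp)
  -- the two closures
  have hHset : ({T0 * T3, T1, T2, T3 * T2 * T3} : Set G') = {G0, G1, G2, G3} := by
    rw [e03, e323, e1, e2]
  have hHgrp : Subgroup.closure {T0 * T3, T1, T2, T3 * T2 * T3} = Hgrp := by
    rw [hHset, Hgrp]
  set Wc := Subgroup.closure {T0, T1, T2, T3} with hWc
  -- Hgrp ≤ Wc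
  have hG0W : G0 ∈ Wc := by
    rw [← e03]
    exact mul_mem (Subgroup.subset_closure (Set.mem_insert _ _))
      (Subgroup.subset_closure (Set.mem_insert_iff.2 (Or.inr (Or.inr (Or.inr rfl)))))
  have hT1W : T1 ∈ Wc := Subgroup.subset_closure (Set.mem_insert_iff.2 (Or.inr (Or.inl rfl)))
  have hT2W : T2 ∈ Wc := Subgroup.subset_closure (Set.mem_insert_iff.2 (Or.inr (Or.inr (Or.inl rfl))))
  have hT3W : T3 ∈ Wc := Subgroup.subset_closure (Set.mem_insert_iff.2 (Or.inr (Or.inr (Or.inr rfl))))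
  have hHle : Hgrp ≤ Wc := by
    rw [Hgrp]
    refine (Subgroup.closure_le _).2 ?_
    rintro g (rfl | rfl | rfl | rfl)
    · exact hG0W
    · rw [← e1]; exact hT1W
    · rw [← e2]; exact hT2W
    · rw [← e323]; exact mul_mem (mul_mem hT3W hT2W) hT3W
  -- statement 1
  have hW : (Wc : Set G') = {g : G' | ⇑g '' Z3 = Z3} := by
    apply Set.eq_of_subset_of_subset
    · intro g hg
      have : Wc ≤ Wsub := by
        rw [hWc]
        refine (Subgroup.closure_le _).2 ?_
        rintro g' (rfl | rfl | rfl | rfl)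
        · show ⇑g' '' Z3 = Z3; rw [e0]; exact msig_image_Z3 _ _ _
        · show ⇑g' '' Z3 = Z3; rw [e1, G1]; exact msig_image_Z3 _ _ _
        · show ⇑g' '' Z3 = Z3; rw [e2, G2]; exact msig_image_Z3 _ _ _
        · show ⇑g' '' Z3 = Z3; rw [e3]; exact msig_image_Z3 _ _ _
      exact this hg
    · intro g hg
      obtain ⟨b, ε, σ, rfl⟩ := classify g hg
      rcases Int.units_eq_one_or (ε 0 * ε 1 * ε 2) with hpar | hpar
      · exact hHle (msig_even_mem b ε σ hpar)
      · have h1 : Msig b ε σ * T3 ∈ Wc := by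
          rw [e3]
          exact hHle (gT3_mem b ε σ hpar)
        have : Msig b ε σ = Msig b ε σ * T3 * T3⁻¹ := by group
        rw [this]
        exact mul_mem h1 (inv_mem hT3W)
  refine ⟨hW, ?_, ?_⟩
  · -- index 2
    rw [hHgrp]
    show (Hgrp.subgroupOf Wc).index = 2
    rw [Subgroup.index_eq_two_iff]
    refine ⟨⟨T3, hT3W⟩, ?_⟩
    rintro ⟨g, hg⟩
    have hgZ : ⇑g '' Z3 = Z3 := by
      have := hW ▸ Set.mem_of_mem_of_subset (show g ∈ (Wc : Set G') from hg) subset_rfl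
      exact this
    obtain ⟨b, ε, σ, hgm⟩ := classify g hgZ
    have hT3H : T3 ∉ Hgrp := by
      rw [e3]; exact M3_not_mem_Hgrp
    rcases Int.units_eq_one_or (ε 0 * ε 1 * ε 2) with hpar | hpar
    · refine Or.inr ⟨?_, ?_⟩
      · rw [Subgroup.mem_subgroupOf]
        show g ∈ Hgrp
        rw [hgm]
        exact msig_even_mem b ε σ hpar
      · rw [Subgroup.mem_subgroupOf]
        intro hcon
        have : (g * T3 : G') ∈ Hgrp := hcon
        have hgH : g ∈ Hgrp := by rw [hgm]; exact msig_even_mem b ε σ hpar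
        exact hT3H (by
          have := mul_mem (inv_mem hgH) this
          rwa [inv_mul_cancel_left] at this)
    · refine Or.inl ⟨?_, ?_⟩
      · rw [Subgroup.mem_subgroupOf]
        show (g * T3 : G') ∈ Hgrp
        rw [hgm, e3]
        exact gT3_mem b ε σ hpar
      · rw [Subgroup.mem_subgroupOf]
        intro hcon
        have hgt : (g * T3 : G') ∈ Hgrp := by rw [hgm, e3]; exact gT3_mem b ε σ hpar
        exact hT3H (by
          have := mul_mem (inv_mem (show g ∈ Hgrp from hcon)) hgt
          rwa [inv_mul_cancel_left] at this)
  · rw [hHgrp, e3]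
    exact M3_not_mem_Hgrp
end
end

section
/- Let H be the subgroup of isometries of ℝ³ generated by T₀T₃, T₁, T₂, and T₃T₂T₃, where T₀(x,y,z) = (1−x, y, z), T₁(x,y,z) = (y, x, z), T₂(x,y,z) = (x, z, y), T₃(x,y,z) = (x, y, −z). Then H contains every translation x ↦ x + w with w ∈ ℤ³; that is, the full translation subgroup of the symmetry group of the cubical tessellation {4,3,4} is contained in H. -/
/- STATEMENT 7: The subgroup H of isometries of ℝ³ generated by T₀T₃, T₁, T₂, T₃T₂T₃, with
T₀(x,y,z) = (1−x, y, z), T₁(x,y,z) = (y, x, z), T₂(x,y,z) = (x, z, y), T₃(x,y,z) = (x, y, −z),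
contains every translation x ↦ x + w with w ∈ ℤ³. -/

noncomputable section

lemma pt_apply0 (a b c : ℝ) : pt a b c 0 = a := rfl
lemma pt_apply1 (a b c : ℝ) : pt a b c 1 = b := rfl
lemma pt_apply2 (a b c : ℝ) : pt a b c 2 = c := rfl

lemma trans_pow (f : E3 ≃ᵢ E3) (v : E3) (h : ∀ x, f x = x + v) (n : ℕ) :
    ∀ x, (f ^ n) x = x + (n : ℝ) • v := by
  induction n with
  | zero => intro x; simp
  | succ k ih =>
      intro x
      rw [pow_succ, IsometryEquiv.mul_apply, h x, ih]
      push_cast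
      rw [add_smul, one_smul]
      abel

lemma trans_inv (f : E3 ≃ᵢ E3) (v : E3) (h : ∀ x, f x = x + v) :
    ∀ x, f⁻¹ x = x + (-v) := by
  intro x
  have : f (x + (-v)) = x := by rw [h]; abel
  calc f⁻¹ x = f⁻¹ (f (x + (-v))) := by rw [this]
    _ = x + (-v) := f.symm_apply_apply _

lemma trans_zpow (f : E3 ≃ᵢ E3) (v : E3) (h : ∀ x, f x = x + v) (m : ℤ) :
    ∀ x, (f ^ m) x = x + (m : ℝ) • v := by
  cases m with
  | ofNat n => simpa using trans_pow f v h n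
  | negSucc n =>
      intro x
      rw [zpow_negSucc, ← inv_pow]
      rw [trans_pow f⁻¹ (-v) (trans_inv f v h) (n+1) x]
      push_cast
      rw [smul_neg, neg_smul]

theorem integer_translations_in_H
    (T0 T1 T2 T3 : E3 ≃ᵢ E3)
    (hT0 : ∀ x : E3, T0 x = pt (1 - x 0) (x 1) (x 2))
    (hT1 : ∀ x : E3, T1 x = pt (x 1) (x 0) (x 2))
    (hT2 : ∀ x : E3, T2 x = pt (x 0) (x 2) (x 1))
    (hT3 : ∀ x : E3, T3 x = pt (x 0) (x 1) (-(x 2)))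
    (w : E3) (hw : ∀ i, ∃ m : ℤ, w i = (m : ℝ)) :
    ∃ g ∈ Subgroup.closure {T0 * T3, T1, T2, T3 * T2 * T3}, ∀ x : E3, g x = x + w := by
  obtain ⟨m0, hm0⟩ := hw 0
  obtain ⟨m1, hm1⟩ := hw 1
  obtain ⟨m2, hm2⟩ := hw 2
  set S : Set (E3 ≃ᵢ E3) := {T0 * T3, T1, T2, T3 * T2 * T3} with hS
  have hA : T0 * T3 ∈ Subgroup.closure S := Subgroup.subset_closure (by simp [hS])
  have h1 : T1 ∈ Subgroup.closure S := Subgroup.subset_closure (by simp [hS])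
  have h2 : T2 ∈ Subgroup.closure S := Subgroup.subset_closure (by simp [hS])
  have hB : T3 * T2 * T3 ∈ Subgroup.closure S := Subgroup.subset_closure (by simp [hS])
  -- f0 translates by (1,0,0)
  set f0 : E3 ≃ᵢ E3 := (T0 * T3) * T1 * T2 * (T3 * T2 * T3) * T1 with hf0def
  have hf0mem : f0 ∈ Subgroup.closure S :=
    mul_mem (mul_mem (mul_mem (mul_mem hA h1) h2) hB) h1
  have hf0 : ∀ x : E3, f0 x = x + pt 1 0 0 := by
    intro x
    simp only [hf0def, IsometryEquiv.mul_apply, hT0, hT1, hT2, hT3,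
      pt_apply0, pt_apply1, pt_apply2]
    ext i
    fin_cases i <;>
      simp [pt, PiLp.add_apply] <;> ring
  set f1 : E3 ≃ᵢ E3 := T1 * f0 * T1 with hf1def
  have hf1mem : f1 ∈ Subgroup.closure S := mul_mem (mul_mem h1 hf0mem) h1
  have hf1 : ∀ x : E3, f1 x = x + pt 0 1 0 := by
    intro x
    simp only [hf1def, IsometryEquiv.mul_apply, hf0, hT1,
      pt_apply0, pt_apply1, pt_apply2]
    ext i
    fin_cases i <;>
      simp [pt, PiLp.add_apply] <;> ring
  set f2 : E3 ≃ᵢ E3 := T2 * f1 * T2 with hf2def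
  have hf2mem : f2 ∈ Subgroup.closure S := mul_mem (mul_mem h2 hf1mem) h2
  have hf2 : ∀ x : E3, f2 x = x + pt 0 0 1 := by
    intro x
    simp only [hf2def, IsometryEquiv.mul_apply, hf1, hT2,
      pt_apply0, pt_apply1, pt_apply2]
    ext i
    fin_cases i <;>
      simp [pt, PiLp.add_apply] <;> ring
  refine ⟨f0 ^ m0 * (f1 ^ m1 * f2 ^ m2),
    mul_mem (zpow_mem hf0mem m0) (mul_mem (zpow_mem hf1mem m1) (zpow_mem hf2mem m2)), ?_⟩
  intro x
  rw [IsometryEquiv.mul_apply, IsometryEquiv.mul_apply,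
    trans_zpow f2 _ hf2 m2, trans_zpow f1 _ hf1 m1, trans_zpow f0 _ hf0 m0]
  ext i
  fin_cases i <;>
    simp [pt, PiLp.add_apply, PiLp.smul_apply] <;>
    simp [hm0, hm1, hm2]
end
end

section
/- Let H be the subgroup of isometries of ℝ³ generated by T₀T₃, T₁, T₂, and T₃T₂T₃, where T₀(x,y,z) = (1−x, y, z), T₁(x,y,z) = (y, x, z), T₂(x,y,z) = (x, z, y), T₃(x,y,z) = (x, y, −z). Let D be the set of flags of the 2-skeleton of the cubical tessellation {4,3,4}, encoded as triples (p, q, s) of points of ℝ³ with p ∈ ℤ³, q = p + (ε/2)uᵢ and s = q + (δ/2)uⱼ, where u₁, u₂, u₃ is the standard basis of ℝ³, i ≠ j, and ε, δ ∈ {1, −1}. Then H, acting componentwise on triples, acts simply transitively on D: every element of H maps D to D, and for any two flags in D there is exactly one element of H carrying the first to the second. -/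
/- STATEMENT 8: The subgroup H of isometries of ℝ³ generated by T₀T₃, T₁, T₂, T₃T₂T₃
(with T₀, T₁, T₂, T₃ as in the symmetry group of the cubical tessellation {4,3,4}) acts
simply transitively, componentwise on triples, on the set D of flags (p, q, s) of the
2-skeleton of {4,3,4}: p ∈ ℤ³, q = p + (ε/2)uᵢ, s = q + (δ/2)uⱼ with i ≠ j, ε, δ ∈ {1,−1}. -/

noncomputable section

/-- The flags of the 2-skeleton of the cubical tessellation, encoded as triples
(vertex, edge midpoint, square face center). -/
def Flags : Set (E3 × E3 × E3) :=
  {d | ∃ (i j : Fin 3) (ε δ : ℝ), i ≠ j ∧ (ε = 1 ∨ ε = -1) ∧ (δ = 1 ∨ δ = -1) ∧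
    (∀ k, ∃ m : ℤ, d.1 k = (m : ℝ)) ∧
    d.2.1 = d.1 + (ε / 2) • EuclideanSpace.single i (1 : ℝ) ∧
    d.2.2 = d.2.1 + (δ / 2) • EuclideanSpace.single j (1 : ℝ)}

namespace Stmt8

/-! ### decidable facts about `Fin 3` and its permutations -/

lemma exists_perm_two : ∀ (i j i' j' : Fin 3), i ≠ j → i' ≠ j' →
    ∃ σ : Equiv.Perm (Fin 3), σ i' = i ∧ σ j' = j := by decide

lemma perm_fix : ∀ (σ : Equiv.Perm (Fin 3)) (i j : Fin 3), i ≠ j → σ i = i → σ j = j → σ = 1 := by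
  decide

lemma third_cases : ∀ i j : Fin 3, i ≠ j →
    (i = 0 ∧ j = 1) ∨ (i = 0 ∧ j = 2) ∨ (i = 1 ∧ j = 0) ∨ (i = 1 ∧ j = 2) ∨
    (i = 2 ∧ j = 0) ∨ (i = 2 ∧ j = 1) := by decide

lemma perm3_cases : ∀ σ : Equiv.Perm (Fin 3),
    (σ 0 = 0 ∧ σ 1 = 1 ∧ σ 2 = 2) ∨ (σ 0 = 1 ∧ σ 1 = 0 ∧ σ 2 = 2) ∨
    (σ 0 = 0 ∧ σ 1 = 2 ∧ σ 2 = 1) ∨ (σ 0 = 2 ∧ σ 1 = 1 ∧ σ 2 = 0) ∨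
    (σ 0 = 1 ∧ σ 1 = 2 ∧ σ 2 = 0) ∨ (σ 0 = 2 ∧ σ 1 = 0 ∧ σ 2 = 1) := by decide

lemma fin3 : ∀ v : Fin 3, v = 0 ∨ v = 1 ∨ v = 2 := by decide

/-! ### coordinates of flag conditions -/

lemma coord_of_eq {a b : E3} {c : ℝ} {i : Fin 3}
    (h : a = b + c • EuclideanSpace.single i 1) :
    ∀ k, a k = b k + (if k = i then c else 0) := by
  intro k
  rw [h]
  simp [EuclideanSpace.single_apply, mul_ite]

lemma eq_of_coord {a b : E3} {c : ℝ} {i : Fin 3}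
    (h : ∀ k, a k = b k + (if k = i then c else 0)) :
    a = b + c • EuclideanSpace.single i 1 := by
  ext k
  have e : (b + c • EuclideanSpace.single i (1:ℝ)) k = b k + c * (if k = i then 1 else 0) := by
    simp [EuclideanSpace.single_apply]
  rw [e, h k]
  split_ifs <;> ring

/-! ### the normal form predicate -/

def GoodData (g : E3 ≃ᵢ E3) (σ : Equiv.Perm (Fin 3)) (s t : Fin 3 → ℝ) : Prop :=
  (∀ k, s k = 1 ∨ s k = -1) ∧ s 0 * s 1 * s 2 = 1 ∧ (∀ k, ∃ m : ℤ, t k = m) ∧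
  ∀ (x : E3) (k : Fin 3), g x k = s k * x (σ k) + t k

def Good (g : E3 ≃ᵢ E3) : Prop := ∃ σ s t, GoodData g σ s t

lemma prod_comp_three (σ : Equiv.Perm (Fin 3)) (s : Fin 3 → ℝ) :
    s (σ 0) * s (σ 1) * s (σ 2) = s 0 * s 1 * s 2 := by
  have h := Equiv.prod_comp σ s
  rwa [Fin.prod_univ_three, Fin.prod_univ_three] at h

lemma Good.one : Good 1 := by
  refine ⟨1, fun _ => 1, fun _ => 0, fun k => Or.inl rfl, by norm_num,
    fun k => ⟨0, by norm_num⟩, fun x k => ?_⟩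
  simp

lemma Good.mul {g g' : E3 ≃ᵢ E3} (h : Good g) (h' : Good g') : Good (g * g') := by
  obtain ⟨σ, s, t, hs, hp, ht, ha⟩ := h
  obtain ⟨σ', s', t', hs', hp', ht', ha'⟩ := h'
  refine ⟨σ.trans σ', fun k => s k * s' (σ k), fun k => s k * t' (σ k) + t k, ?_, ?_, ?_, ?_⟩
  · intro k; rcases hs k with h | h <;> rcases hs' (σ k) with h' | h' <;> simp [h, h']
  · have e : (s 0 * s' (σ 0)) * (s 1 * s' (σ 1)) * (s 2 * s' (σ 2))
        = (s 0 * s 1 * s 2) * (s' (σ 0) * s' (σ 1) * s' (σ 2)) := by ring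
    rw [e, prod_comp_three, hp, hp', one_mul]
  · intro k
    obtain ⟨m', hm'⟩ := ht' (σ k); obtain ⟨m, hm⟩ := ht k
    rcases hs k with h | h
    · exact ⟨m' + m, by show s k * t' (σ k) + t k = _; rw [h, hm', hm]; push_cast; ring⟩
    · exact ⟨-m' + m, by show s k * t' (σ k) + t k = _; rw [h, hm', hm]; push_cast; ring⟩
  · intro x k
    have e : (g * g') x k = g (g' x) k := rfl
    rw [e, ha, ha']
    simp only [Equiv.trans_apply]
    ring

lemma Good.inv {g : E3 ≃ᵢ E3} (h : Good g) : Good g⁻¹ := by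
  obtain ⟨σ, s, t, hs, hp, ht, ha⟩ := h
  refine ⟨σ.symm, fun k => s (σ.symm k), fun k => -(s (σ.symm k) * t (σ.symm k)), ?_, ?_, ?_, ?_⟩
  · intro k; exact hs _
  · have h2 := Equiv.prod_comp σ.symm s
    rw [Fin.prod_univ_three, Fin.prod_univ_three] at h2
    rw [h2, hp]
  · intro k
    obtain ⟨m, hm⟩ := ht (σ.symm k)
    rcases hs (σ.symm k) with h | h
    · exact ⟨-m, by show -(s (σ.symm k) * t (σ.symm k)) = _; rw [h, hm]; push_cast; ring⟩
    · exact ⟨m, by show -(s (σ.symm k) * t (σ.symm k)) = _; rw [h, hm]; ring⟩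
  · intro x k
    have h1 := ha (g⁻¹ x) (σ.symm k)
    have h2 : g (g⁻¹ x) = x := by simp
    rw [h2, Equiv.apply_symm_apply] at h1
    show g⁻¹ x k = s (σ.symm k) * x (σ.symm k) + -(s (σ.symm k) * t (σ.symm k))
    rcases hs (σ.symm k) with h | h <;> rw [h] at h1 ⊢ <;> linarith

/-! ### every Good element preserves the flags -/

lemma Good.preserves {g : E3 ≃ᵢ E3} (hg : Good g) {d : E3 × E3 × E3} (hd : d ∈ Flags) :
    (g d.1, g d.2.1, g d.2.2) ∈ Flags := by
  obtain ⟨σ, s, t, hs, hp, ht, ha⟩ := hg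
  obtain ⟨i, j, ε, δ, hij, hε, hδ, hPint, hQ, hS⟩ := hd
  have hQc := coord_of_eq hQ
  have hSc := coord_of_eq hS
  refine ⟨σ.symm i, σ.symm j, s (σ.symm i) * ε, s (σ.symm j) * δ, ?_, ?_, ?_, ?_, ?_, ?_⟩
  · exact fun hc => hij (σ.symm.injective hc)
  · rcases hs (σ.symm i) with h | h <;> rcases hε with rfl | rfl <;> rw [h] <;> norm_num
  · rcases hs (σ.symm j) with h | h <;> rcases hδ with rfl | rfl <;> rw [h] <;> norm_num
  · intro k
    obtain ⟨m, hm⟩ := hPint (σ k)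
    obtain ⟨m', hm'⟩ := ht k
    rcases hs k with h | h
    · exact ⟨m + m', by show g d.1 k = _; rw [ha, h, hm, hm']; push_cast; ring⟩
    · exact ⟨-m + m', by show g d.1 k = _; rw [ha, h, hm, hm']; push_cast; ring⟩
  · refine eq_of_coord fun k => ?_
    show g d.2.1 k = g d.1 k + _
    rw [ha, ha, hQc (σ k)]
    by_cases hk : k = σ.symm i
    · have hσk : σ k = i := by rw [hk, Equiv.apply_symm_apply]
      rw [if_pos hσk, if_pos hk, hk]
      ring
    · have hσk : σ k ≠ i := fun hc => hk (by rw [← hc, Equiv.symm_apply_apply])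
      rw [if_neg hσk, if_neg hk]
      ring
  · refine eq_of_coord fun k => ?_
    show g d.2.2 k = g d.2.1 k + _
    rw [ha, ha, hSc (σ k)]
    by_cases hk : k = σ.symm j
    · have hσk : σ k = j := by rw [hk, Equiv.apply_symm_apply]
      rw [if_pos hσk, if_pos hk, hk]
      ring
    · have hσk : σ k ≠ j := fun hc => hk (by rw [← hc, Equiv.symm_apply_apply])
      rw [if_neg hσk, if_neg hk]
      ring

/-! ### a Good element fixing a flag is the identity -/

lemma Good.eq_one_of_fix {h : E3 ≃ᵢ E3} (hg : Good h) {d : E3 × E3 × E3} (hd : d ∈ Flags)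
    (h1 : h d.1 = d.1) (h2 : h d.2.1 = d.2.1) (h3 : h d.2.2 = d.2.2) : h = 1 := by
  obtain ⟨σ, s, t, hs, hp, ht, ha⟩ := hg
  obtain ⟨i, j, ε, δ, hij, hε, hδ, hPint, hQ, hS⟩ := hd
  have hQc := coord_of_eq hQ
  have hSc := coord_of_eq hS
  have hP : ∀ k, s k * d.1 (σ k) + t k = d.1 k := fun k => by rw [← ha]; rw [h1]
  have hQe : ∀ k, s k * d.2.1 (σ k) + t k = d.2.1 k := fun k => by rw [← ha]; rw [h2]
  have hSe : ∀ k, s k * d.2.2 (σ k) + t k = d.2.2 k := fun k => by rw [← ha]; rw [h3]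
  have key1 : ∀ k, s k * (if σ k = i then ε / 2 else 0) = (if k = i then ε / 2 else 0) := by
    intro k
    have e1 := hQe k
    rw [hQc (σ k), hQc k] at e1
    have e2 := hP k
    have e3 : s k * (d.1 (σ k) + (if σ k = i then ε / 2 else 0))
        = s k * d.1 (σ k) + s k * (if σ k = i then ε / 2 else 0) := by ring
    rw [e3] at e1
    linarith
  have key2 : ∀ k, s k * (if σ k = j then δ / 2 else 0) = (if k = j then δ / 2 else 0) := by
    intro k
    have e1 := hSe k
    rw [hSc (σ k), hSc k] at e1
    have e2 := hQe k
    have e3 : s k * (d.2.1 (σ k) + (if σ k = j then δ / 2 else 0))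
        = s k * d.2.1 (σ k) + s k * (if σ k = j then δ / 2 else 0) := by ring
    rw [e3] at e1
    linarith
  have hεne : ε ≠ 0 := by rcases hε with rfl | rfl <;> norm_num
  have hδne : δ ≠ 0 := by rcases hδ with rfl | rfl <;> norm_num
  have hσi : σ i = i := by
    by_contra hc
    have := key1 i
    rw [if_neg hc, if_pos rfl] at this
    exact hεne (by linarith)
  have hσj : σ j = j := by
    by_contra hc
    have := key2 j
    rw [if_neg hc, if_pos rfl] at this
    exact hδne (by linarith)
  have hsi : s i = 1 := by
    have := key1 i
    rw [if_pos hσi, if_pos rfl] at this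
    rcases hs i with h | h
    · exact h
    · rw [h] at this; exact absurd (by linarith : ε = 0) hεne
  have hsj : s j = 1 := by
    have := key2 j
    rw [if_pos hσj, if_pos rfl] at this
    rcases hs j with h | h
    · exact h
    · rw [h] at this; exact absurd (by linarith : δ = 0) hδne
  have hσ1 : σ = 1 := perm_fix σ i j hij hσi hσj
  have hsall : s 0 = 1 ∧ s 1 = 1 ∧ s 2 = 1 := by
    rcases third_cases i j hij with ⟨e, f⟩ | ⟨e, f⟩ | ⟨e, f⟩ | ⟨e, f⟩ | ⟨e, f⟩ | ⟨e, f⟩ <;>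
      subst e <;> subst f <;> rw [hsi, hsj] at hp <;>
      refine ⟨?_, ?_, ?_⟩ <;> first | rfl | assumption | linarith
  have hsk : ∀ k : Fin 3, s k = 1 := by
    intro k
    fin_cases k
    exacts [hsall.1, hsall.2.1, hsall.2.2]
  subst hσ1
  have ht0 : ∀ k, t k = 0 := by
    intro k
    have := hP k
    rw [hsk k] at this
    simp only [Equiv.Perm.coe_one, id_eq] at this
    linarith [this]
  refine IsometryEquiv.ext fun x => ?_
  ext k
  rw [show (1 : E3 ≃ᵢ E3) x = x from rfl, ha x k, hsk k, ht0 k]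
  simp

end Stmt8

namespace Stmt8

section Gens

variable (T0 T1 T2 T3 : E3 ≃ᵢ E3)

/-! ### the generators are Good -/

lemma good_gen1 (hT0 : ∀ x : E3, T0 x = pt (1 - x 0) (x 1) (x 2))
    (hT3 : ∀ x : E3, T3 x = pt (x 0) (x 1) (-(x 2))) : Good (T0 * T3) := by
  refine ⟨1, ![-1, 1, -1], ![1, 0, 0], ?_, ?_, ?_, ?_⟩
  · intro k; fin_cases k <;> norm_num
  · show (-1 : ℝ) * 1 * -1 = 1; norm_num
  · intro k; fin_cases k
    exacts [⟨1, by norm_num⟩, ⟨0, by norm_num⟩, ⟨0, by norm_num⟩]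
  · intro x k
    fin_cases k <;>
      simp [IsometryEquiv.coe_mul, Function.comp_apply, hT0, hT3, pt] <;> ring

lemma good_gen2 (hT1 : ∀ x : E3, T1 x = pt (x 1) (x 0) (x 2)) : Good T1 := by
  refine ⟨Equiv.swap 0 1, fun _ => 1, fun _ => 0, fun k => Or.inl rfl, by norm_num,
    fun k => ⟨0, by norm_num⟩, ?_⟩
  intro x k
  fin_cases k <;> simp [hT1, pt, Equiv.swap_apply_def]

lemma good_gen3 (hT2 : ∀ x : E3, T2 x = pt (x 0) (x 2) (x 1)) : Good T2 := by
  refine ⟨Equiv.swap 1 2, fun _ => 1, fun _ => 0, fun k => Or.inl rfl, by norm_num,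
    fun k => ⟨0, by norm_num⟩, ?_⟩
  intro x k
  fin_cases k <;> simp [hT2, pt, Equiv.swap_apply_def]

lemma good_gen4 (hT2 : ∀ x : E3, T2 x = pt (x 0) (x 2) (x 1))
    (hT3 : ∀ x : E3, T3 x = pt (x 0) (x 1) (-(x 2))) : Good (T3 * T2 * T3) := by
  refine ⟨Equiv.swap 1 2, ![1, -1, -1], fun _ => 0, ?_, ?_, fun k => ⟨0, by norm_num⟩, ?_⟩
  · intro k; fin_cases k <;> norm_num
  · show (1 : ℝ) * -1 * -1 = 1; norm_num
  · intro x k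
    fin_cases k <;>
      simp [IsometryEquiv.coe_mul, Function.comp_apply, hT2, hT3, pt, Equiv.swap_apply_def] <;>
      ring

lemma closure_good (hT0 : ∀ x : E3, T0 x = pt (1 - x 0) (x 1) (x 2))
    (hT1 : ∀ x : E3, T1 x = pt (x 1) (x 0) (x 2))
    (hT2 : ∀ x : E3, T2 x = pt (x 0) (x 2) (x 1))
    (hT3 : ∀ x : E3, T3 x = pt (x 0) (x 1) (-(x 2))) :
    ∀ g ∈ Subgroup.closure {T0 * T3, T1, T2, T3 * T2 * T3}, Good g := by
  intro g hg
  refine Subgroup.closure_induction ?_ Good.one (fun a b _ _ ha hb => ha.mul hb)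
    (fun a _ ha => ha.inv) hg
  intro x hx
  simp only [Set.mem_insert_iff, Set.mem_singleton_iff] at hx
  rcases hx with rfl | rfl | rfl | rfl
  · exact good_gen1 _ _ hT0 hT3
  · exact good_gen2 _ hT1
  · exact good_gen3 _ hT2
  · exact good_gen4 _ _ hT2 hT3

/-! ### realization of actions by elements of the closure -/

lemma pow_action (g : E3 ≃ᵢ E3) (v : Fin 3 → ℝ) (hg : ∀ (x : E3) (k : Fin 3), g x k = x k + v k) :
    ∀ (n : ℤ) (x : E3) (k : Fin 3), (g ^ n) x k = x k + n * v k := by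
  have hinv : ∀ (x : E3) (k : Fin 3), g⁻¹ x k = x k - v k := by
    intro x k
    have h1 := hg (g⁻¹ x) k
    have h2 : g (g⁻¹ x) = x := by simp
    rw [h2] at h1
    linarith
  intro n
  induction n using Int.induction_on with
  | zero => intro x k; simp
  | succ n ih =>
      intro x k
      have e : (g ^ ((n : ℤ) + 1)) x k = (g ^ (n : ℤ)) (g x) k := by rw [zpow_add_one]; rfl
      rw [e, ih, hg]
      push_cast; ring
  | pred n ih =>
      intro x k
      have e : (g ^ (-(n : ℤ) - 1)) x k = (g ^ (-(n : ℤ))) (g⁻¹ x) k := by rw [zpow_sub_one]; rfl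
      rw [e, ih, hinv]
      push_cast; ring

lemma exists_perm (hT1 : ∀ x : E3, T1 x = pt (x 1) (x 0) (x 2))
    (hT2 : ∀ x : E3, T2 x = pt (x 0) (x 2) (x 1)) (σ : Equiv.Perm (Fin 3)) :
    ∃ g ∈ Subgroup.closure {T0 * T3, T1, T2, T3 * T2 * T3},
      ∀ (x : E3) (k : Fin 3), g x k = x (σ k) := by
  have c2 : T1 ∈ Subgroup.closure {T0 * T3, T1, T2, T3 * T2 * T3} :=
    Subgroup.subset_closure (by simp)
  have c3 : T2 ∈ Subgroup.closure {T0 * T3, T1, T2, T3 * T2 * T3} :=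
    Subgroup.subset_closure (by simp)
  rcases perm3_cases σ with ⟨h0, h1, h2⟩ | ⟨h0, h1, h2⟩ | ⟨h0, h1, h2⟩ | ⟨h0, h1, h2⟩ |
    ⟨h0, h1, h2⟩ | ⟨h0, h1, h2⟩
  · exact ⟨1, one_mem _, fun x k => by
      obtain rfl | rfl | rfl := fin3 k <;> [rw [h0]; rw [h1]; rw [h2]] <;> simp⟩
  · exact ⟨T1, c2, fun x k => by
      obtain rfl | rfl | rfl := fin3 k <;> [rw [h0]; rw [h1]; rw [h2]] <;> simp [hT1, pt]⟩
  · exact ⟨T2, c3, fun x k => by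
      obtain rfl | rfl | rfl := fin3 k <;> [rw [h0]; rw [h1]; rw [h2]] <;> simp [hT2, pt]⟩
  · exact ⟨T1 * T2 * T1, mul_mem (mul_mem c2 c3) c2, fun x k => by
      obtain rfl | rfl | rfl := fin3 k <;> [rw [h0]; rw [h1]; rw [h2]] <;>
        simp [hT1, hT2, pt, IsometryEquiv.coe_mul, Function.comp_apply]⟩
  · exact ⟨T2 * T1, mul_mem c3 c2, fun x k => by
      obtain rfl | rfl | rfl := fin3 k <;> [rw [h0]; rw [h1]; rw [h2]] <;>
        simp [hT1, hT2, pt, IsometryEquiv.coe_mul, Function.comp_apply]⟩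
  · exact ⟨T1 * T2, mul_mem c2 c3, fun x k => by
      obtain rfl | rfl | rfl := fin3 k <;> [rw [h0]; rw [h1]; rw [h2]] <;>
        simp [hT1, hT2, pt, IsometryEquiv.coe_mul, Function.comp_apply]⟩

lemma exists_sign (hT1 : ∀ x : E3, T1 x = pt (x 1) (x 0) (x 2))
    (hT2 : ∀ x : E3, T2 x = pt (x 0) (x 2) (x 1))
    (hT3 : ∀ x : E3, T3 x = pt (x 0) (x 1) (-(x 2))) (s : Fin 3 → ℝ)
    (hs : ∀ k, s k = 1 ∨ s k = -1) (hp : s 0 * s 1 * s 2 = 1) :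
    ∃ g ∈ Subgroup.closure {T0 * T3, T1, T2, T3 * T2 * T3},
      ∀ (x : E3) (k : Fin 3), g x k = s k * x k := by
  have c2 : T1 ∈ Subgroup.closure {T0 * T3, T1, T2, T3 * T2 * T3} :=
    Subgroup.subset_closure (by simp)
  have c3 : T2 ∈ Subgroup.closure {T0 * T3, T1, T2, T3 * T2 * T3} :=
    Subgroup.subset_closure (by simp)
  have c4 : T3 * T2 * T3 ∈ Subgroup.closure {T0 * T3, T1, T2, T3 * T2 * T3} :=
    Subgroup.subset_closure (by simp)
  rcases hs 0 with h0 | h0 <;> rcases hs 1 with h1 | h1 <;> rcases hs 2 with h2 | h2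
  · exact ⟨1, one_mem _, fun x k => by obtain rfl | rfl | rfl := fin3 k <;> simp [h0, h1, h2]⟩
  · exfalso; rw [h0, h1, h2] at hp; norm_num at hp
  · exfalso; rw [h0, h1, h2] at hp; norm_num at hp
  · exact ⟨T2 * (T3 * T2 * T3), mul_mem c3 c4, fun x k => by
      fin_cases k <;>
        simp [h0, h1, h2, hT2, hT3, pt, IsometryEquiv.coe_mul, Function.comp_apply] <;> ring⟩
  · exfalso; rw [h0, h1, h2] at hp; norm_num at hp
  · exact ⟨T1 * (T2 * (T3 * T2 * T3)) * T1, mul_mem (mul_mem c2 (mul_mem c3 c4)) c2,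
      fun x k => by
        obtain rfl | rfl | rfl := fin3 k <;>
          simp [h0, h1, h2, hT1, hT2, hT3, pt, IsometryEquiv.coe_mul, Function.comp_apply] <;>
          ring⟩
  · exact ⟨(T1 * T2 * T1) * (T2 * (T3 * T2 * T3)) * (T1 * T2 * T1),
      mul_mem (mul_mem (mul_mem (mul_mem c2 c3) c2) (mul_mem c3 c4)) (mul_mem (mul_mem c2 c3) c2),
      fun x k => by
        obtain rfl | rfl | rfl := fin3 k <;>
          simp [h0, h1, h2, hT1, hT2, hT3, pt, IsometryEquiv.coe_mul, Function.comp_apply] <;>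
          ring⟩
  · exfalso; rw [h0, h1, h2] at hp; norm_num at hp

lemma exists_trans (hT0 : ∀ x : E3, T0 x = pt (1 - x 0) (x 1) (x 2))
    (hT1 : ∀ x : E3, T1 x = pt (x 1) (x 0) (x 2))
    (hT2 : ∀ x : E3, T2 x = pt (x 0) (x 2) (x 1))
    (hT3 : ∀ x : E3, T3 x = pt (x 0) (x 1) (-(x 2))) (t : Fin 3 → ℝ)
    (ht : ∀ k, ∃ m : ℤ, t k = m) :
    ∃ g ∈ Subgroup.closure {T0 * T3, T1, T2, T3 * T2 * T3},
      ∀ (x : E3) (k : Fin 3), g x k = x k + t k := by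
  have c1 : T0 * T3 ∈ Subgroup.closure {T0 * T3, T1, T2, T3 * T2 * T3} :=
    Subgroup.subset_closure (by simp)
  have c2 : T1 ∈ Subgroup.closure {T0 * T3, T1, T2, T3 * T2 * T3} :=
    Subgroup.subset_closure (by simp)
  have c3 : T2 ∈ Subgroup.closure {T0 * T3, T1, T2, T3 * T2 * T3} :=
    Subgroup.subset_closure (by simp)
  have c4 : T3 * T2 * T3 ∈ Subgroup.closure {T0 * T3, T1, T2, T3 * T2 * T3} :=
    Subgroup.subset_closure (by simp)
  choose m hm using ht
  set τ₀ : E3 ≃ᵢ E3 := (T0 * T3) * (T1 * (T2 * (T3 * T2 * T3)) * T1) with hτ₀def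
  set τ₁ : E3 ≃ᵢ E3 := T1 * τ₀ * T1 with hτ₁def
  set τ₂ : E3 ≃ᵢ E3 := (T1 * T2 * T1) * τ₀ * (T1 * T2 * T1) with hτ₂def
  have mem0 : τ₀ ∈ Subgroup.closure {T0 * T3, T1, T2, T3 * T2 * T3} :=
    mul_mem c1 (mul_mem (mul_mem c2 (mul_mem c3 c4)) c2)
  have mem1 : τ₁ ∈ Subgroup.closure {T0 * T3, T1, T2, T3 * T2 * T3} :=
    mul_mem (mul_mem c2 mem0) c2
  have mem2 : τ₂ ∈ Subgroup.closure {T0 * T3, T1, T2, T3 * T2 * T3} :=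
    mul_mem (mul_mem (mul_mem (mul_mem c2 c3) c2) mem0) (mul_mem (mul_mem c2 c3) c2)
  have h0 : ∀ (x : E3) (k : Fin 3), τ₀ x k = x k + ![(1:ℝ), 0, 0] k := by
    intro x k
    fin_cases k <;>
      simp [hτ₀def, hT0, hT1, hT2, hT3, pt, IsometryEquiv.coe_mul, Function.comp_apply] <;> ring
  have h1 : ∀ (x : E3) (k : Fin 3), τ₁ x k = x k + ![(0:ℝ), 1, 0] k := by
    intro x k
    fin_cases k <;>
      simp [hτ₁def, hτ₀def, hT0, hT1, hT2, hT3, pt, IsometryEquiv.coe_mul,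
        Function.comp_apply] <;> ring
  have h2 : ∀ (x : E3) (k : Fin 3), τ₂ x k = x k + ![(0:ℝ), 0, 1] k := by
    intro x k
    fin_cases k <;>
      simp [hτ₂def, hτ₀def, hT0, hT1, hT2, hT3, pt, IsometryEquiv.coe_mul,
        Function.comp_apply] <;> ring
  refine ⟨τ₀ ^ m 0 * (τ₁ ^ m 1 * τ₂ ^ m 2),
    mul_mem (zpow_mem mem0 _) (mul_mem (zpow_mem mem1 _) (zpow_mem mem2 _)), ?_⟩
  intro x k
  have e : (τ₀ ^ m 0 * (τ₁ ^ m 1 * τ₂ ^ m 2)) x k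
      = (τ₀ ^ m 0) ((τ₁ ^ m 1) ((τ₂ ^ m 2) x)) k := rfl
  rw [e, pow_action τ₀ _ h0, pow_action τ₁ _ h1, pow_action τ₂ _ h2]
  obtain rfl | rfl | rfl := fin3 k <;> simp [hm 0, hm 1, hm 2]

lemma exists_action (hT0 : ∀ x : E3, T0 x = pt (1 - x 0) (x 1) (x 2))
    (hT1 : ∀ x : E3, T1 x = pt (x 1) (x 0) (x 2))
    (hT2 : ∀ x : E3, T2 x = pt (x 0) (x 2) (x 1))
    (hT3 : ∀ x : E3, T3 x = pt (x 0) (x 1) (-(x 2)))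
    (σ : Equiv.Perm (Fin 3)) (s t : Fin 3 → ℝ)
    (hs : ∀ k, s k = 1 ∨ s k = -1) (hp : s 0 * s 1 * s 2 = 1) (ht : ∀ k, ∃ m : ℤ, t k = m) :
    ∃ g ∈ Subgroup.closure {T0 * T3, T1, T2, T3 * T2 * T3},
      ∀ (x : E3) (k : Fin 3), g x k = s k * x (σ k) + t k := by
  obtain ⟨gP, hPm, hgP⟩ := exists_perm T0 T1 T2 T3 hT1 hT2 σ
  obtain ⟨gS, hSm, hgS⟩ := exists_sign T0 T1 T2 T3 hT1 hT2 hT3 s hs hp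
  obtain ⟨gT, hTm, hgT⟩ := exists_trans T0 T1 T2 T3 hT0 hT1 hT2 hT3 t ht
  refine ⟨gT * (gS * gP), mul_mem hTm (mul_mem hSm hPm), ?_⟩
  intro x k
  have e : (gT * (gS * gP)) x k = gT (gS (gP x)) k := rfl
  rw [e, hgT, hgS, hgP]

end Gens

end Stmt8

namespace Stmt8

lemma lin0 {a b P : ℝ} : a * b + (P - a * b) = P := by ring

lemma lin2 {a b c P v : ℝ} (h : a * c = v) : a * (b + c) + (P - a * b) = P + v := by
  rw [← h]; ring

lemma lin1 {a b c t v : ℝ} (h : a * c = v) : a * (b + c) + t = (a * b + t) + v := by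
  rw [← h]; ring

end Stmt8

theorem H_simply_transitive_on_flags
    (T0 T1 T2 T3 : E3 ≃ᵢ E3)
    (hT0 : ∀ x : E3, T0 x = pt (1 - x 0) (x 1) (x 2))
    (hT1 : ∀ x : E3, T1 x = pt (x 1) (x 0) (x 2))
    (hT2 : ∀ x : E3, T2 x = pt (x 0) (x 2) (x 1))
    (hT3 : ∀ x : E3, T3 x = pt (x 0) (x 1) (-(x 2))) :
    (∀ g ∈ Subgroup.closure {T0 * T3, T1, T2, T3 * T2 * T3},
      ∀ d ∈ Flags, (g d.1, g d.2.1, g d.2.2) ∈ Flags) ∧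
    (∀ d ∈ Flags, ∀ d' ∈ Flags,
      ∃! g : E3 ≃ᵢ E3, g ∈ Subgroup.closure {T0 * T3, T1, T2, T3 * T2 * T3} ∧
        (g d.1, g d.2.1, g d.2.2) = d') := by
  constructor
  · intro g hg d hd
    exact (Stmt8.closure_good T0 T1 T2 T3 hT0 hT1 hT2 hT3 g hg).preserves hd
  · intro d hd d' hd'
    obtain ⟨i, j, ε, δ, hij, hε, hδ, hPint, hQ, hS⟩ := hd
    obtain ⟨i', j', ε', δ', hij', hε', hδ', hPint', hQ', hS'⟩ := hd'
    obtain ⟨σ, hσi, hσj⟩ := Stmt8.exists_perm_two i j i' j' hij hij'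
    have hss : ∀ k : Fin 3,
        (if k = i' then ε * ε' else if k = j' then δ * δ' else ε * ε' * (δ * δ')) = 1 ∨
        (if k = i' then ε * ε' else if k = j' then δ * δ' else ε * ε' * (δ * δ')) = -1 := by
      intro k
      rcases hε with rfl | rfl <;> rcases hδ with rfl | rfl <;> rcases hε' with rfl | rfl <;>
        rcases hδ' with rfl | rfl <;> split_ifs <;> norm_num
    have hsp : (if (0 : Fin 3) = i' then ε * ε' else if (0 : Fin 3) = j' then δ * δ'
          else ε * ε' * (δ * δ')) *
        (if (1 : Fin 3) = i' then ε * ε' else if (1 : Fin 3) = j' then δ * δ'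
          else ε * ε' * (δ * δ')) *
        (if (2 : Fin 3) = i' then ε * ε' else if (2 : Fin 3) = j' then δ * δ'
          else ε * ε' * (δ * δ')) = 1 := by
      rcases Stmt8.third_cases i' j' hij' with ⟨e, f⟩ | ⟨e, f⟩ | ⟨e, f⟩ | ⟨e, f⟩ | ⟨e, f⟩ |
        ⟨e, f⟩ <;> subst e <;> subst f <;>
        rcases hε with rfl | rfl <;> rcases hδ with rfl | rfl <;> rcases hε' with rfl | rfl <;>
        rcases hδ' with rfl | rfl <;> norm_num [Fin.ext_iff]
    have hti : ∀ k : Fin 3, ∃ m : ℤ,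
        d'.1 k - (if k = i' then ε * ε' else if k = j' then δ * δ' else ε * ε' * (δ * δ')) *
          d.1 (σ k) = m := by
      intro k
      obtain ⟨m', hm'⟩ := hPint' k
      obtain ⟨m, hm⟩ := hPint (σ k)
      rcases hss k with h | h
      · exact ⟨m' - m, by rw [hm', h, hm]; push_cast; ring⟩
      · exact ⟨m' + m, by rw [hm', h, hm]; push_cast; ring⟩
    obtain ⟨g, hgmem, hact⟩ := Stmt8.exists_action T0 T1 T2 T3 hT0 hT1 hT2 hT3 σ
      (fun k => if k = i' then ε * ε' else if k = j' then δ * δ' else ε * ε' * (δ * δ'))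
      (fun k => d'.1 k -
        (if k = i' then ε * ε' else if k = j' then δ * δ' else ε * ε' * (δ * δ')) * d.1 (σ k))
      hss hsp hti
    have hQc := Stmt8.coord_of_eq hQ
    have hSc := Stmt8.coord_of_eq hS
    have hQc' := Stmt8.coord_of_eq hQ'
    have hSc' := Stmt8.coord_of_eq hS'
    have key1 : ∀ k : Fin 3,
        (if k = i' then ε * ε' else if k = j' then δ * δ' else ε * ε' * (δ * δ')) *
          (if σ k = i then ε / 2 else 0) = (if k = i' then ε' / 2 else 0) := by
      intro k
      by_cases hk : k = i'
      · subst hk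
        rw [hσi]
        rcases hε with rfl | rfl <;> rcases hε' with rfl | rfl <;> norm_num
      · have hσk : σ k ≠ i := fun hc => hk (σ.injective (hc.trans hσi.symm))
        rw [if_neg hk, if_neg hσk, mul_zero, if_neg hk]
    have key2 : ∀ k : Fin 3,
        (if k = i' then ε * ε' else if k = j' then δ * δ' else ε * ε' * (δ * δ')) *
          (if σ k = j then δ / 2 else 0) = (if k = j' then δ' / 2 else 0) := by
      intro k
      by_cases hk : k = j'
      · subst hk
        rw [hσj, if_neg hij'.symm]
        rcases hδ with rfl | rfl <;> rcases hδ' with rfl | rfl <;> norm_num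
      · have hσk : σ k ≠ j := fun hc => hk (σ.injective (hc.trans hσj.symm))
        rw [if_neg hσk, mul_zero, if_neg hk]
    have hg1 : g d.1 = d'.1 := by
      ext k
      rw [hact]
      exact Stmt8.lin0
    have hg2 : g d.2.1 = d'.2.1 := by
      ext k
      rw [hact, hQc (σ k), hQc' k]
      exact Stmt8.lin2 (key1 k)
    have hg3 : g d.2.2 = d'.2.2 := by
      ext k
      rw [hact, hSc (σ k), hSc' k]
      have e2 : d'.2.1 k = g d.2.1 k := (congrArg (fun v : E3 => v k) hg2).symm
      rw [e2, hact d.2.1 k]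
      exact Stmt8.lin1 (key2 k)
    have hd2 : d ∈ Flags := ⟨i, j, ε, δ, hij, hε, hδ, hPint, hQ, hS⟩
    refine ⟨g, ⟨hgmem, Prod.ext_iff.mpr ⟨hg1, Prod.ext_iff.mpr ⟨hg2, hg3⟩⟩⟩, ?_⟩
    rintro y ⟨hym, hyeq⟩
    have hgeq : (g d.1, g d.2.1, g d.2.2) = d' :=
      Prod.ext_iff.mpr ⟨hg1, Prod.ext_iff.mpr ⟨hg2, hg3⟩⟩
    have e := hyeq.trans hgeq.symm
    have e1 : y d.1 = g d.1 := congrArg Prod.fst e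
    have e2 : y d.2.1 = g d.2.1 := congrArg (fun p => p.2.1) e
    have e3 : y d.2.2 = g d.2.2 := congrArg (fun p => p.2.2) e
    have hmem : g⁻¹ * y ∈ Subgroup.closure {T0 * T3, T1, T2, T3 * T2 * T3} :=
      mul_mem (inv_mem hgmem) hym
    have hfix1 : (g⁻¹ * y) d.1 = d.1 := by
      have eq : (g⁻¹ * y) d.1 = g⁻¹ (y d.1) := rfl
      rw [eq, e1]; simp
    have hfix2 : (g⁻¹ * y) d.2.1 = d.2.1 := by
      have eq : (g⁻¹ * y) d.2.1 = g⁻¹ (y d.2.1) := rfl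
      rw [eq, e2]; simp
    have hfix3 : (g⁻¹ * y) d.2.2 = d.2.2 := by
      have eq : (g⁻¹ * y) d.2.2 = g⁻¹ (y d.2.2) := rfl
      rw [eq, e3]; simp
    have hone : g⁻¹ * y = 1 :=
      (Stmt8.closure_good T0 T1 T2 T3 hT0 hT1 hT2 hT3 _ hmem).eq_one_of_fix hd2 hfix1 hfix2 hfix3
    exact (inv_mul_eq_one.mp hone).symm
end
end

section
/- Fix a real number a ≠ 0 and let G be the subgroup of isometries of ℝ³ generated by the four maps R₀(x,y,z) = (−x + a, y, −z + a), R₁(x,y,z) = (y, x, z), R₂(x,y,z) = (z, y, x), R̂₂(x,y,z) = (x, −y, z). Then the orbit of the origin under G (the vertex set of the regular complex K₁(1,2)) equals the face-centered cubic lattice Λ_{(a,a,0)} = {(am₁, am₂, am₃) : m₁, m₂, m₃ ∈ ℤ, m₁ + m₂ + m₃ even}. -/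
/- STATEMENT 9: For a ≠ 0, the orbit of the origin under the group generated by
R₀(x,y,z) = (−x + a, y, −z + a), R₁(x,y,z) = (y, x, z), R₂(x,y,z) = (z, y, x),
R̂₂(x,y,z) = (x, −y, z) (the vertex set of K₁(1,2)) is the face-centered cubic lattice
Λ_{(a,a,0)} = {(am₁, am₂, am₃) : mᵢ ∈ ℤ, m₁ + m₂ + m₃ even}. -/

noncomputable section

@[simp] lemma pt_zero (x y z : ℝ) : pt x y z 0 = x := rfl
@[simp] lemma pt_one (x y z : ℝ) : pt x y z 1 = y := rfl
@[simp] lemma pt_two (x y z : ℝ) : pt x y z 2 = z := rfl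

lemma E3ext {u v : E3} (h0 : u 0 = v 0) (h1 : u 1 = v 1) (h2 : u 2 = v 2) : u = v := by
  ext i; fin_cases i <;> assumption

def tr (v : E3) : E3 ≃ᵢ E3 where
  toEquiv := Equiv.addLeft v
  isometry_toFun := Isometry.of_dist_eq fun x y => dist_add_left v x y

@[simp] lemma tr_apply (v x : E3) : tr v x = v + x := rfl

lemma tr_mul (u v : E3) : tr u * tr v = tr (u + v) :=
  IsometryEquiv.ext fun x => (add_assoc u v x).symm

lemma tr_zero : tr (0 : E3) = 1 := IsometryEquiv.ext fun x => zero_add x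

lemma tr_pow (v : E3) (n : ℕ) : tr v ^ n = tr (n • v) := by
  induction n with
  | zero => simp [tr_zero]
  | succ n ih => rw [pow_succ, ih, tr_mul, succ_nsmul]

lemma tr_inv (v : E3) : (tr v)⁻¹ = tr (-v) :=
  inv_eq_of_mul_eq_one_right (by rw [tr_mul, add_neg_cancel, tr_zero])

lemma tr_zpow (v : E3) (n : ℤ) : tr v ^ n = tr (n • v) := by
  cases n with
  | ofNat n => rw [Int.ofNat_eq_coe, zpow_natCast, tr_pow, natCast_zsmul]
  | negSucc n => rw [zpow_negSucc, tr_pow, tr_inv, negSucc_zsmul]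

/-- The lattice membership predicate. -/
def inL (a : ℝ) (y : E3) : Prop :=
  ∃ m1 m2 m3 : ℤ, y 0 = a * m1 ∧ y 1 = a * m2 ∧ y 2 = a * m3 ∧ Even (m1 + m2 + m3)

theorem vertex_set_K1_12
    (a : ℝ) (ha : a ≠ 0)
    (R0 R1 R2 R2' : E3 ≃ᵢ E3)
    (hR0 : ∀ x : E3, R0 x = pt (-(x 0) + a) (x 1) (-(x 2) + a))
    (hR1 : ∀ x : E3, R1 x = pt (x 1) (x 0) (x 2))
    (hR2 : ∀ x : E3, R2 x = pt (x 2) (x 1) (x 0))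
    (hR2' : ∀ x : E3, R2' x = pt (x 0) (-(x 1)) (x 2)) :
    {y : E3 | ∃ g ∈ Subgroup.closure {R0, R1, R2, R2'}, g 0 = y} =
      {y : E3 | ∃ m1 m2 m3 : ℤ,
        y 0 = a * m1 ∧ y 1 = a * m2 ∧ y 2 = a * m3 ∧ Even (m1 + m2 + m3)} := by
  -- preservation lemmas for the four generators
  have p0 : ∀ y : E3, inL a y → inL a (R0 y) := by
    rintro y ⟨m1, m2, m3, h1, h2, h3, he⟩
    refine ⟨1 - m1, m2, 1 - m3, ?_, ?_, ?_, ?_⟩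
    · rw [hR0]; simp only [pt_zero]; rw [h1]; push_cast; ring
    · rw [hR0]; simp [h2]
    · rw [hR0]; simp only [pt_two]; rw [h3]; push_cast; ring
    · simp only [Int.even_iff] at he ⊢; omega
  have p1 : ∀ y : E3, inL a y → inL a (R1 y) := by
    rintro y ⟨m1, m2, m3, h1, h2, h3, he⟩
    refine ⟨m2, m1, m3, ?_, ?_, ?_, ?_⟩
    · rw [hR1]; simp [h2]
    · rw [hR1]; simp [h1]
    · rw [hR1]; simp [h3]
    · simp only [Int.even_iff] at he ⊢; omega
  have p2 : ∀ y : E3, inL a y → inL a (R2 y) := by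
    rintro y ⟨m1, m2, m3, h1, h2, h3, he⟩
    refine ⟨m3, m2, m1, ?_, ?_, ?_, ?_⟩
    · rw [hR2]; simp [h3]
    · rw [hR2]; simp [h2]
    · rw [hR2]; simp [h1]
    · simp only [Int.even_iff] at he ⊢; omega
  have p2' : ∀ y : E3, inL a y → inL a (R2' y) := by
    rintro y ⟨m1, m2, m3, h1, h2, h3, he⟩
    refine ⟨m1, -m2, m3, ?_, ?_, ?_, ?_⟩
    · rw [hR2']; simp [h1]
    · rw [hR2']; simp only [pt_one]; rw [h2]; push_cast; ring
    · rw [hR2']; simp [h3]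
    · simp only [Int.even_iff] at he ⊢; omega
  -- each generator is an involution
  have i0 : R0⁻¹ = R0 := inv_eq_of_mul_eq_one_right <| IsometryEquiv.ext fun x => by
    rw [IsometryEquiv.mul_apply, hR0, hR0]
    exact E3ext (by simp) (by simp) (by simp)
  have i1 : R1⁻¹ = R1 := inv_eq_of_mul_eq_one_right <| IsometryEquiv.ext fun x => by
    rw [IsometryEquiv.mul_apply, hR1, hR1]
    exact E3ext (by simp) (by simp) (by simp)
  have i2 : R2⁻¹ = R2 := inv_eq_of_mul_eq_one_right <| IsometryEquiv.ext fun x => by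
    rw [IsometryEquiv.mul_apply, hR2, hR2]
    exact E3ext (by simp) (by simp) (by simp)
  have i2' : R2'⁻¹ = R2' := inv_eq_of_mul_eq_one_right <| IsometryEquiv.ext fun x => by
    rw [IsometryEquiv.mul_apply, hR2', hR2']
    exact E3ext (by simp) (by simp) (by simp)
  -- forward: closure preserves the lattice
  have key : ∀ g ∈ Subgroup.closure {R0, R1, R2, R2'},
      (∀ y : E3, inL a y → inL a (g y)) ∧ (∀ y : E3, inL a y → inL a (g⁻¹ y)) := by
    intro g hg
    induction hg using Subgroup.closure_induction with
    | mem x hx =>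
      rcases hx with h | h | h | h <;> subst h
      · exact ⟨p0, by rw [i0]; exact p0⟩
      · exact ⟨p1, by rw [i1]; exact p1⟩
      · exact ⟨p2, by rw [i2]; exact p2⟩
      · exact ⟨p2', by rw [i2']; exact p2'⟩
    | one => exact ⟨fun y hy => hy, fun y hy => by simpa using hy⟩
    | mul x y hx hy ihx ihy =>
      refine ⟨fun z hz => ?_, fun z hz => ?_⟩
      · rw [IsometryEquiv.mul_apply]; exact ihx.1 _ (ihy.1 _ hz)
      · rw [mul_inv_rev, IsometryEquiv.mul_apply]; exact ihy.2 _ (ihx.2 _ hz)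
    | inv x hx ihx => exact ⟨ihx.2, by rw [inv_inv]; exact ihx.1⟩
  ext y
  simp only [Set.mem_setOf_eq]
  constructor
  · rintro ⟨g, hg, rfl⟩
    exact (key g hg).1 0 ⟨0, 0, 0, by simp, by simp, by simp, by simp⟩
  · rintro ⟨m1, m2, m3, h1, h2, h3, k, hk⟩
    -- membership of generators
    have m0 : R0 ∈ Subgroup.closure {R0, R1, R2, R2'} := Subgroup.subset_closure (by simp)
    have mm1 : R1 ∈ Subgroup.closure {R0, R1, R2, R2'} := Subgroup.subset_closure (by simp)
    have mm2 : R2 ∈ Subgroup.closure {R0, R1, R2, R2'} := Subgroup.subset_closure (by simp)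
    have mm2' : R2' ∈ Subgroup.closure {R0, R1, R2, R2'} := Subgroup.subset_closure (by simp)
    -- translations as words in generators
    have hT1 : R0 * (R1 * R2' * R1) * (R2 * (R1 * R2' * R1) * R2) = tr (pt a 0 a) := by
      refine IsometryEquiv.ext fun x => ?_
      simp only [IsometryEquiv.mul_apply, tr_apply]
      rw [hR2 x, hR1, hR2', hR1, hR2, hR1, hR2', hR1, hR0]
      refine E3ext ?_ ?_ ?_ <;> simp [PiLp.add_apply] <;> ring
    have mT1 : tr (pt a 0 a) ∈ Subgroup.closure {R0, R1, R2, R2'} :=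
      hT1 ▸ mul_mem (mul_mem m0 (mul_mem (mul_mem mm1 mm2') mm1))
        (mul_mem (mul_mem mm2 (mul_mem (mul_mem mm1 mm2') mm1)) mm2)
    have hT2 : R1 * tr (pt a 0 a) * R1 = tr (pt 0 a a) := by
      refine IsometryEquiv.ext fun x => ?_
      simp only [IsometryEquiv.mul_apply, tr_apply]
      rw [hR1 x, hR1]
      refine E3ext ?_ ?_ ?_ <;> simp [PiLp.add_apply]
    have mT2 : tr (pt 0 a a) ∈ Subgroup.closure {R0, R1, R2, R2'} :=
      hT2 ▸ mul_mem (mul_mem mm1 mT1) mm1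
    have hT3 : R2 * tr (pt 0 a a) * R2 = tr (pt a a 0) := by
      refine IsometryEquiv.ext fun x => ?_
      simp only [IsometryEquiv.mul_apply, tr_apply]
      rw [hR2 x, hR2]
      refine E3ext ?_ ?_ ?_ <;> simp [PiLp.add_apply]
    have mT3 : tr (pt a a 0) ∈ Subgroup.closure {R0, R1, R2, R2'} :=
      hT3 ▸ mul_mem (mul_mem mm2 mT2) mm2
    refine ⟨tr (pt a a 0) ^ (k - m3) * tr (pt a 0 a) ^ (k - m2) * tr (pt 0 a a) ^ (k - m1),
      mul_mem (mul_mem (zpow_mem mT3 _) (zpow_mem mT1 _)) (zpow_mem mT2 _), ?_⟩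
    have hkR : (m1 : ℝ) + m2 + m3 = k + k := by exact_mod_cast hk
    simp only [IsometryEquiv.mul_apply, tr_zpow, tr_apply]
    refine E3ext ?_ ?_ ?_ <;>
      simp [PiLp.add_apply, PiLp.smul_apply, h1, h2, h3, zsmul_eq_mul] <;>
      push_cast <;> linear_combination (-a) * hkR
end
end
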